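/- arXiv:1004.1326 — 8 statements merged into one kernel-verified Lean document; each statement's English description precedes it below -/
import Mathlib

section
/- Let ξ be irrational with convergents p_k/q_k, x = (ξ, 1)ᵀ, and let γ ∈ SL(2,ℤ) satisfy |γ| ≤ q_{k+1}/2 in the sup norm on entries, for some k ≥ 1. Then |γ x| ≥ 1/(2 q_k), where |·| on ℝ² is the sup norm. -/
open Matrix MeasureTheory

/-- Denominator `q k` of the `k`-th convergent of the continued fraction of `ξ`. -/
noncomputable def qden (ξ : ℝ) (k : ℕ) : ℝ := (GenContFract.of ξ).dens k

/-- Numerator `p k` of the `k`-th convergent of the continued fraction of `ξ`. -/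
noncomputable def pnum (ξ : ℝ) (k : ℕ) : ℝ := (GenContFract.of ξ).nums k

/-- Action of an integer matrix on `ℝ²` by left multiplication. -/
noncomputable def act (g : Matrix (Fin 2) (Fin 2) ℤ) (x : Fin 2 → ℝ) : Fin 2 → ℝ :=
  (g.map (Int.cast : ℤ → ℝ)).mulVec x

/-- Sup norm of an integer `2 × 2` matrix. -/
noncomputable def mnorm (g : Matrix (Fin 2) (Fin 2) ℤ) : ℝ :=
  max (max |(g 0 0 : ℝ)| |(g 0 1 : ℝ)|) (max |(g 1 0 : ℝ)| |(g 1 1 : ℝ)|)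

/-- Sup norm on `ℝ²`. -/
noncomputable def vnorm (v : Fin 2 → ℝ) : ℝ := max |v 0| |v 1|

/-- The set of exponents `w` such that `|v α + u| ≤ |v| ^ (-w)` has infinitely many
integer solutions `(v, u)`; its supremum is the irrationality measure `ω(α)`. -/
def omegaSet (α : ℝ) : Set ℝ :=
  {w : ℝ | {p : ℤ × ℤ | |(p.1 : ℝ) * α + (p.2 : ℝ)| ≤ |(p.1 : ℝ)| ^ (-w)}.Infinite}

/-- The set of exponents `μ` such that `|γ x - y| ≤ |γ| ^ (-μ)` for infinitely many
`γ ∈ SL(2, ℤ)`; its supremum is `μ(x, y)`. -/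
def muSet (x y : Fin 2 → ℝ) : Set ℝ :=
  {μ : ℝ | {γ : Matrix (Fin 2) (Fin 2) ℤ |
    γ.det = 1 ∧ vnorm (act γ x - y) ≤ mnorm γ ^ (-μ)}.Infinite}

/-- The set of exponents `μ` such that for all sufficiently large `T` there is
`γ ∈ SL(2, ℤ)` with `|γ| ≤ T` and `|γ x - y| ≤ T ^ (-μ)`; its supremum is `μ̂(x, y)`. -/
def muHatSet (x y : Fin 2 → ℝ) : Set ℝ :=
  {μ : ℝ | ∃ T₀ : ℝ, ∀ T : ℝ, T₀ ≤ T → ∃ γ : Matrix (Fin 2) (Fin 2) ℤ,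
    γ.det = 1 ∧ mnorm γ ≤ T ∧ vnorm (act γ x - y) ≤ T ^ (-μ)}

lemma not_term (ξ : ℝ) (hξ : Irrational ξ) (n : ℕ) :
    ¬(GenContFract.of ξ).TerminatedAt n := by
  intro h
  have : (GenContFract.of ξ).Terminates := ⟨n, h⟩
  obtain ⟨q, hq⟩ := (GenContFract.terminates_iff_rat ξ).mp this
  exact hξ ⟨q, hq.symm⟩

lemma contsAux_int (ξ : ℝ) (hξ : Irrational ξ) (n : ℕ) :
    (∃ P : ℤ, ((GenContFract.of ξ).contsAux n).a = P) ∧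
    (∃ Q : ℤ, ((GenContFract.of ξ).contsAux n).b = Q) := by
  induction n using Nat.twoStepInduction with
  | zero => exact ⟨⟨1, by simp [GenContFract.zeroth_contAux_eq_one_zero]⟩,
      ⟨0, by simp [GenContFract.zeroth_contAux_eq_one_zero]⟩⟩
  | one => exact ⟨⟨⌊ξ⌋, by simp [GenContFract.first_contAux_eq_h_one,
      GenContFract.of_h_eq_floor]⟩,
      ⟨1, by simp [GenContFract.first_contAux_eq_h_one]⟩⟩
  | more n ih ih2 =>
    obtain ⟨gp, hgp⟩ : ∃ gp, (GenContFract.of ξ).s.get? n = some gp :=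
      Option.ne_none_iff_exists'.1 (not_term ξ hξ n)
    obtain ⟨ha1, z, hz⟩ := GenContFract.of_partNum_eq_one_and_exists_int_partDen_eq hgp
    obtain ⟨⟨P0, hP0⟩, ⟨Q0, hQ0⟩⟩ := ih
    obtain ⟨⟨P1, hP1⟩, ⟨Q1, hQ1⟩⟩ := ih2
    rw [GenContFract.contsAux_recurrence hgp rfl rfl]
    exact ⟨⟨z * P1 + P0, by push_cast [ha1, hz, hP0, hP1]; ring⟩,
      ⟨z * Q1 + Q0, by push_cast [ha1, hz, hQ0, hQ1]; ring⟩⟩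

lemma nums_int (ξ : ℝ) (hξ : Irrational ξ) (n : ℕ) :
    ∃ P : ℤ, (GenContFract.of ξ).nums n = P := by
  rw [GenContFract.num_eq_conts_a, GenContFract.nth_cont_eq_succ_nth_contAux]
  exact (contsAux_int ξ hξ (n + 1)).1

lemma dens_int (ξ : ℝ) (hξ : Irrational ξ) (n : ℕ) :
    ∃ Q : ℤ, (GenContFract.of ξ).dens n = Q := by
  rw [GenContFract.den_eq_conts_b, GenContFract.nth_cont_eq_succ_nth_contAux]
  exact (contsAux_int ξ hξ (n + 1)).2

lemma dens_ge_one (ξ : ℝ) (hξ : Irrational ξ) (n : ℕ) :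
    (1 : ℝ) ≤ (GenContFract.of ξ).dens n := by
  have := GenContFract.succ_nth_fib_le_of_nth_den (v := ξ) (n := n)
    (Or.inr (not_term ξ hξ (n - 1)))
  have h1 : (1 : ℕ) ≤ Nat.fib (n + 1) := Nat.fib_pos.mpr n.succ_pos
  calc (1:ℝ) ≤ (Nat.fib (n+1) : ℝ) := by exact_mod_cast h1
    _ ≤ _ := this

/-- if `γ ∈ SL(2, ℤ)` has norm `|γ| ≤ q_{k+1}/2`, then `|γ x| ≥ 1/(2 q_k)`
for `x = (ξ, 1)ᵀ`. -/
theorem stmt3 (ξ : ℝ) (hξ : Irrational ξ) (k : ℕ) (hk : 1 ≤ k)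
    (γ : Matrix (Fin 2) (Fin 2) ℤ) (hγ : γ.det = 1) (hn : mnorm γ ≤ qden ξ (k + 1) / 2) :
    1 / (2 * qden ξ k) ≤ vnorm (act γ ![ξ, 1]) := by
  obtain ⟨P, hP⟩ := nums_int ξ hξ k
  obtain ⟨Q, hQ⟩ := dens_int ξ hξ k
  have hQ1 : (1 : ℝ) ≤ (Q : ℝ) := hQ ▸ dens_ge_one ξ hξ k
  have hQpos : (0 : ℝ) < (Q : ℝ) := lt_of_lt_of_le one_pos hQ1
  set B : ℝ := qden ξ (k + 1) with hB
  have hB1 : (1 : ℝ) ≤ B := dens_ge_one ξ hξ (k + 1)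
  have hBpos : (0 : ℝ) < B := lt_of_lt_of_le one_pos hB1
  -- approximation bound
  have happrox : |ξ * Q - P| ≤ 1 / B := by
    have h0 := GenContFract.abs_sub_convs_le (v := ξ) (n := k) (not_term ξ hξ k)
    rw [GenContFract.conv_eq_num_div_den, hP, hQ] at h0
    have : |ξ - P / Q| ≤ 1 / (Q * B) := by rwa [hB]
    have h2 : |ξ * Q - P| = |ξ - P / Q| * Q := by
      have he : ξ * Q - P = (ξ - P / Q) * Q := by field_simp
      rw [he, abs_mul, abs_of_pos hQpos]
    rw [h2]
    calc |ξ - P / Q| * Q ≤ (1 / (Q * B)) * Q := by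
          exact mul_le_mul_of_nonneg_right this hQpos.le
      _ = 1 / B := by field_simp
  -- by contradiction
  by_contra hcon
  push_neg at hcon
  rw [qden, hQ] at hcon
  set a := γ 0 0; set b := γ 0 1; set c := γ 1 0; set d := γ 1 1
  have hact0 : act γ ![ξ, 1] 0 = (a : ℝ) * ξ + (b : ℝ) := by
    simp [act, Matrix.mulVec, dotProduct, Fin.sum_univ_two]; rfl
  have hact1 : act γ ![ξ, 1] 1 = (c : ℝ) * ξ + (d : ℝ) := by
    simp [act, Matrix.mulVec, dotProduct, Fin.sum_univ_two]; rfl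
  have h1 : |(a : ℝ) * ξ + b| < 1 / (2 * Q) := by
    rw [← hact0]; exact lt_of_le_of_lt (le_max_left _ _) hcon
  have h2 : |(c : ℝ) * ξ + d| < 1 / (2 * Q) := by
    rw [← hact1]; exact lt_of_le_of_lt (le_max_right _ _) hcon
  have hna : |(a : ℝ)| ≤ B / 2 :=
    le_trans (le_trans (le_max_left _ _) (le_max_left _ _)) hn
  have hnb : |(b : ℝ)| ≤ B / 2 :=
    le_trans (le_trans (le_max_right _ _) (le_max_left _ _)) hn
  have hnc : |(c : ℝ)| ≤ B / 2 :=
    le_trans (le_trans (le_max_left _ _) (le_max_right _ _)) hn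
  have hnd : |(d : ℝ)| ≤ B / 2 :=
    le_trans (le_trans (le_max_right _ _) (le_max_right _ _)) hn
  -- key: a*P+b*Q = 0 and c*P+d*Q = 0
  have key : ∀ u v : ℤ, |(u : ℝ)| ≤ B / 2 → |(u : ℝ) * ξ + v| < 1 / (2 * Q) →
      u * P + v * Q = 0 := by
    intro u v hu huv
    have heq : ((u * P + v * Q : ℤ) : ℝ) = (Q : ℝ) * ((u : ℝ) * ξ + v) - u * (ξ * Q - P) := by
      push_cast; ring
    have hlt : |((u * P + v * Q : ℤ) : ℝ)| < 1 := by
      rw [heq]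
      calc |(Q : ℝ) * ((u : ℝ) * ξ + v) - u * (ξ * Q - P)|
          ≤ |(Q : ℝ)| * |(u : ℝ) * ξ + v| + |(u : ℝ)| * |ξ * Q - P| := by
            refine le_trans (abs_sub _ _) ?_
            rw [abs_mul, abs_mul]
        _ < |(Q : ℝ)| * (1 / (2 * Q)) + (B / 2) * (1 / B) := by
            refine add_lt_add_of_lt_of_le ?_ ?_
            · exact mul_lt_mul_of_pos_left huv (by rwa [abs_of_pos hQpos])
            · refine mul_le_mul hu happrox (abs_nonneg _) (by linarith)
        _ = 1 := by
            rw [abs_of_pos hQpos]; field_simp; ring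
    rw [← Int.cast_abs] at hlt
    exact Int.abs_lt_one_iff.mp (by exact_mod_cast hlt)
  have e1 : a * P + b * Q = 0 := key a b hna h1
  have e2 : c * P + d * Q = 0 := key c d hnc h2
  have hdet : a * d - b * c = 1 := by
    rw [Matrix.det_fin_two] at hγ; exact hγ
  have hQ0 : Q = 0 := by
    have h3 : (a * d - b * c) * Q = a * (c * P + d * Q) - c * (a * P + b * Q) := by ring
    rw [hdet, e1, e2] at h3
    simpa using h3
  rw [hQ0] at hQ1; norm_num at hQ1
end

section
/- Let x ∈ ℝ² have irrational slope x₁/x₂. Then there exist infinitely many matrices γ ∈ SL(2,ℤ) such that |γx| ≤ |x| / |γ|. -/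
open Matrix MeasureTheory

/- Auxiliary lemmas -/

-- unbounded denominators
lemma dens_unbounded {ξ : ℝ} (hξ : Irrational ξ) (B : ℕ) :
    ∃ q : ℚ, |ξ - (q:ℝ)| < 1 / (q.den : ℝ) ^ 2 ∧ B < q.den := by
  by_contra h
  push_neg at h
  have hfin : {q : ℚ | |ξ - (q:ℝ)| < 1 / (q.den : ℝ) ^ 2}.Finite := by
    set A : ℤ := ⌈(|ξ| + 1) * B⌉
    apply Set.Finite.of_finite_image (f := fun q : ℚ => (q.num, q.den))
    · apply Set.Finite.subset ((Set.finite_Icc (-A) A).prod (Set.finite_Icc 0 B))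
      rintro ⟨n, d⟩ ⟨q, hq, hqe⟩
      simp only at hqe
      obtain ⟨rfl, rfl⟩ : q.num = n ∧ q.den = d := Prod.mk_inj.mp hqe
      have hden : q.den ≤ B := h q hq
      have hd1 : (1:ℝ) ≤ (q.den : ℝ) := by exact_mod_cast q.pos
      have hq1 : |ξ - (q:ℝ)| < 1 := lt_of_lt_of_le hq (by
        rw [div_le_one (by positivity)]; nlinarith)
      have hqabs : |(q:ℝ)| ≤ |ξ| + 1 := by
        have := abs_sub_abs_le_abs_sub (q:ℝ) ξ
        rw [abs_sub_comm] at hq1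
        linarith
      have hnum : |(q.num : ℝ)| ≤ (|ξ| + 1) * B := by
        have hnd : (q.num : ℝ) = (q:ℝ) * (q.den : ℝ) := by
          rw [Rat.cast_def]
          field_simp
        rw [hnd, abs_mul, abs_of_nonneg (by positivity : (0:ℝ) ≤ (q.den:ℝ))]
        have hdB : (q.den : ℝ) ≤ B := by exact_mod_cast hden
        nlinarith [abs_nonneg (q:ℝ)]
      constructor
      · simp only [Set.mem_Icc]
        have hA : ((|ξ| + 1) * B : ℝ) ≤ (A : ℝ) := Int.le_ceil _
        have : |(q.num : ℝ)| ≤ (A : ℝ) := hnum.trans hA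
        rw [← Int.cast_abs] at this
        have : |q.num| ≤ A := by exact_mod_cast this
        exact abs_le.mp this
      · simp only [Set.mem_Icc]
        exact ⟨Nat.zero_le _, hden⟩
    · intro a _ b _ hab
      exact Rat.ext (congrArg Prod.fst hab) (congrArg Prod.snd hab)
  exact (Real.infinite_rat_abs_sub_lt_one_div_den_sq_of_irrational hξ) hfin


lemma second_row {k j : ℤ} (hk : 0 < k) (hcop : IsCoprime j k) {e : ℝ}
    (he : |e| * (k:ℝ) ≤ 1) :
    ∃ p q : ℤ, k * p - j * q = 1 ∧ |q| ≤ k ∧ 0 ≤ (q:ℝ) * e ∧ (q:ℝ) * e ≤ 1 := by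
  obtain ⟨a, b, hab⟩ := hcop
  -- a * j + b * k = 1
  set q1 : ℤ := (-a) % k with hq1
  set m : ℤ := (-a) / k with hm
  have hdm : -a = k * m + q1 := (Int.mul_ediv_add_emod (-a) k).symm
  have hq1nn : 0 ≤ q1 := Int.emod_nonneg _ hk.ne'
  have hq1lt : q1 < k := Int.emod_lt_of_pos _ hk
  set p1 : ℤ := b - m * j with hp1
  have hdet : k * p1 - j * q1 = 1 := by
    have : q1 = -a - k * m := by linarith
    rw [hp1, this]; linear_combination hab
  have hkR : (0:ℝ) < (k:ℝ) := by exact_mod_cast hk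
  rcases le_or_gt 0 e with hepos | heneg
  · refine ⟨p1, q1, hdet, ?_, ?_, ?_⟩
    · rw [abs_of_nonneg hq1nn]; exact hq1lt.le
    · have : (0:ℝ) ≤ (q1:ℝ) := by exact_mod_cast hq1nn
      positivity
    · have h1 : (q1:ℝ) ≤ (k:ℝ) := by exact_mod_cast hq1lt.le
      have h2 : (q1:ℝ) * e ≤ (k:ℝ) * e := by
        apply mul_le_mul_of_nonneg_right h1 hepos
      have h3 : (k:ℝ) * e ≤ 1 := by rw [abs_of_nonneg hepos] at he; linarith
      linarith
  · refine ⟨p1 - j, q1 - k, by linear_combination hdet, ?_, ?_, ?_⟩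
    · rw [abs_of_nonpos (by linarith)]; omega
    · have h1 : ((q1 - k : ℤ) : ℝ) ≤ 0 := by exact_mod_cast (by omega : q1 - k ≤ 0)
      nlinarith
    · have h1 : (-(k:ℝ)) ≤ ((q1 - k : ℤ) : ℝ) := by exact_mod_cast (by omega : -k ≤ q1 - k)
      have h2 : ((q1 - k : ℤ) : ℝ) * e ≤ (-(k:ℝ)) * e := by
        nlinarith
      have h3 : (-(k:ℝ)) * e = |e| * k := by rw [abs_of_neg heneg]; ring
      linarith

lemma key {ξ : ℝ} (hξ : Irrational ξ) (hlt : |ξ| < 1) (T : ℝ) :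
    ∃ k j p q : ℤ, 0 < k ∧ T < (k:ℝ) ∧ k * p - j * q = 1 ∧
      |(j:ℝ)| ≤ (k:ℝ) ∧ |(q:ℝ)| ≤ (k:ℝ) ∧ |(p:ℝ)| ≤ (k:ℝ) ∧
      |(k:ℝ) * ξ - (j:ℝ)| * (k:ℝ) ≤ 1 ∧ |(q:ℝ) * ξ - (p:ℝ)| * (k:ℝ) ≤ 1 := by
  set δ : ℝ := 1 - |ξ| with hδ
  have hδpos : 0 < δ := by simp [hδ]; linarith
  set B : ℕ := max ⌈T⌉₊ ⌈1/δ⌉₊ with hB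
  obtain ⟨r, hr, hden⟩ := dens_unbounded hξ B
  set k : ℤ := (r.den : ℤ) with hk
  set j : ℤ := r.num with hj
  have hkpos : 0 < k := Int.natCast_pos.mpr r.pos
  have hkR : (0:ℝ) < (k:ℝ) := by exact_mod_cast hkpos
  have hk1 : (1:ℝ) ≤ (k:ℝ) := by exact_mod_cast hkpos
  have hTk : T < (k:ℝ) := by
    have h1 : T ≤ (⌈T⌉₊ : ℝ) := Nat.le_ceil T
    have h2 : (⌈T⌉₊ : ℝ) ≤ (B : ℝ) := by exact_mod_cast le_max_left _ _
    have h3 : (B : ℝ) < (k : ℝ) := by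
      rw [hk]; exact_mod_cast hden
    linarith
  have hδk : 1 / δ ≤ (k:ℝ) := by
    have h1 : (1/δ) ≤ (⌈1/δ⌉₊ : ℝ) := Nat.le_ceil _
    have h2 : (⌈1/δ⌉₊ : ℝ) ≤ (B : ℝ) := by exact_mod_cast le_max_right _ _
    have h3 : (B : ℝ) < (k : ℝ) := by rw [hk]; exact_mod_cast hden
    linarith
  -- 1/k ≤ k * δ
  have hkey : 1 / (k:ℝ) ≤ (k:ℝ) * δ := by
    rw [div_le_iff₀ hkR]
    have : 1 ≤ (k:ℝ) * δ := by
      rw [div_le_iff₀ hδpos] at hδk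
      linarith
    nlinarith
  have hcop : IsCoprime j k := by
    rw [Int.isCoprime_iff_gcd_eq_one]
    have := r.reduced
    unfold Int.gcd
    simpa [hj, hk] using this
  set e : ℝ := (k:ℝ) * ξ - (j:ℝ) with he
  have hje : (j:ℝ) = (r:ℝ) * (k:ℝ) := by
    rw [hj, hk, Rat.cast_def]
    push_cast
    field_simp
  have heval : e = (k:ℝ) * (ξ - (r:ℝ)) := by rw [he, hje]; ring
  have heabs : |e| * (k:ℝ) ≤ 1 := by
    rw [heval, abs_mul, abs_of_pos hkR]
    have h0 : |ξ - (r:ℝ)| < 1 / (k:ℝ)^2 := by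
      rw [hk]; push_cast; exact hr
    have h4 : (k:ℝ)^2 * |ξ - (r:ℝ)| < 1 := by
      have hk2 : (0:ℝ) < (k:ℝ)^2 := by positivity
      calc (k:ℝ)^2 * |ξ - (r:ℝ)| < (k:ℝ)^2 * (1/(k:ℝ)^2) :=
            mul_lt_mul_of_pos_left h0 hk2
      _ = 1 := by field_simp
    nlinarith [abs_nonneg (ξ - (r:ℝ))]
  obtain ⟨p, q, hdet, hqle, hqe0, hqe1⟩ := second_row hkpos hcop heabs
  have hkξ : |(k:ℝ) * ξ - (j:ℝ)| * (k:ℝ) ≤ 1 := heabs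
  have heabs' : |e| ≤ 1 / (k:ℝ) := by
    rw [le_div_iff₀ hkR]; exact heabs
  -- |q ξ - p| * k = |q e - 1| ≤ 1
  have hcast : (k:ℝ) * (p:ℝ) - (j:ℝ) * (q:ℝ) = 1 := by exact_mod_cast hdet
  have hqp : (k:ℝ) * ((q:ℝ) * ξ - (p:ℝ)) = (q:ℝ) * e - 1 := by
    rw [he]; linarith [hcast]
  have hqξ : |(q:ℝ) * ξ - (p:ℝ)| * (k:ℝ) ≤ 1 := by
    have h1 : |(k:ℝ) * ((q:ℝ) * ξ - (p:ℝ))| = |(q:ℝ) * e - 1| := by rw [hqp]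
    rw [abs_mul, abs_of_pos hkR] at h1
    have h2 : |(q:ℝ) * e - 1| ≤ 1 := by rw [abs_le]; constructor <;> linarith
    calc |(q:ℝ) * ξ - (p:ℝ)| * (k:ℝ) = (k:ℝ) * |(q:ℝ) * ξ - (p:ℝ)| := by ring
    _ = |(q:ℝ) * e - 1| := h1
    _ ≤ 1 := h2
  have hqR : |(q:ℝ)| ≤ (k:ℝ) := by exact_mod_cast hqle
  have hjR : |(j:ℝ)| ≤ (k:ℝ) := by
    have h1 : |(j:ℝ)| ≤ |(k:ℝ) * ξ| + |e| := by
      have := abs_sub_abs_le_abs_sub ((k:ℝ) * ξ) (j:ℝ)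
      have h2 : |(k:ℝ)*ξ - (j:ℝ)| = |e| := by rw [he]
      have := abs_sub ((k:ℝ)*ξ) (j:ℝ)
      calc |(j:ℝ)| = |(k:ℝ)*ξ - e| := by rw [he]; ring_nf
      _ ≤ |(k:ℝ)*ξ| + |e| := abs_sub _ _
    have h2 : |(k:ℝ)*ξ| = (k:ℝ) * |ξ| := by rw [abs_mul, abs_of_pos hkR]
    have h3 : (k:ℝ) * |ξ| + 1/(k:ℝ) ≤ (k:ℝ) := by
      have : (k:ℝ) * |ξ| = (k:ℝ) - (k:ℝ) * δ := by rw [hδ]; ring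
      linarith
    linarith [heabs']
  have hpR : |(p:ℝ)| ≤ (k:ℝ) := by
    have hqξ' : |(q:ℝ) * ξ - (p:ℝ)| ≤ 1/(k:ℝ) := by rw [le_div_iff₀ hkR]; exact hqξ
    have h1 : |(p:ℝ)| ≤ |(q:ℝ) * ξ| + |(q:ℝ)*ξ - (p:ℝ)| := by
      calc |(p:ℝ)| = |(q:ℝ)*ξ - ((q:ℝ)*ξ - (p:ℝ))| := by ring_nf
      _ ≤ |(q:ℝ)*ξ| + |(q:ℝ)*ξ - (p:ℝ)| := abs_sub _ _
    have h2 : |(q:ℝ)*ξ| ≤ (k:ℝ) * |ξ| := by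
      rw [abs_mul]
      exact mul_le_mul_of_nonneg_right hqR (abs_nonneg _)
    have h3 : (k:ℝ) * |ξ| + 1/(k:ℝ) ≤ (k:ℝ) := by
      have : (k:ℝ) * |ξ| = (k:ℝ) - (k:ℝ) * δ := by rw [hδ]; ring
      linarith
    linarith
  exact ⟨k, j, p, q, hkpos, hTk, hdet, hjR, hqR, hpR, hkξ, hqξ⟩

lemma infinite_of_unbounded (S : Set (Matrix (Fin 2) (Fin 2) ℤ))
    (h : ∀ T : ℝ, ∃ γ ∈ S, T < mnorm γ) : S.Infinite := by
  by_contra hfin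
  rw [Set.not_infinite] at hfin
  have himg : (mnorm '' S).Finite := hfin.image _
  obtain ⟨C, hC⟩ := himg.bddAbove
  obtain ⟨γ, hγS, hγ⟩ := h C
  exact absurd (hC (Set.mem_image_of_mem _ hγS)) (not_le.mpr hγ)

lemma aux (x : Fin 2 → ℝ) (hx2 : x 1 ≠ 0) (hξ : Irrational (x 0 / x 1))
    (hlt : |x 0 / x 1| < 1) :
    {γ : Matrix (Fin 2) (Fin 2) ℤ |
      γ.det = 1 ∧ vnorm (act γ x) ≤ vnorm x / mnorm γ}.Infinite := by
  set ξ : ℝ := x 0 / x 1 with hξdef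
  have hx0 : x 0 = ξ * x 1 := by rw [hξdef]; field_simp
  apply infinite_of_unbounded
  intro T
  obtain ⟨k, j, p, q, hk, hTk, hdet, hjle, hqle, hple, hkξ, hqξ⟩ := key hξ hlt T
  have hkR : (0:ℝ) < (k:ℝ) := by exact_mod_cast hk
  set γ : Matrix (Fin 2) (Fin 2) ℤ := !![q, -p; k, -j] with hγ
  have e00 : γ 0 0 = q := rfl
  have e01 : γ 0 1 = -p := rfl
  have e10 : γ 1 0 = k := rfl
  have e11 : γ 1 1 = -j := rfl
  have hmle : mnorm γ ≤ (k:ℝ) := by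
    simp only [mnorm, e00, e01, e10, e11]
    push_cast
    rw [abs_neg, abs_neg]
    refine max_le (max_le hqle hple) (max_le ?_ hjle)
    rw [abs_of_pos hkR]
  have hmge : (k:ℝ) ≤ mnorm γ := by
    have : |(γ 1 0 : ℝ)| ≤ mnorm γ := le_max_of_le_right (le_max_left _ _)
    rw [e10] at this
    rwa [abs_of_pos hkR] at this
  have hmpos : 0 < mnorm γ := lt_of_lt_of_le hkR hmge
  have hact : act γ x = ![(q:ℝ) * x 0 - (p:ℝ) * x 1, (k:ℝ) * x 0 - (j:ℝ) * x 1] := by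
    funext i
    fin_cases i <;>
      simp [act, Matrix.mulVec, dotProduct, Fin.sum_univ_two, hγ] <;> ring
  refine ⟨γ, ⟨?_, ?_⟩, ?_⟩
  · rw [hγ, Matrix.det_fin_two_of]
    linear_combination hdet
  · -- vnorm (act γ x) ≤ vnorm x / mnorm γ
    have h1 : |(q:ℝ) * x 0 - (p:ℝ) * x 1| ≤ |x 1| / (k:ℝ) := by
      have : (q:ℝ) * x 0 - (p:ℝ) * x 1 = ((q:ℝ) * ξ - (p:ℝ)) * x 1 := by
        rw [hx0]; ring
      rw [this, abs_mul, div_eq_mul_inv, mul_comm (|x 1|)]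
      apply mul_le_mul_of_nonneg_right _ (abs_nonneg _)
      rw [← le_div_iff₀ hkR, div_eq_mul_inv, one_mul] at hqξ
      exact hqξ
    have h2 : |(k:ℝ) * x 0 - (j:ℝ) * x 1| ≤ |x 1| / (k:ℝ) := by
      have : (k:ℝ) * x 0 - (j:ℝ) * x 1 = ((k:ℝ) * ξ - (j:ℝ)) * x 1 := by
        rw [hx0]; ring
      rw [this, abs_mul, div_eq_mul_inv, mul_comm (|x 1|)]
      apply mul_le_mul_of_nonneg_right _ (abs_nonneg _)
      rw [← le_div_iff₀ hkR, div_eq_mul_inv, one_mul] at hkξ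
      exact hkξ
    have h3 : vnorm (act γ x) ≤ |x 1| / (k:ℝ) := by
      rw [hact]
      simp only [vnorm]
      exact max_le (by simpa using h1) (by simpa using h2)
    refine h3.trans ?_
    simp only [vnorm]
    exact div_le_div₀ ((abs_nonneg _).trans (le_max_right _ _)) (le_max_right _ _) hmpos hmle
  · exact lt_of_lt_of_le hTk hmge


/-- infinitely many `γ ∈ SL(2, ℤ)` satisfy `|γ x| ≤ |x| / |γ|`. -/
theorem stmt4 (x : Fin 2 → ℝ) (hx2 : x 1 ≠ 0) (hξ : Irrational (x 0 / x 1)) :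
    {γ : Matrix (Fin 2) (Fin 2) ℤ |
      γ.det = 1 ∧ vnorm (act γ x) ≤ vnorm x / mnorm γ}.Infinite := by
  set ξ : ℝ := x 0 / x 1 with hξdef
  have hne1 : |ξ| ≠ 1 := by
    intro h
    rcases abs_eq (by norm_num : (0:ℝ) ≤ 1) |>.mp h with h1 | h1
    · exact hξ.ne_one h1
    · exact (hξ.neg.ne_one (by rw [h1]; norm_num))
  rcases lt_or_gt_of_ne hne1 with hlt | hgt
  · exact aux x hx2 hξ hlt
  · -- |ξ| > 1 ; swap coordinates
    have hξ0 : ξ ≠ 0 := hξ.ne_zero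
    have hx0 : x 0 ≠ 0 := by
      intro h
      apply hξ0
      rw [hξdef, h, zero_div]
    set y : Fin 2 → ℝ := ![-(x 1), x 0] with hy
    have hy2 : y 1 ≠ 0 := by simpa [hy] using hx0
    have hslope : y 0 / y 1 = -ξ⁻¹ := by
      rw [hy, hξdef]
      simp
      field_simp
    have hyirr : Irrational (y 0 / y 1) := by
      rw [hslope]; exact hξ.inv.neg
    have hylt : |y 0 / y 1| < 1 := by
      rw [hslope, abs_neg, abs_inv]
      rw [inv_lt_one_iff₀]
      right; exact hgt
    have hinf := aux y hy2 hyirr hylt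
    set S : Matrix (Fin 2) (Fin 2) ℤ := !![0, -1; 1, 0] with hS
    set S' : Matrix (Fin 2) (Fin 2) ℤ := !![0, 1; -1, 0] with hS'
    have hSS' : S * S' = 1 := by
      rw [hS, hS', Matrix.mul_fin_two, Matrix.one_fin_two]
      norm_num
    have hinj : Function.Injective (fun γ : Matrix (Fin 2) (Fin 2) ℤ => γ * S) := by
      intro a b hab
      have := congrArg (fun m => m * S') hab
      simpa [Matrix.mul_assoc, hSS'] using this
    apply Set.Infinite.mono (s := (fun γ => γ * S) '' {γ : Matrix (Fin 2) (Fin 2) ℤ |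
        γ.det = 1 ∧ vnorm (act γ y) ≤ vnorm y / mnorm γ})
    · rintro _ ⟨γ, ⟨hγdet, hγle⟩, rfl⟩
      have hdetS : S.det = 1 := by rw [hS, Matrix.det_fin_two_of]; norm_num
      have hdγS : (γ * S).det = 1 := by rw [Matrix.det_mul, hγdet, hdetS, one_mul]
      have hent0 : ∀ i, (γ * S) i 0 = γ i 1 := by
        intro i
        simp [Matrix.mul_apply, Fin.sum_univ_two, hS]
      have hent1 : ∀ i, (γ * S) i 1 = -(γ i 0) := by
        intro i
        simp [Matrix.mul_apply, Fin.sum_univ_two, hS]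
      have hmn : mnorm (γ * S) = mnorm γ := by
        simp only [mnorm, hent0, hent1]
        push_cast
        rw [abs_neg, abs_neg, max_comm |(γ 0 1 : ℝ)|, max_comm |(γ 1 1 : ℝ)|]
      have hactS : act (γ * S) x = act γ y := by
        funext i
        fin_cases i <;>
          simp [act, Matrix.mulVec, dotProduct, Fin.sum_univ_two,
            Matrix.mul_apply, hS, hy] <;> ring
      have hvn : vnorm y = vnorm x := by
        simp [vnorm, hy, max_comm]
      refine ⟨hdγS, ?_⟩
      rw [hactS, hmn, ← hvn]
      exact hγle
    · exact hinf.image (Set.injOn_of_injective hinj)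
end

section
/- Let x ∈ ℝ² have irrational slope ξ = x₁/x₂, and let y ∈ ℝ² \ {0} have rational slope a/b in lowest terms (or y₂ = 0, in which case set a = 1, b = 0). Then there exist infinitely many γ ∈ SL(2,ℤ) such that |γx − y| ≤ 2√3 · max(|a|,|b|) · |x|^{1/2} |y|^{1/2} / |γ|^{1/2}. -/
open Matrix MeasureTheory

lemma exists_good_approx (ξ : ℝ) (hξ : Irrational ξ) (Q : ℕ) :
    ∃ p q : ℤ, (Q : ℤ) ≤ q ∧ 1 ≤ q ∧ IsCoprime p q ∧ |ξ - (p : ℝ)/(q : ℝ)| < 1/(q:ℝ)^2 := by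
  have hS := Real.infinite_rat_abs_sub_lt_one_div_den_sq_of_irrational hξ
  set S := {r : ℚ | |ξ - (r:ℝ)| < 1 / (r.den : ℝ) ^ 2} with hSdef
  -- the subset with den ≤ Q is finite
  set M : ℤ := ⌈(|ξ| + 1) * Q⌉ with hM
  have hfin : {r : ℚ | (r.den : ℤ) ≤ (Q:ℤ) ∧ |ξ - (r:ℝ)| < 1 / (r.den : ℝ) ^ 2}.Finite := by
    have hbase : (Set.Icc (-M) M ×ˢ Set.Icc (0:ℤ) Q).Finite :=
      (Set.finite_Icc _ _).prod (Set.finite_Icc _ _)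
    apply (hbase.image (fun pq : ℤ × ℤ => (pq.1 : ℚ)/(pq.2 : ℚ))).subset
    rintro r ⟨hden, happ⟩
    refine ⟨(r.num, (r.den : ℤ)), ⟨?_, ?_, ?_⟩, ?_⟩
    · -- -M ≤ num, num ≤ M :
      have h1 : (1:ℝ) ≤ (r.den : ℝ) := by exact_mod_cast r.pos
      have hlt : |ξ - (r:ℝ)| < 1 := lt_of_lt_of_le happ (by
        rw [div_le_one (by positivity)]
        nlinarith)
      have hr : |(r:ℝ)| ≤ |ξ| + 1 := by
        have := abs_sub_abs_le_abs_sub (r:ℝ) ξ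
        rw [abs_sub_comm] at hlt
        linarith [abs_abs (r:ℝ)]
      have hnum : |(r.num : ℝ)| ≤ (|ξ| + 1) * Q := by
        have : (r:ℝ) = (r.num : ℝ) / (r.den : ℝ) := by exact_mod_cast (Rat.cast_def (K := ℝ) r)
        have hden' : (r.den : ℝ) ≤ (Q : ℝ) := by exact_mod_cast hden
        have h2 : |(r.num : ℝ)| = |(r:ℝ)| * (r.den : ℝ) := by
          rw [this, abs_div, abs_of_pos (by positivity : (0:ℝ) < (r.den:ℝ))]
          field_simp
        rw [h2]
        have h0 : (0:ℝ) ≤ |ξ| + 1 := by positivity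
        calc |(r:ℝ)| * (r.den:ℝ) ≤ (|ξ|+1) * (r.den:ℝ) := by
              apply mul_le_mul_of_nonneg_right hr (by positivity)
          _ ≤ (|ξ|+1) * Q := by apply mul_le_mul_of_nonneg_left hden' h0
      have hnum' : |r.num| ≤ M := by
        have : (|r.num| : ℝ) ≤ (M : ℝ) := by
          push_cast
          exact hnum.trans (Int.le_ceil _)
        exact_mod_cast this
      exact abs_le.mp hnum'
    · show (0:ℤ) ≤ (r.den : ℤ); exact_mod_cast Nat.zero_le r.den
    · exact hden
    · show (r.num : ℚ) / ((r.den : ℤ) : ℚ) = r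
      push_cast
      exact r.num_div_den
  have hdiff : (S \ {r : ℚ | (r.den : ℤ) ≤ (Q:ℤ) ∧ |ξ - (r:ℝ)| < 1 / (r.den : ℝ) ^ 2}).Infinite :=
    hS.diff hfin
  obtain ⟨r, hrS, hrn⟩ := hdiff.nonempty
  refine ⟨r.num, r.den, ?_, by exact_mod_cast r.pos, ?_, ?_⟩
  · simp only [Set.mem_setOf_eq, not_and] at hrn
    have := hrn
    by_contra h
    push_neg at h
    exact (hrn h.le) hrS
  · rw [Int.isCoprime_iff_gcd_eq_one]
    exact_mod_cast r.reduced
  · have : ((r.num : ℝ))/((r.den : ℤ) : ℝ) = (r : ℝ) := by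
      push_cast
      exact_mod_cast congrArg (Rat.cast (K := ℝ)) r.num_div_den
    rw [this]
    push_cast
    exact hrS

lemma bezout_bounded (a b : ℤ) (hab : IsCoprime a b) :
    ∃ u v : ℤ, a * v - b * u = 1 ∧ (|u| : ℝ) ≤ max |(a:ℝ)| |(b:ℝ)| ∧
      (|v| : ℝ) ≤ max |(a:ℝ)| |(b:ℝ)| := by
  rcases eq_or_ne b 0 with hb | hb
  · subst hb
    have ha : a = 1 ∨ a = -1 := Int.isUnit_iff.mp (isCoprime_zero_right.mp hab)
    refine ⟨0, a, by rcases ha with h | h <;> simp [h], by simp, le_max_left _ _⟩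
  · obtain ⟨u0, v0, huv⟩ := hab  -- u0 * a + v0 * b = 1
    have hb0 : ((b:ℝ)) ≠ 0 := Int.cast_ne_zero.mpr hb
    have hb1 : (1:ℝ) ≤ |(b:ℝ)| := by
      have : (1:ℤ) ≤ |b| := Int.one_le_abs hb
      exact_mod_cast this
    set c : ℝ := (u0 : ℝ) / (b : ℝ) with hc
    set k : ℤ := -round c with hk
    set u : ℤ := -v0 + k * a with hu
    set v : ℤ := u0 + k * b with hv
    have hdet : a * v - b * u = 1 := by
      simp only [hu, hv]; linear_combination huv
    have hvb : (|v| : ℝ) ≤ |(b:ℝ)| / 2 := by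
      have h1 : ((v:ℤ) : ℝ) = (c - round c) * (b:ℝ) := by
        push_cast [hv, hk, hc]
        field_simp
        ring
      have := abs_sub_round c
      calc (|v| : ℝ) = |((v:ℤ):ℝ)| := by push_cast; ring
        _ = |c - round c| * |(b:ℝ)| := by rw [h1, abs_mul]
        _ ≤ (1/2) * |(b:ℝ)| := by
            apply mul_le_mul_of_nonneg_right this (abs_nonneg _)
        _ = |(b:ℝ)| / 2 := by ring
    have hub : (|u| : ℝ) * |(b:ℝ)| ≤ |(a:ℝ)| * |(b:ℝ)| / 2 + 1 := by
      have h1 : ((b:ℝ)) * u = (a:ℝ) * v - 1 := by exact_mod_cast congrArg (Int.cast : ℤ → ℝ) (by linarith [hdet] : b * u = a * v - 1)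
      have h2 : |(b:ℝ) * (u:ℝ)| ≤ |(a:ℝ)| * |(v:ℝ)| + 1 := by
        rw [h1]
        calc |(a:ℝ) * v - 1| ≤ |(a:ℝ) * v| + 1 := by
              have := abs_sub (a * (v:ℝ)) 1
              calc |(a:ℝ) * v - 1| ≤ |(a:ℝ)*v| + |(1:ℝ)| := abs_sub _ _
                _ = |(a:ℝ)*v| + 1 := by norm_num
          _ = |(a:ℝ)| * |(v:ℝ)| + 1 := by rw [abs_mul]
      have h3 : (|v|:ℝ) = |((v:ℤ):ℝ)| := by push_cast; ring
      have h4 : (|u|:ℝ) = |((u:ℤ):ℝ)| := by push_cast; ring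
      rw [abs_mul] at h2
      rw [h4, mul_comm]
      refine h2.trans ?_
      rw [← h3]
      nlinarith [abs_nonneg (a:ℝ)]
    have hmaxb : |(b:ℝ)| ≤ max |(a:ℝ)| |(b:ℝ)| := le_max_right _ _
    refine ⟨u, v, hdet, ?_, hvb.trans (by linarith [half_le_self (abs_nonneg (b:ℝ))])⟩
    rcases le_or_gt 2 |(a:ℝ)| with ha2 | ha2
    · have : (|u|:ℝ) * |(b:ℝ)| ≤ |(a:ℝ)| * |(b:ℝ)| := by nlinarith
      have : (|u|:ℝ) ≤ |(a:ℝ)| := by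
        have hbpos : (0:ℝ) < |(b:ℝ)| := by linarith
        exact le_of_mul_le_mul_right (by linarith) hbpos
      exact this.trans (le_max_left _ _)
    · have hint : |a| ≤ 1 := by
        have h2 : ((|a| : ℤ) : ℝ) < 2 := by rw [Int.cast_abs]; exact ha2
        have : |a| < 2 := by exact_mod_cast h2
        omega
      have ha1' : |(a:ℝ)| ≤ 1 := by
        have h3 : ((|a| : ℤ) : ℝ) ≤ 1 := by exact_mod_cast hint
        rwa [Int.cast_abs] at h3
      have h32 : (|u|:ℝ) ≤ 3/2 := by
        nlinarith [mul_le_mul_of_nonneg_right ha1' (abs_nonneg (b:ℝ)), hb1, hub]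
      have : |u| ≤ 1 := by
        have h2 : (|u|:ℝ) < 2 := by linarith
        have : |u| < 2 := by exact_mod_cast h2
        omega
      have : (|u|:ℝ) ≤ 1 := by exact_mod_cast this
      linarith

lemma infinite_of_unbounded_s5 {α : Type*} (S : Set α) (f : α → ℝ)
    (h : ∀ B : ℝ, ∃ a ∈ S, B ≤ f a) : S.Infinite := by
  by_contra hfin
  rw [Set.not_infinite] at hfin
  obtain ⟨B, hB⟩ := (hfin.image f).bddAbove
  obtain ⟨c, hcS, hcB⟩ := h (B + 1)
  have := hB (Set.mem_image_of_mem f hcS)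
  linarith

/-- approximation to a nonzero point `y` of rational slope `a/b` (or `y₂ = 0`,
`a = 1`, `b = 0`): infinitely many `γ ∈ SL(2, ℤ)` with
`|γ x - y| ≤ 2√3 max(|a|, |b|) |x|^{1/2} |y|^{1/2} / |γ|^{1/2}`. -/
theorem stmt5 (x y : Fin 2 → ℝ) (hx2 : x 1 ≠ 0) (hξ : Irrational (x 0 / x 1))
    (hy : y ≠ 0) (a b : ℤ) (hab : IsCoprime a b)
    (hslope : (y 1 ≠ 0 ∧ y 0 * (b : ℝ) = y 1 * (a : ℝ)) ∨ (y 1 = 0 ∧ a = 1 ∧ b = 0)) :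
    {γ : Matrix (Fin 2) (Fin 2) ℤ | γ.det = 1 ∧
      vnorm (act γ x - y) ≤ 2 * Real.sqrt 3 * max |(a : ℝ)| |(b : ℝ)| *
        Real.sqrt (vnorm x) * Real.sqrt (vnorm y) / Real.sqrt (mnorm γ)}.Infinite := by
  set ξ : ℝ := x 0 / x 1 with hξdef
  set A : ℝ := max |(a:ℝ)| |(b:ℝ)| with hAdef
  set X : ℝ := vnorm x with hXdef
  -- slope parameter τ
  obtain ⟨τ, hτ0, hy0, hy1⟩ : ∃ τ : ℝ, τ ≠ 0 ∧ y 0 = τ * a ∧ y 1 = τ * b := by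
    rcases hslope with ⟨hy1ne, hsl⟩ | ⟨hy1z, ha1, hb0⟩
    · have hbne : b ≠ 0 := by
        rintro rfl
        have ha : IsUnit a := isCoprime_zero_right.mp hab
        have haR : (a:ℝ) ≠ 0 := by
          rcases Int.isUnit_iff.mp ha with h | h <;> simp [h]
        apply hy1ne
        have : y 1 * (a:ℝ) = 0 := by simpa using hsl.symm
        exact (mul_eq_zero.mp this).resolve_right haR
      have hbR : (b:ℝ) ≠ 0 := Int.cast_ne_zero.mpr hbne
      refine ⟨y 1 / (b:ℝ), div_ne_zero hy1ne hbR, ?_, by field_simp⟩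
      field_simp
      linear_combination hsl
    · refine ⟨y 0, ?_, by simp [ha1], by simp [hb0, hy1z]⟩
      intro h0
      apply hy
      funext i
      fin_cases i <;> simp [h0, hy1z]
  have hA1 : (1:ℝ) ≤ A := by
    rcases eq_or_ne a 0 with ha | ha
    · subst ha
      have : b = 1 ∨ b = -1 := Int.isUnit_iff.mp (isCoprime_zero_left.mp hab)
      rcases this with h | h <;> simp [hAdef, h] <;> norm_num
    · have h1 : (1:ℤ) ≤ |a| := Int.one_le_abs ha
      have h2 : (1:ℝ) ≤ |(a:ℝ)| := by rw [← Int.cast_abs]; exact_mod_cast h1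
      exact h2.trans (le_max_left _ _)
  have hA0 : (0:ℝ) < A := lt_of_lt_of_le one_pos hA1
  have hx1X : |x 1| ≤ X := le_max_right _ _
  have hx0X : |x 0| ≤ X := le_max_left _ _
  have hX0 : 0 < X := lt_of_lt_of_le (abs_pos.mpr hx2) hx1X
  have hτa : 0 < |τ| := abs_pos.mpr hτ0
  have hY : vnorm y = |τ| * A := by
    rw [vnorm, hy0, hy1, abs_mul, abs_mul, hAdef, mul_max_of_nonneg _ _ (abs_nonneg τ)]
  obtain ⟨u, v, huv, huA, hvA⟩ := bezout_bounded a b hab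
  rw [← hAdef] at huA hvA
  have haA : |(a:ℝ)| ≤ A := le_max_left _ _
  have hbA : |(b:ℝ)| ≤ A := le_max_right _ _
  clear_value ξ A X
  -- the key existence statement
  have key : ∀ B : ℝ, ∃ γ : Matrix (Fin 2) (Fin 2) ℤ, (γ.det = 1 ∧
      vnorm (act γ x - y) ≤ 2 * Real.sqrt 3 * A *
        Real.sqrt X * Real.sqrt (vnorm y) / Real.sqrt (mnorm γ)) ∧ B ≤ mnorm γ := by
    intro B
    obtain ⟨Q, hQdef⟩ : ∃ Q : ℕ, Q = ⌈(2*|x 1|)/|τ|⌉₊ + ⌈2*A*B⌉₊ + 1 := ⟨_, rfl⟩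
    obtain ⟨p, q, hQq, hq1, hpq, happ⟩ := exists_good_approx ξ hξ Q
    have hqR1 : (1:ℝ) ≤ (q:ℝ) := by exact_mod_cast hq1
    have hqR0 : (0:ℝ) < (q:ℝ) := lt_of_lt_of_le one_pos hqR1
    have hqQ : (Q:ℝ) ≤ (q:ℝ) := by exact_mod_cast hQq
    have hq2τ : 2*|x 1| ≤ (q:ℝ) * |τ| := by
      have h1 : (2*|x 1|)/|τ| ≤ (Q:ℝ) := by
        calc (2*|x 1|)/|τ| ≤ (⌈(2*|x 1|)/|τ|⌉₊ : ℝ) := Nat.le_ceil _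
          _ ≤ (Q:ℝ) := by rw [hQdef]; push_cast; linarith [show (0:ℝ) ≤ (⌈2*A*B⌉₊:ℝ) from Nat.cast_nonneg _]
      have := h1.trans hqQ
      rw [div_le_iff₀ hτa] at this
      linarith
    have hq2AB : 2*A*B ≤ (q:ℝ) := by
      calc 2*A*B ≤ (⌈2*A*B⌉₊ : ℝ) := Nat.le_ceil _
        _ ≤ (Q:ℝ) := by rw [hQdef]; push_cast; linarith [show (0:ℝ) ≤ (⌈(2*|x 1|)/|τ|⌉₊:ℝ) from Nat.cast_nonneg _]
        _ ≤ (q:ℝ) := hqQ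
    clear hQdef hQq hqQ
    obtain ⟨δ, hδdef⟩ : ∃ δ : ℝ, δ = (q:ℝ) * x 0 - (p:ℝ) * x 1 := ⟨_, rfl⟩
    have hδeq : δ = x 1 * ((q:ℝ) * (ξ - (p:ℝ)/(q:ℝ))) := by
      rw [hδdef, hξdef]
      field_simp
    have hδabs : |δ| ≤ |x 1| / q := by
      rw [hδeq, abs_mul, abs_mul, abs_of_pos hqR0]
      rw [div_eq_mul_inv]
      have h2 : |ξ - (p:ℝ)/(q:ℝ)| ≤ 1/(q:ℝ)^2 := happ.le
      calc |x 1| * ((q:ℝ) * |ξ - (p:ℝ)/(q:ℝ)|) ≤ |x 1| * ((q:ℝ) * (1/(q:ℝ)^2)) := by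
            apply mul_le_mul_of_nonneg_left _ (abs_nonneg _)
            exact mul_le_mul_of_nonneg_left h2 hqR0.le
        _ = |x 1| * (q:ℝ)⁻¹ := by field_simp
    have hδ0 : δ ≠ 0 := by
      intro h0
      have : ξ = (p:ℝ)/(q:ℝ) := by
        have h1 : x 1 * ((q:ℝ) * (ξ - (p:ℝ)/(q:ℝ))) = 0 := by rw [← hδeq]; exact h0
        rcases mul_eq_zero.mp h1 with h | h
        · exact absurd h hx2
        · rcases mul_eq_zero.mp h with h | h
          · exact absurd h hqR0.ne'
          · linarith [sub_eq_zero.mp h]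
      have : ξ = ((p/q : ℚ) : ℝ) := by rw [this]; push_cast; ring
      exact (hξ.ne_rat _) this
    have hqδ : (q:ℝ) * |δ| ≤ |x 1| := by
      rw [div_eq_mul_inv] at hδabs
      calc (q:ℝ) * |δ| ≤ (q:ℝ) * (|x 1| * (q:ℝ)⁻¹) := by
            exact mul_le_mul_of_nonneg_left hδabs hqR0.le
        _ = |x 1| := by field_simp
    have hδX : |δ| ≤ X := by
      calc |δ| ≤ (q:ℝ) * |δ| := le_mul_of_one_le_left (abs_nonneg _) hqR1
        _ ≤ |x 1| := hqδ
        _ ≤ X := hx1X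
    have hδτ : |δ| ≤ |τ|/2 := by
      have h1 : (q:ℝ) * (2 * |δ|) ≤ (q:ℝ) * |τ| := by
        calc (q:ℝ) * (2 * |δ|) = 2 * ((q:ℝ) * |δ|) := by ring
          _ ≤ 2 * |x 1| := by linarith
          _ ≤ (q:ℝ) * |τ| := hq2τ
      have h2 := le_of_mul_le_mul_left h1 hqR0
      linarith
    -- Bezout for p q
    obtain ⟨cc, dd, hcd⟩ := hpq
    obtain ⟨s0, hs0def⟩ : ∃ s0 : ℝ, s0 = (-cc : ℤ) * x 0 + (-dd : ℤ) * x 1 := ⟨_, rfl⟩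
    obtain ⟨t, htdef⟩ : ∃ t : ℤ, t = round ((τ - s0)/δ) := ⟨_, rfl⟩
    obtain ⟨m, hmdef⟩ : ∃ m : ℤ, m = -cc + t * q := ⟨_, rfl⟩
    obtain ⟨n, hndef⟩ : ∃ n : ℤ, n = -dd - t * p := ⟨_, rfl⟩
    have hmn : m * p + n * q = -1 := by rw [hmdef, hndef]; linear_combination -hcd
    have hmnR : (m:ℝ) * p + (n:ℝ) * q = -1 := by exact_mod_cast hmn
    obtain ⟨σ, hσdef⟩ : ∃ σ : ℝ, σ = (m:ℝ) * x 0 + (n:ℝ) * x 1 := ⟨_, rfl⟩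
    have hσs : σ = s0 + t * δ := by rw [hσdef, hs0def, hδdef]; push_cast [hmdef, hndef]; ring
    have hστ : |σ - τ| ≤ |δ|/2 := by
      have h1 : σ - τ = -(δ * ((τ - s0)/δ - (t:ℝ))) := by
        field_simp [hσs]
        linear_combination hσs
      rw [h1, abs_neg, abs_mul]
      calc |δ| * |(τ - s0)/δ - (t:ℝ)| ≤ |δ| * (1/2) := by
            rw [htdef]
            exact mul_le_mul_of_nonneg_left (abs_sub_round _) (abs_nonneg _)
        _ = |δ|/2 := by ring
    clear htdef hσs hs0def hcd
    have hσb : |σ| ≤ |τ| + |δ|/2 := by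
      have := abs_sub_abs_le_abs_sub σ τ
      linarith
    -- the matrix
    obtain ⟨γ, hγdef⟩ : ∃ γ : Matrix (Fin 2) (Fin 2) ℤ,
      γ = !![a*m + u*q, a*n - u*p; b*m + v*q, b*n - v*p] := ⟨_, rfl⟩
    have hdet : γ.det = 1 := by
      rw [hγdef, Matrix.det_fin_two_of]
      linear_combination (-(m*p + n*q)) * huv - hmn
    have hact0 : act γ x 0 = (a:ℝ)*σ + (u:ℝ)*δ := by
      simp [act, Matrix.mulVec, dotProduct, Fin.sum_univ_two, hγdef, hσdef, hδdef]
      push_cast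
      ring
    have hact1 : act γ x 1 = (b:ℝ)*σ + (v:ℝ)*δ := by
      simp [act, Matrix.mulVec, dotProduct, Fin.sum_univ_two, hγdef, hσdef, hδdef]
      push_cast
      ring
    -- vnorm bound
    have hvn : vnorm (act γ x - y) ≤ (3/2) * A * |δ| := by
      have h0 : (act γ x - y) 0 = (a:ℝ)*(σ - τ) + (u:ℝ)*δ := by
        simp only [Pi.sub_apply, hact0, hy0]; ring
      have h1 : (act γ x - y) 1 = (b:ℝ)*(σ - τ) + (v:ℝ)*δ := by
        simp only [Pi.sub_apply, hact1, hy1]; ring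
      have hb0' : |(a:ℝ)*(σ - τ) + (u:ℝ)*δ| ≤ (3/2) * A * |δ| := by
        calc |(a:ℝ)*(σ - τ) + (u:ℝ)*δ| ≤ |(a:ℝ)| * |σ - τ| + |(u:ℝ)| * |δ| := by
              calc _ ≤ |(a:ℝ)*(σ - τ)| + |(u:ℝ)*δ| := abs_add_le _ _
                _ = |(a:ℝ)| * |σ - τ| + |(u:ℝ)| * |δ| := by rw [abs_mul, abs_mul]
          _ ≤ A*(|δ|/2) + A*|δ| := by
              apply add_le_add
              · exact mul_le_mul haA hστ (abs_nonneg _) hA0.le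
              · exact mul_le_mul_of_nonneg_right huA (abs_nonneg _)
          _ = (3/2) * A * |δ| := by ring
      have hb1' : |(b:ℝ)*(σ - τ) + (v:ℝ)*δ| ≤ (3/2) * A * |δ| := by
        calc |(b:ℝ)*(σ - τ) + (v:ℝ)*δ| ≤ |(b:ℝ)| * |σ - τ| + |(v:ℝ)| * |δ| := by
              calc _ ≤ |(b:ℝ)*(σ - τ)| + |(v:ℝ)*δ| := abs_add_le _ _
                _ = |(b:ℝ)| * |σ - τ| + |(v:ℝ)| * |δ| := by rw [abs_mul, abs_mul]
          _ ≤ A*(|δ|/2) + A*|δ| := by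
              apply add_le_add
              · exact mul_le_mul hbA hστ (abs_nonneg _) hA0.le
              · exact mul_le_mul_of_nonneg_right hvA (abs_nonneg _)
          _ = (3/2) * A * |δ| := by ring
      rw [vnorm, h0, h1]
      exact max_le hb0' hb1'
    -- mnorm upper bound
    obtain ⟨N, hNdef⟩ : ∃ N : ℝ, N = mnorm γ := ⟨_, rfl⟩
    obtain ⟨P, hPdef⟩ : ∃ P : ℝ, P = max (|(m:ℝ)| + (q:ℝ)) (|(n:ℝ)| + |(p:ℝ)|) := ⟨_, rfl⟩
    have hNP : N ≤ A * P := by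
      have e00 : |((a*m + u*q : ℤ) : ℝ)| ≤ A * (|(m:ℝ)| + (q:ℝ)) := by
        push_cast
        calc |(a:ℝ)*m + (u:ℝ)*q| ≤ |(a:ℝ)*m| + |(u:ℝ)*q| := abs_add_le _ _
          _ = |(a:ℝ)| * |(m:ℝ)| + |(u:ℝ)| * |(q:ℝ)| := by rw [abs_mul, abs_mul]
          _ ≤ A*|(m:ℝ)| + A*|(q:ℝ)| := by
              apply add_le_add <;> apply mul_le_mul_of_nonneg_right _ (abs_nonneg _)
              exacts [haA, huA]
          _ = A * (|(m:ℝ)| + (q:ℝ)) := by rw [abs_of_pos hqR0]; ring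
      have e01 : |((a*n - u*p : ℤ) : ℝ)| ≤ A * (|(n:ℝ)| + |(p:ℝ)|) := by
        push_cast
        calc |(a:ℝ)*n - (u:ℝ)*p| ≤ |(a:ℝ)*n| + |(u:ℝ)*p| := abs_sub _ _
          _ = |(a:ℝ)| * |(n:ℝ)| + |(u:ℝ)| * |(p:ℝ)| := by rw [abs_mul, abs_mul]
          _ ≤ A*|(n:ℝ)| + A*|(p:ℝ)| := by
              apply add_le_add <;> apply mul_le_mul_of_nonneg_right _ (abs_nonneg _)
              exacts [haA, huA]
          _ = A * (|(n:ℝ)| + |(p:ℝ)|) := by ring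
      have e10 : |((b*m + v*q : ℤ) : ℝ)| ≤ A * (|(m:ℝ)| + (q:ℝ)) := by
        push_cast
        calc |(b:ℝ)*m + (v:ℝ)*q| ≤ |(b:ℝ)*m| + |(v:ℝ)*q| := abs_add_le _ _
          _ = |(b:ℝ)| * |(m:ℝ)| + |(v:ℝ)| * |(q:ℝ)| := by rw [abs_mul, abs_mul]
          _ ≤ A*|(m:ℝ)| + A*|(q:ℝ)| := by
              apply add_le_add <;> apply mul_le_mul_of_nonneg_right _ (abs_nonneg _)
              exacts [hbA, hvA]
          _ = A * (|(m:ℝ)| + (q:ℝ)) := by rw [abs_of_pos hqR0]; ring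
      have e11 : |((b*n - v*p : ℤ) : ℝ)| ≤ A * (|(n:ℝ)| + |(p:ℝ)|) := by
        push_cast
        calc |(b:ℝ)*n - (v:ℝ)*p| ≤ |(b:ℝ)*n| + |(v:ℝ)*p| := abs_sub _ _
          _ = |(b:ℝ)| * |(n:ℝ)| + |(v:ℝ)| * |(p:ℝ)| := by rw [abs_mul, abs_mul]
          _ ≤ A*|(n:ℝ)| + A*|(p:ℝ)| := by
              apply add_le_add <;> apply mul_le_mul_of_nonneg_right _ (abs_nonneg _)
              exacts [hbA, hvA]
          _ = A * (|(n:ℝ)| + |(p:ℝ)|) := by ring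
      have hm1 : A * (|(m:ℝ)| + (q:ℝ)) ≤ A * P := by
        rw [hPdef]
        apply mul_le_mul_of_nonneg_left (le_max_left _ _) hA0.le
      have hn1 : A * (|(n:ℝ)| + |(p:ℝ)|) ≤ A * P := by
        rw [hPdef]
        apply mul_le_mul_of_nonneg_left (le_max_right _ _) hA0.le
      rw [hNdef, mnorm, hγdef]
      apply max_le (max_le _ _) (max_le _ _)
      · exact le_trans (le_of_eq (by norm_num [Matrix.cons_val_zero])) (e00.trans hm1)
      · exact le_trans (le_of_eq (by norm_num [Matrix.cons_val_one])) (e01.trans hn1)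
      · exact le_trans (le_of_eq (by norm_num [Matrix.cons_val_one])) (e10.trans hm1)
      · exact le_trans (le_of_eq (by norm_num [Matrix.cons_val_one])) (e11.trans hn1)
    -- key identities and bounds for m, n, p
    have hmδ : (m:ℝ) * δ = x 1 + (q:ℝ) * σ := by
      rw [hδdef, hσdef]; linear_combination (-(x 1)) * hmnR
    have hnδ : (n:ℝ) * δ = -(x 0) - (p:ℝ) * σ := by
      rw [hδdef, hσdef]; linear_combination (x 0) * hmnR
    have hm : |(m:ℝ)| * |δ| ≤ X + (q:ℝ) * |σ| := by
      rw [← abs_mul, hmδ]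
      calc |x 1 + (q:ℝ)*σ| ≤ |x 1| + |(q:ℝ)*σ| := abs_add_le _ _
        _ = |x 1| + (q:ℝ)*|σ| := by rw [abs_mul, abs_of_pos hqR0]
        _ ≤ X + (q:ℝ)*|σ| := by linarith
    have hn : |(n:ℝ)| * |δ| ≤ X + |(p:ℝ)| * |σ| := by
      rw [← abs_mul, hnδ]
      calc |-(x 0) - (p:ℝ)*σ| ≤ |(-(x 0))| + |(p:ℝ)*σ| := abs_sub _ _
        _ = |x 0| + |(p:ℝ)| * |σ| := by rw [abs_neg, abs_mul]
        _ ≤ X + |(p:ℝ)| * |σ| := by linarith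
    have hp1 : |(p:ℝ)| * |x 1| ≤ (q:ℝ) * |x 0| + |x 1| := by
      have h1 : (p:ℝ) * x 1 = (q:ℝ) * x 0 - δ := by rw [hδdef]; ring
      calc |(p:ℝ)| * |x 1| = |(p:ℝ) * x 1| := (abs_mul _ _).symm
        _ = |(q:ℝ) * x 0 - δ| := by rw [h1]
        _ ≤ |(q:ℝ) * x 0| + |δ| := abs_sub _ _
        _ ≤ (q:ℝ)*|x 0| + |x 1| := by
            rw [abs_mul, abs_of_pos hqR0]
            have : |δ| ≤ |x 1| := by
              calc |δ| ≤ (q:ℝ)*|δ| := le_mul_of_one_le_left (abs_nonneg _) hqR1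
                _ ≤ |x 1| := hqδ
            linarith
    have hpδ : |(p:ℝ)| * |δ| ≤ 2 * X := by
      have hx1pos : 0 < |x 1| := abs_pos.mpr hx2
      have h2 : |(p:ℝ)| * |δ| * (q:ℝ) ≤ 2 * X * (q:ℝ) := by
        calc |(p:ℝ)| * |δ| * (q:ℝ) = |(p:ℝ)| * ((q:ℝ) * |δ|) := by ring
          _ ≤ |(p:ℝ)| * |x 1| := mul_le_mul_of_nonneg_left hqδ (abs_nonneg _)
          _ ≤ (q:ℝ) * |x 0| + |x 1| := hp1
          _ ≤ (q:ℝ) * X + (q:ℝ) * X := by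
              have h3 : (q:ℝ)*|x 0| ≤ (q:ℝ)*X := mul_le_mul_of_nonneg_left hx0X hqR0.le
              have h4 : |x 1| ≤ (q:ℝ)*X := hx1X.trans (le_mul_of_one_le_left hX0.le hqR1)
              linarith
          _ = 2 * X * (q:ℝ) := by ring
      exact le_of_mul_le_mul_right h2 hqR0
    -- combine into the P bound
    have hD0 : (0:ℝ) ≤ |δ| := abs_nonneg _
    have hqδX : (q:ℝ)*|δ| ≤ X := hqδ.trans hx1X
    have hqσ : (q:ℝ)*|σ| * |δ| ≤ X*|τ| + X*(|δ|/2) := by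
      have h5 : (q:ℝ)*|σ| ≤ (q:ℝ)*(|τ| + |δ|/2) := mul_le_mul_of_nonneg_left hσb hqR0.le
      have h6 : (q:ℝ)*|σ| * |δ| ≤ ((q:ℝ)*|δ|)*|τ| + ((q:ℝ)*|δ|)*(|δ|/2) := by
        linarith [mul_le_mul_of_nonneg_right h5 hD0]
      have h7 : ((q:ℝ)*|δ|)*|τ| ≤ X*|τ| := mul_le_mul_of_nonneg_right hqδX hτa.le
      have h8 : ((q:ℝ)*|δ|)*(|δ|/2) ≤ X*(|δ|/2) := by
        exact mul_le_mul_of_nonneg_right hqδX (by positivity : (0:ℝ) ≤ |δ|/2)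
      linarith
    have hXδτ : X*|δ| ≤ X*(|τ|/2) := mul_le_mul_of_nonneg_left hδτ hX0.le
    have hbm : (|(m:ℝ)| + (q:ℝ)) * |δ|^2 ≤ 4*X*|τ| := by
      have h9 : |(m:ℝ)| * |δ| * |δ| ≤ (X + (q:ℝ)*|σ|)*|δ| := mul_le_mul_of_nonneg_right hm hD0
      have h10 : ((q:ℝ)*|δ|)*|δ| ≤ X*|δ| := mul_le_mul_of_nonneg_right hqδX hD0
      linarith only [h9, h10, hqσ, hXδτ, mul_nonneg hX0.le hτa.le]
    have hbn : (|(n:ℝ)| + |(p:ℝ)|) * |δ|^2 ≤ 4*X*|τ| := by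
      have h12 : |(n:ℝ)| * |δ| * |δ| ≤ (X + |(p:ℝ)| * |σ|)*|δ| := mul_le_mul_of_nonneg_right hn hD0
      have h13 : |(p:ℝ)| * |σ| ≤ |(p:ℝ)| *(|τ| + |δ|/2) := mul_le_mul_of_nonneg_left hσb (abs_nonneg _)
      have h14 : |(p:ℝ)| * |σ| * |δ| ≤ (|(p:ℝ)| * |δ|)*|τ| + (|(p:ℝ)| * |δ|)*(|δ|/2) := by
        linarith [mul_le_mul_of_nonneg_right h13 hD0]
      have h15 : (|(p:ℝ)| * |δ|)*|τ| ≤ (2*X)*|τ| := mul_le_mul_of_nonneg_right hpδ hτa.le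
      have h16 : (|(p:ℝ)| * |δ|)*(|δ|/2) ≤ (2*X)*(|δ|/2) := by
        exact mul_le_mul_of_nonneg_right hpδ (by positivity : (0:ℝ) ≤ |δ|/2)
      have h17 : |(p:ℝ)| * |δ| * |δ| ≤ (2*X)*|δ| := mul_le_mul_of_nonneg_right hpδ hD0
      linarith only [h12, h14, h15, h16, h17, hXδτ]
    have hPδ : P * |δ|^2 ≤ 4*X*|τ| := by
      rw [hPdef, max_mul_of_nonneg _ _ (sq_nonneg |δ|)]
      exact max_le hbm hbn
    have hNδ : N * |δ|^2 ≤ 4*X*|τ| *A := by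
      calc N * |δ|^2 ≤ (A*P) * |δ|^2 := mul_le_mul_of_nonneg_right hNP (sq_nonneg _)
        _ = A * (P * |δ|^2) := by ring
        _ ≤ A * (4*X*|τ|) := mul_le_mul_of_nonneg_left hPδ hA0.le
        _ = 4*X*|τ| *A := by ring
    -- entry bounds from mnorm
    have g00 : γ 0 0 = a*m + u*q := by rw [hγdef]; simp
    have g10 : γ 1 0 = b*m + v*q := by rw [hγdef]; simp
    have h00N : |((a*m + u*q : ℤ):ℝ)| ≤ N := by
      rw [hNdef, mnorm, ← g00]
      exact le_trans (le_max_left _ _) (le_max_left _ _)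
    have h10N : |((b*m + v*q : ℤ):ℝ)| ≤ N := by
      rw [hNdef, mnorm, ← g10]
      exact le_trans (le_max_left _ _) (le_max_right _ _)
    have huvR : (a:ℝ)*(v:ℝ) - (b:ℝ)*(u:ℝ) = 1 := by exact_mod_cast huv
    have hq2AN : (q:ℝ) ≤ 2*A*N := by
      have hid : ((q:ℤ):ℝ) = (a:ℝ)*((b*m + v*q : ℤ):ℝ) - (b:ℝ)*((a*m + u*q : ℤ):ℝ) := by
        push_cast
        linear_combination (-(q:ℝ)) * huvR
      have h18 : (q:ℝ) ≤ |(a:ℝ)| * |((b*m + v*q : ℤ):ℝ)| + |(b:ℝ)| * |((a*m + u*q : ℤ):ℝ)| := by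
        calc (q:ℝ) = |((q:ℤ):ℝ)| := by rw [abs_of_pos]; exact_mod_cast hqR0
          _ = |(a:ℝ)*((b*m + v*q : ℤ):ℝ) - (b:ℝ)*((a*m + u*q : ℤ):ℝ)| := by rw [hid]
          _ ≤ |(a:ℝ)*((b*m + v*q : ℤ):ℝ)| + |(b:ℝ)*((a*m + u*q : ℤ):ℝ)| := abs_sub _ _
          _ = |(a:ℝ)| * |((b*m + v*q : ℤ):ℝ)| + |(b:ℝ)| * |((a*m + u*q : ℤ):ℝ)| := by
              rw [abs_mul, abs_mul]
      have hN0' : (0:ℝ) ≤ N := le_trans (abs_nonneg _) h00N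
      calc (q:ℝ) ≤ |(a:ℝ)| * |((b*m + v*q : ℤ):ℝ)| + |(b:ℝ)| * |((a*m + u*q : ℤ):ℝ)| := h18
        _ ≤ A*N + A*N := by
            apply add_le_add
            · exact mul_le_mul haA h10N (abs_nonneg _) hA0.le
            · exact mul_le_mul hbA h00N (abs_nonneg _) hA0.le
        _ = 2*A*N := by ring
    have hBN : B ≤ N := by
      have h2 : 2*A*B ≤ 2*A*N := hq2AB.trans hq2AN
      exact (mul_le_mul_iff_right₀ (by linarith : (0:ℝ) < 2*A)).mp h2
    have hN0 : 0 < N := by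
      rcases lt_or_ge 0 N with h | h
      · exact h
      · exfalso
        have h1 : (1:ℝ) ≤ 2*A*N := hqR1.trans hq2AN
        have h2 : 2*A*N ≤ 2*A*0 := mul_le_mul_of_nonneg_left h (by linarith : (0:ℝ) ≤ 2*A)
        rw [mul_zero] at h2
        linarith
    -- final inequality
    obtain ⟨Y, hYdef⟩ : ∃ Y : ℝ, Y = vnorm y := ⟨_, rfl⟩
    have hY0 : 0 < Y := by rw [hYdef, hY]; exact mul_pos hτa hA0
    have hfinal : vnorm (act γ x - y) ≤
        2 * Real.sqrt 3 * A * Real.sqrt X * Real.sqrt Y / Real.sqrt N := by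
      have hsN : 0 < Real.sqrt N := Real.sqrt_pos.mpr hN0
      rw [le_div_iff₀ hsN]
      have step1 : vnorm (act γ x - y) * Real.sqrt N ≤ ((3/2)*A*|δ|) * Real.sqrt N :=
        mul_le_mul_of_nonneg_right hvn hsN.le
      refine step1.trans ?_
      have hNXY : N * |δ|^2 ≤ 4*(X*Y) := by
        have : Y = |τ| *A := by rw [hYdef, hY]
        rw [this]
        linarith only [hNδ]
      obtain ⟨s, hsdef⟩ : ∃ s : ℝ, s = Real.sqrt 3 * Real.sqrt X * Real.sqrt Y := ⟨_, rfl⟩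
      obtain ⟨tt, httdef⟩ : ∃ tt : ℝ, tt = |δ| * Real.sqrt N := ⟨_, rfl⟩
      have hs2 : s^2 = 3*(X*Y) := by
        rw [hsdef, mul_pow, mul_pow, Real.sq_sqrt (by norm_num : (0:ℝ) ≤ 3),
          Real.sq_sqrt hX0.le, Real.sq_sqrt hY0.le]
        ring
      have ht2 : tt^2 = |δ|^2 * N := by
        rw [httdef, mul_pow, Real.sq_sqrt hN0.le]
      have hs0 : (0:ℝ) ≤ s := by rw [hsdef]; positivity
      have ht0 : (0:ℝ) ≤ tt := by rw [httdef]; positivity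
      have hkey2 : tt^2 ≤ (16/9)*s^2 := by
        rw [hs2, ht2]
        linarith only [hNXY, (mul_pos hX0 hY0).le]
      have htts : tt ≤ (4/3)*s := by
        have e1 : tt = Real.sqrt (tt^2) := (Real.sqrt_sq ht0).symm
        have e2 : Real.sqrt (tt^2) ≤ Real.sqrt ((16/9)*s^2) := Real.sqrt_le_sqrt hkey2
        have e3 : Real.sqrt ((16/9)*s^2) = (4/3)*s := by
          rw [Real.sqrt_mul (by norm_num : (0:ℝ) ≤ 16/9), Real.sqrt_sq hs0,
            show (16:ℝ)/9 = (4/3)^2 by norm_num, Real.sqrt_sq (by norm_num : (0:ℝ) ≤ 4/3)]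
        rw [e1]
        rw [e3] at e2
        exact e2
      calc (3/2)*A*|δ| * Real.sqrt N = A * ((3/2)*tt) := by rw [httdef]; ring
        _ ≤ A * (2*s) := by
            apply mul_le_mul_of_nonneg_left _ hA0.le
            linarith
        _ = 2*Real.sqrt 3*A*Real.sqrt X*Real.sqrt Y := by rw [hsdef]; ring
    rw [hYdef, hNdef] at hfinal
    rw [hNdef] at hBN
    exact ⟨γ, ⟨hdet, hfinal⟩, hBN⟩
  apply infinite_of_unbounded_s5 _ mnorm
  intro B
  obtain ⟨γ, hmem, hB⟩ := key B
  exact ⟨γ, hmem, hB⟩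
end

section
/- Let x ∈ ℝ² have irrational slope ξ. Then μ(x, 0) = 1, where μ(x,y) is the supremum of real numbers μ such that |γx − y| ≤ |γ|^{−μ} has infinitely many solutions γ ∈ SL(2,ℤ). -/
open Matrix MeasureTheory

lemma abs_entry_le_mnorm (g : Matrix (Fin 2) (Fin 2) ℤ) (i j : Fin 2) :
    |(g i j : ℝ)| ≤ mnorm g := by
  fin_cases i <;> fin_cases j <;>
    simp only [mnorm, Fin.isValue] <;>
    first
      | exact le_max_of_le_left (le_max_left _ _)
      | exact le_max_of_le_left (le_max_right _ _)
      | exact le_max_of_le_right (le_max_left _ _)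
      | exact le_max_of_le_right (le_max_right _ _)

lemma int_abs_le_of_cast_abs_le {a : ℤ} {B : ℝ} (h : |(a : ℝ)| ≤ B) : a ∈ Set.Icc (-⌈B⌉) ⌈B⌉ := by
  have h2 : ((|a| : ℤ) : ℝ) ≤ (⌈B⌉ : ℝ) := by
    push_cast; exact (le_trans (le_of_eq rfl) h).trans (Int.le_ceil B)
  have h3 : |a| ≤ ⌈B⌉ := by exact_mod_cast h2
  rw [abs_le] at h3
  rw [Set.mem_Icc]; omega

lemma finite_mnorm_le (B : ℝ) : {γ : Matrix (Fin 2) (Fin 2) ℤ | mnorm γ ≤ B}.Finite := by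
  classical
  have hsub : {γ : Matrix (Fin 2) (Fin 2) ℤ | mnorm γ ≤ B} ⊆
      (fun t : ℤ × ℤ × ℤ × ℤ => !![t.1, t.2.1; t.2.2.1, t.2.2.2]) ''
        (Set.Icc (-⌈B⌉) ⌈B⌉ ×ˢ Set.Icc (-⌈B⌉) ⌈B⌉ ×ˢ Set.Icc (-⌈B⌉) ⌈B⌉ ×ˢ Set.Icc (-⌈B⌉) ⌈B⌉) := by
    intro γ hγ
    have hb : ∀ i j, γ i j ∈ Set.Icc (-⌈B⌉) ⌈B⌉ := fun i j =>
      int_abs_le_of_cast_abs_le (le_trans (abs_entry_le_mnorm γ i j) hγ)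
    refine ⟨(γ 0 0, γ 0 1, γ 1 0, γ 1 1), ?_, ?_⟩
    · simp only [Set.mem_prod]
      exact ⟨hb 0 0, hb 0 1, hb 1 0, hb 1 1⟩
    · ext i j; fin_cases i <;> fin_cases j <;> simp
  refine Set.Finite.subset (Set.Finite.image _ ?_) hsub
  exact (Set.finite_Icc _ _).prod ((Set.finite_Icc _ _).prod ((Set.finite_Icc _ _).prod (Set.finite_Icc _ _)))

lemma act_apply (g : Matrix (Fin 2) (Fin 2) ℤ) (x : Fin 2 → ℝ) (i : Fin 2) :
    act g x i = (g i 0 : ℝ) * x 0 + (g i 1 : ℝ) * x 1 := by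
  simp [act, Matrix.mulVec, dotProduct, Fin.sum_univ_two]

lemma finite_rat_bounded (A B : ℤ) : {r : ℚ | |r.num| ≤ A ∧ (r.den : ℤ) ≤ B}.Finite := by
  have hsub : {r : ℚ | |r.num| ≤ A ∧ (r.den : ℤ) ≤ B} ⊆
      (fun t : ℤ × ℤ => ((t.1 : ℚ) / (t.2 : ℚ))) '' (Set.Icc (-A) A ×ˢ Set.Icc 0 B) := by
    intro r hr
    obtain ⟨h1, h2⟩ := hr
    refine ⟨(r.num, (r.den : ℤ)), ?_, ?_⟩
    · rw [abs_le] at h1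
      constructor
      · rw [Set.mem_Icc]; exact ⟨h1.1, h1.2⟩
      · rw [Set.mem_Icc]; exact ⟨by positivity, h2⟩
    · simp [Rat.num_div_den]
  exact Set.Finite.subset (Set.Finite.image _ ((Set.finite_Icc _ _).prod (Set.finite_Icc _ _))) hsub

lemma key_construction (ξ : ℝ) (p q : ℤ) (hq : 0 < q) (hcop : IsCoprime p q)
    (happ : |ξ - (p:ℝ)/(q:ℝ)| < 1/(q:ℝ)^2) :
    ∃ p'' q'' : ℤ, q * p'' - p * q'' = -1 ∧ q ≤ q'' ∧ q'' < 2*q ∧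
      |(q:ℝ)*ξ - (p:ℝ)| ≤ 1/(q:ℝ) ∧ |(q'':ℝ)*ξ - (p'':ℝ)| ≤ 3/(q:ℝ) := by
  obtain ⟨u, v, huv⟩ := hcop
  refine ⟨-v + (1 - u / q) * p, u + (1 - u / q) * q, ?_, ?_, ?_, ?_, ?_⟩
  · linear_combination (-1 : ℤ) * huv
  · have h1 : u + (1 - u / q) * q = u % q + q := by rw [Int.emod_def]; ring
    rw [h1]; have := Int.emod_nonneg u (ne_of_gt hq); omega
  · have h1 : u + (1 - u / q) * q = u % q + q := by rw [Int.emod_def]; ring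
    rw [h1]; have := Int.emod_lt_of_pos u hq; omega
  · -- |qξ - p| ≤ 1/q
    have hQpos : (0:ℝ) < (q:ℝ) := by exact_mod_cast hq
    have h1 : (q:ℝ)*ξ - (p:ℝ) = (q:ℝ) * (ξ - (p:ℝ)/(q:ℝ)) := by field_simp
    rw [h1, abs_mul, abs_of_pos hQpos]
    calc (q:ℝ) * |ξ - (p:ℝ)/(q:ℝ)| ≤ (q:ℝ) * (1/(q:ℝ)^2) :=
          mul_le_mul_of_nonneg_left happ.le hQpos.le
      _ = 1/(q:ℝ) := by field_simp
  · -- second row estimate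
    set p'' : ℤ := -v + (1 - u / q) * p with hp''
    set q'' : ℤ := u + (1 - u / q) * q with hq''
    have hQpos : (0:ℝ) < (q:ℝ) := by exact_mod_cast hq
    have hdetid : q * p'' - p * q'' = -1 := by
      rw [hp'', hq'']; linear_combination (-1 : ℤ) * huv
    have hrange : q ≤ q'' ∧ q'' < 2*q := by
      have h1 : q'' = u % q + q := by rw [hq'', Int.emod_def]; ring
      have h2 := Int.emod_nonneg u (ne_of_gt hq)
      have h3 := Int.emod_lt_of_pos u hq
      omega
    have hQ'' : ((q:ℝ)) ≤ ((q'':ℝ)) := by exact_mod_cast hrange.1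
    have hQ''ub : ((q'':ℝ)) ≤ 2*(q:ℝ) := by exact_mod_cast hrange.2.le
    have hdr : (q:ℝ) * (p'':ℝ) - (p:ℝ) * (q'':ℝ) = -1 := by exact_mod_cast hdetid
    have hkey : (q'':ℝ)*ξ - (p'':ℝ) = (q'':ℝ)*(ξ - (p:ℝ)/(q:ℝ)) + 1/(q:ℝ) := by
      field_simp
      linear_combination -hdr
    rw [hkey]
    have hQ''pos : (0:ℝ) < (q'':ℝ) := lt_of_lt_of_le hQpos hQ''
    calc |(q'':ℝ)*(ξ - (p:ℝ)/(q:ℝ)) + 1/(q:ℝ)|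
        ≤ |(q'':ℝ)*(ξ - (p:ℝ)/(q:ℝ))| + |1/(q:ℝ)| := abs_add_le _ _
      _ = (q'':ℝ)*|ξ - (p:ℝ)/(q:ℝ)| + 1/(q:ℝ) := by
          rw [abs_mul, abs_of_pos hQ''pos, abs_of_pos (show (0:ℝ) < 1/(q:ℝ) by positivity)]
      _ ≤ 2*(q:ℝ)*(1/(q:ℝ)^2) + 1/(q:ℝ) := by
          have := mul_le_mul hQ''ub happ.le (abs_nonneg _) (by positivity)
          linarith
      _ = 3/(q:ℝ) := by field_simp; ring

open Filter Topology in
lemma upper_bd (x : Fin 2 → ℝ) (hx2 : x 1 ≠ 0) : ∀ μ ∈ muSet x 0, μ ≤ 1 := by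
  intro μ hμ
  by_contra hc
  push_neg at hc
  have hpos : (0:ℝ) < |x 1| := abs_pos.mpr hx2
  have hten : Tendsto (fun t : ℝ => 2 * t ^ (1 - μ)) atTop (𝓝 0) := by
    have h1 := tendsto_rpow_neg_atTop (show (0:ℝ) < μ - 1 by linarith)
    have h2 : (fun t : ℝ => t ^ (-(μ - 1))) = fun t : ℝ => t ^ (1 - μ) := by
      funext t; ring_nf
    rw [h2] at h1
    have := h1.const_mul (2:ℝ)
    simpa using this
  have hev : ∀ᶠ t in atTop, 2 * t ^ (1 - μ) < |x 1| :=
    hten.eventually_lt_const hpos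
  obtain ⟨N₀, hN₀⟩ := eventually_atTop.mp hev
  obtain ⟨γ, hγ, hγn⟩ := (hμ.diff (finite_mnorm_le (max N₀ 1))).nonempty
  obtain ⟨hdet, hb⟩ := hγ
  simp only [Set.mem_setOf_eq, not_le] at hγn
  set N := mnorm γ with hN
  have hN1 : (1:ℝ) ≤ N := le_of_lt (lt_of_le_of_lt (le_max_right N₀ 1) hγn)
  have hN0' : N₀ ≤ N := le_of_lt (lt_of_le_of_lt (le_max_left N₀ 1) hγn)
  have hNpos : (0:ℝ) < N := lt_of_lt_of_le one_pos hN1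
  set r0 : ℝ := (γ 0 0 : ℝ) * x 0 + (γ 0 1 : ℝ) * x 1 with hr0def
  set r1 : ℝ := (γ 1 0 : ℝ) * x 0 + (γ 1 1 : ℝ) * x 1 with hr1def
  have hvn : vnorm (act γ x - 0) = max |r0| |r1| := by
    simp [vnorm, act_apply, hr0def, hr1def]
  rw [hvn] at hb
  have hr0 : |r0| ≤ N ^ (-μ) := le_trans (le_max_left _ _) hb
  have hr1 : |r1| ≤ N ^ (-μ) := le_trans (le_max_right _ _) hb
  have hdet2 : (γ 0 0 : ℝ) * (γ 1 1 : ℝ) - (γ 0 1 : ℝ) * (γ 1 0 : ℝ) = 1 := by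
    rw [Matrix.det_fin_two] at hdet
    exact_mod_cast hdet
  have hx1eq : x 1 = (γ 0 0 : ℝ) * r1 - (γ 1 0 : ℝ) * r0 := by
    rw [hr0def, hr1def]
    linear_combination (-(x 1)) * hdet2
  have hrnn : (0:ℝ) ≤ N ^ (-μ) := Real.rpow_nonneg hNpos.le _
  have hbound : |x 1| ≤ 2 * (N * N ^ (-μ)) := by
    rw [hx1eq]
    calc |(γ 0 0 : ℝ) * r1 - (γ 1 0 : ℝ) * r0|
        ≤ |(γ 0 0 : ℝ) * r1| + |(γ 1 0 : ℝ) * r0| := abs_sub _ _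
      _ = |(γ 0 0 : ℝ)| * |r1| + |(γ 1 0 : ℝ)| * |r0| := by rw [abs_mul, abs_mul]
      _ ≤ N * N ^ (-μ) + N * N ^ (-μ) := by
          gcongr
          · exact abs_entry_le_mnorm γ 0 0
          · exact abs_entry_le_mnorm γ 1 0
      _ = 2 * (N * N ^ (-μ)) := by ring
  have hNmul : N * N ^ (-μ) = N ^ (1 - μ) := by
    rw [show (1:ℝ) - μ = 1 + (-μ) by ring, Real.rpow_add hNpos, Real.rpow_one]
  rw [hNmul] at hbound
  have := hN₀ N hN0'
  linarith

open Filter Topology in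
set_option maxHeartbeats 1000000 in
lemma lower_mem (x : Fin 2 → ℝ) (hx2 : x 1 ≠ 0) (hξ : Irrational (x 0 / x 1))
    {μ : ℝ} (hμ0 : 0 < μ) (hμ1 : μ < 1) : μ ∈ muSet x 0 := by
  classical
  set ξ : ℝ := x 0 / x 1 with hξdef
  have hx0 : x 0 = ξ * x 1 := by rw [hξdef, div_mul_cancel₀ _ hx2]
  set C : ℝ := 2 * |ξ| + 5 with hCdef
  have hC1 : (1:ℝ) ≤ C := by have := abs_nonneg ξ; simp only [hCdef]; linarith
  have hCpos : (0:ℝ) < C := lt_of_lt_of_le one_pos hC1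
  have hgrow := tendsto_rpow_atTop (show (0:ℝ) < 1 - μ by linarith)
  obtain ⟨Q₁, hQ₁⟩ := eventually_atTop.mp (hgrow.eventually_ge_atTop (C * (3 * |x 1| + 1)))
  set Q₀ : ℝ := max Q₁ 1 with hQ₀def
  have hQ₀1 : (1:ℝ) ≤ Q₀ := le_max_right _ _
  have hS := Real.infinite_rat_abs_sub_lt_one_div_den_sq_of_irrational hξ
  set T := {r : ℚ | |ξ - (r:ℝ)| < 1 / (r.den:ℝ)^2 ∧ Q₀ ≤ (r.den:ℝ)} with hTdef
  -- T is infinite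
  have hT : T.Infinite := by
    intro hfin
    apply hS
    have hsub : {q : ℚ | |ξ - (q:ℝ)| < 1 / (q.den:ℝ)^2} ⊆
        T ∪ {r : ℚ | |r.num| ≤ ⌈(|ξ|+1)*Q₀⌉ ∧ (r.den:ℤ) ≤ ⌈Q₀⌉} := by
      intro r hr
      by_cases hd : Q₀ ≤ (r.den:ℝ)
      · exact Or.inl ⟨hr, hd⟩
      · push_neg at hd
        right
        have hden1 : (1:ℝ) ≤ (r.den:ℝ) := by exact_mod_cast r.pos
        have hden2 : 1/(r.den:ℝ)^2 ≤ 1 := by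
          rw [div_le_one (by positivity)]; nlinarith
        have h1 : |ξ - (r:ℝ)| < 1 := lt_of_lt_of_le hr hden2
        have h2 : |(r:ℝ)| ≤ |ξ| + 1 := by
          have h3 := abs_sub_abs_le_abs_sub (r:ℝ) ξ
          rw [abs_sub_comm] at h3
          linarith
        have h3 : |(r.num:ℝ)| ≤ (|ξ|+1)*Q₀ := by
          have h4 : (r.num:ℝ) = (r:ℝ) * (r.den:ℝ) := by
            rw [Rat.cast_def]; field_simp
          rw [h4, abs_mul, abs_of_pos (by linarith : (0:ℝ) < (r.den:ℝ))]
          exact mul_le_mul h2 hd.le (by linarith) (by positivity)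
        have h5 : |((r.den:ℤ):ℝ)| ≤ Q₀ := by
          rw [abs_of_pos (by exact_mod_cast r.pos : (0:ℝ) < ((r.den:ℤ):ℝ))]
          push_cast
          linarith
        have m3 := int_abs_le_of_cast_abs_le h3
        have m5 := int_abs_le_of_cast_abs_le h5
        exact ⟨abs_le.mpr ⟨m3.1, m3.2⟩, m5.2⟩
    exact (hfin.union (finite_rat_bounded _ _)).subset hsub
  -- the construction, for each r ∈ T
  have hmain : ∀ r : ℚ, r ∈ T → ∃ γ : Matrix (Fin 2) (Fin 2) ℤ,
      (γ.det = 1 ∧ vnorm (act γ x - 0) ≤ mnorm γ ^ (-μ)) ∧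
      γ 0 0 = (r.den : ℤ) ∧ γ 0 1 = -r.num := by
    rintro r ⟨hrS, hrQ⟩
    have hq0 : (0:ℤ) < (r.den:ℤ) := by exact_mod_cast r.pos
    have hQpos : (0:ℝ) < ((r.den:ℤ):ℝ) := by exact_mod_cast hq0
    have hQ1 : (1:ℝ) ≤ ((r.den:ℤ):ℝ) := by exact_mod_cast hq0
    have hQQ₀ : Q₀ ≤ ((r.den:ℤ):ℝ) := by push_cast; exact hrQ
    have happ : |ξ - ((r.num:ℤ):ℝ)/((r.den:ℤ):ℝ)| < 1/((r.den:ℤ):ℝ)^2 := by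
      push_cast
      rwa [Rat.cast_def] at hrS
    have hcop : IsCoprime r.num ((r.den:ℤ)) := by
      rw [Int.isCoprime_iff_gcd_eq_one]
      show r.num.natAbs.gcd ((r.den:ℤ)).natAbs = 1
      simp only [Int.natAbs_natCast]
      exact r.reduced
    obtain ⟨p'', q'', hdetid, hge, hlt, he, he''⟩ :=
      key_construction ξ r.num (r.den:ℤ) hq0 hcop happ
    generalize hqdef : (r.den : ℤ) = q at *
    generalize hpdef : r.num = p at *
    refine ⟨!![q, -p; q'', -p''], ⟨?_, ?_⟩, rfl, rfl⟩
    · rw [Matrix.det_fin_two_of]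
      linear_combination -hdetid
    · -- norm bound
      set γ : Matrix (Fin 2) (Fin 2) ℤ := !![q, -p; q'', -p''] with hγdef
      have e00 : γ 0 0 = q := rfl
      have e01 : γ 0 1 = -p := rfl
      have e10 : γ 1 0 = q'' := rfl
      have e11 : γ 1 1 = -p'' := rfl
      have hQ'' : (q:ℝ) ≤ (q'':ℝ) := by exact_mod_cast hge
      have hQ''ub : (q'':ℝ) ≤ 2*(q:ℝ) := by exact_mod_cast hlt.le
      have hQ''pos : (0:ℝ) < (q'':ℝ) := lt_of_lt_of_le hQpos hQ''
      -- vnorm bound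
      have ha0 : act γ x 0 = x 1 * ((q:ℝ)*ξ - (p:ℝ)) := by
        rw [act_apply, e00, e01, hx0]
        push_cast
        ring
      have ha1 : act γ x 1 = x 1 * ((q'':ℝ)*ξ - (p'':ℝ)) := by
        rw [act_apply, e10, e11, hx0]
        push_cast
        ring
      have hvn : vnorm (act γ x - 0) ≤ 3*|x 1|/(q:ℝ) := by
        have h13 : (1:ℝ)/(q:ℝ) ≤ 3/(q:ℝ) := by gcongr; norm_num
        have h30 : |x 1| * |(q:ℝ)*ξ - (p:ℝ)| ≤ 3*|x 1|/(q:ℝ) := by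
          calc |x 1| * |(q:ℝ)*ξ - (p:ℝ)| ≤ |x 1| * (3/(q:ℝ)) :=
                mul_le_mul_of_nonneg_left (he.trans h13) (abs_nonneg (x 1))
            _ = 3*|x 1|/(q:ℝ) := by ring
        have h31 : |x 1| * |(q'':ℝ)*ξ - (p'':ℝ)| ≤ 3*|x 1|/(q:ℝ) := by
          calc |x 1| * |(q'':ℝ)*ξ - (p'':ℝ)| ≤ |x 1| * (3/(q:ℝ)) :=
                mul_le_mul_of_nonneg_left he'' (abs_nonneg (x 1))
            _ = 3*|x 1|/(q:ℝ) := by ring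
        simp only [vnorm, Pi.sub_apply, Pi.zero_apply, sub_zero, ha0, ha1, abs_mul]
        exact max_le h30 h31
      -- mnorm bounds
      have hp_bd : |(p:ℝ)| ≤ C*(q:ℝ) := by
        have h1 : |(p:ℝ)| ≤ |(q:ℝ)*ξ| + |(q:ℝ)*ξ - (p:ℝ)| := by
          have h2 : (q:ℝ)*ξ - ((q:ℝ)*ξ - (p:ℝ)) = (p:ℝ) := by ring
          calc |(p:ℝ)| = |(q:ℝ)*ξ - ((q:ℝ)*ξ - (p:ℝ))| := by rw [h2]
            _ ≤ |(q:ℝ)*ξ| + |(q:ℝ)*ξ - (p:ℝ)| := abs_sub _ _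
        have h2 : |(q:ℝ)*ξ| = (q:ℝ)*|ξ| := by rw [abs_mul, abs_of_pos hQpos]
        have h3 : (1:ℝ)/(q:ℝ) ≤ (q:ℝ) := by
          rw [div_le_iff₀ hQpos]; nlinarith
        rw [h2] at h1
        have hCq : (q:ℝ)*|ξ| + (q:ℝ) ≤ C*(q:ℝ) := by
          simp only [hCdef]; nlinarith [abs_nonneg ξ]
        linarith
      have hp''_bd : |(p'':ℝ)| ≤ C*(q:ℝ) := by
        have h1 : |(p'':ℝ)| ≤ |(q'':ℝ)*ξ| + |(q'':ℝ)*ξ - (p'':ℝ)| := by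
          have h2 : (q'':ℝ)*ξ - ((q'':ℝ)*ξ - (p'':ℝ)) = (p'':ℝ) := by ring
          calc |(p'':ℝ)| = |(q'':ℝ)*ξ - ((q'':ℝ)*ξ - (p'':ℝ))| := by rw [h2]
            _ ≤ |(q'':ℝ)*ξ| + |(q'':ℝ)*ξ - (p'':ℝ)| := abs_sub _ _
        have h2 : |(q'':ℝ)*ξ| ≤ 2*(q:ℝ)*|ξ| := by
          rw [abs_mul, abs_of_pos hQ''pos]
          exact mul_le_mul_of_nonneg_right hQ''ub (abs_nonneg ξ)
        have h3 : (3:ℝ)/(q:ℝ) ≤ 3*(q:ℝ) := by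
          rw [div_le_iff₀ hQpos]; nlinarith
        have hCq : 2*(q:ℝ)*|ξ| + 3*(q:ℝ) ≤ C*(q:ℝ) := by
          simp only [hCdef]; nlinarith [abs_nonneg ξ]
        linarith
      have hmn_ub : mnorm γ ≤ C*(q:ℝ) := by
        have hQle : |(q:ℝ)| ≤ C*(q:ℝ) := by
          rw [abs_of_pos hQpos]; nlinarith
        have hC2 : (2:ℝ) ≤ C := by simp only [hCdef]; linarith [abs_nonneg ξ]
        have hQ''le : |(q'':ℝ)| ≤ C*(q:ℝ) := by
          rw [abs_of_pos hQ''pos]; nlinarith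
        have hmeq : mnorm γ = max (max |(q:ℝ)| |((-p:ℤ):ℝ)|) (max |(q'':ℝ)| |((-p'':ℤ):ℝ)|) := by
          simp only [mnorm, e00, e01, e10, e11]
        rw [hmeq]
        push_cast
        rw [abs_neg, abs_neg]
        exact max_le (max_le hQle hp_bd) (max_le hQ''le hp''_bd)
      have hmn_lb : (q:ℝ) ≤ mnorm γ := by
        have hh := abs_entry_le_mnorm γ 0 0
        rw [e00, abs_of_pos hQpos] at hh
        exact hh
      have hmnpos : (0:ℝ) < mnorm γ := lt_of_lt_of_le hQpos hmn_lb
      -- rpow chain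
      have hKQ : C * (3*|x 1| + 1) ≤ (q:ℝ)^((1:ℝ)-μ) :=
        hQ₁ (q:ℝ) (le_trans (le_max_left Q₁ 1) hQQ₀)
      have hCμ : C^μ ≤ C := by
        calc C^μ ≤ C^(1:ℝ) := Real.rpow_le_rpow_of_exponent_le hC1 hμ1.le
          _ = C := Real.rpow_one C
      have hCμpos : (0:ℝ) < C^μ := Real.rpow_pos_of_pos hCpos μ
      have h3b : 3*|x 1| * C^μ ≤ (q:ℝ)^((1:ℝ)-μ) := by
        refine le_trans ?_ hKQ
        nlinarith [abs_nonneg (x 1)]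
      have hstep : 3*|x 1|/(q:ℝ) ≤ (C*(q:ℝ))^(-μ) := by
        have hexp : (C*(q:ℝ))^(-μ) = (q:ℝ)^((1:ℝ)-μ) / (C^μ * (q:ℝ)) := by
          rw [Real.mul_rpow hCpos.le hQpos.le, Real.rpow_neg hCpos.le,
            show (1:ℝ) - μ = 1 + -μ by ring, Real.rpow_add hQpos, Real.rpow_one,
            Real.rpow_neg hQpos.le]
          field_simp
        rw [hexp, div_le_div_iff₀ hQpos (by positivity)]
        nlinarith [mul_le_mul_of_nonneg_right h3b hQpos.le]
      have hstep2 : (C*(q:ℝ))^(-μ) ≤ (mnorm γ)^(-μ) :=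
        Real.rpow_le_rpow_of_nonpos hmnpos hmn_ub (by linarith)
      exact le_trans hvn (le_trans hstep hstep2)
  -- conclude infinitude
  have hTs : Infinite T := hT.to_subtype
  choose F hF1 hF2 hF3 using fun r : T => hmain r r.2
  apply Set.infinite_of_injective_forall_mem (f := F) ?_ hF1
  intro r r' h
  have hd : ((r:ℚ).den : ℤ) = ((r':ℚ).den : ℤ) := by rw [← hF2 r, ← hF2 r', h]
  have hn : -(r:ℚ).num = -(r':ℚ).num := by rw [← hF3 r, ← hF3 r', h]
  have : (r:ℚ) = (r':ℚ) := by
    refine Rat.ext (by omega) (by exact_mod_cast hd)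
  exact Subtype.ext this

/-- `μ(x, 0) = 1` for a point `x` with irrational slope. -/
theorem stmt7 (x : Fin 2 → ℝ) (hx2 : x 1 ≠ 0) (hξ : Irrational (x 0 / x 1)) :
    IsLUB (muSet x 0) 1 := by
  constructor
  · intro μ hμ
    exact upper_bd x hx2 μ hμ
  · intro b hb
    by_contra hc
    push_neg at hc
    have hmax0 : (0:ℝ) ≤ max b 0 := le_max_right b 0
    have hmax1 : max b 0 < 1 := max_lt hc one_pos
    have h0 : 0 < (max b 0 + 1)/2 := by linarith
    have h1 : (max b 0 + 1)/2 < 1 := by linarith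
    have hmem := lower_mem x hx2 hξ h0 h1
    have hle := hb hmem
    have hgt : b < (max b 0 + 1)/2 := by
      have := le_max_left b 0
      linarith
    linarith
end

section
/- Let x ∈ ℝ² have irrational slope ξ. Then the uniform exponent satisfies μ̂(x, 0) = 1/ω(ξ), where ω(ξ) is the irrationality measure exponent of ξ. -/
open Matrix MeasureTheory

namespace Stmt8

open Filter GenContFract

variable {ξ : ℝ}


open Filter GenContFract

variable {ξ : ℝ}

lemma notTerm (hirr : Irrational ξ) (n : ℕ) : ¬(GenContFract.of ξ).TerminatedAt n := by
  intro h
  have : (GenContFract.of ξ).Terminates := ⟨n, h⟩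
  obtain ⟨q, hq⟩ := (GenContFract.terminates_iff_rat ξ).mp this
  exact hirr ⟨q, hq.symm⟩

lemma one_le_q (ξ : ℝ) (k : ℕ) : 1 ≤ qden ξ k := by
  induction k with
  | zero => simp [qden, GenContFract.zeroth_den_eq_one]
  | succ k ih => exact ih.trans (GenContFract.of_den_mono)

lemma q_pos (ξ : ℝ) (k : ℕ) : 0 < qden ξ k := lt_of_lt_of_le one_pos (one_le_q ξ k)

lemma q_mono (ξ : ℝ) (k : ℕ) : qden ξ k ≤ qden ξ (k + 1) := GenContFract.of_den_mono

lemma fib_le_q (hirr : Irrational ξ) (k : ℕ) : (Nat.fib (k + 1) : ℝ) ≤ qden ξ k :=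
  GenContFract.succ_nth_fib_le_of_nth_den (Or.inr (notTerm hirr _))

lemma q_tendsto (hirr : Irrational ξ) : Tendsto (qden ξ) atTop atTop := by
  apply tendsto_atTop_mono' atTop (f₁ := fun k : ℕ => (k : ℝ))
  · filter_upwards [eventually_ge_atTop 4] with k hk
    have h1 : (k : ℕ) + 1 ≤ Nat.fib (k + 1) := Nat.le_fib_self (by omega)
    calc (k : ℝ) ≤ ((k + 1 : ℕ) : ℝ) := by push_cast; linarith
    _ ≤ (Nat.fib (k + 1) : ℝ) := by exact_mod_cast Nat.cast_le.mpr h1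
    _ ≤ qden ξ k := fib_le_q hirr k
  · exact tendsto_natCast_atTop_atTop

lemma approx (hirr : Irrational ξ) (k : ℕ) :
    |qden ξ k * ξ - pnum ξ k| ≤ 1 / qden ξ (k + 1) := by
  have h := GenContFract.abs_sub_convs_le (notTerm hirr k) (v := ξ)
  rw [GenContFract.conv_eq_num_div_den] at h
  have hq := q_pos ξ k
  have hq1 := q_pos ξ (k + 1)
  have heq : qden ξ k * |ξ - pnum ξ k / qden ξ k| = |qden ξ k * ξ - pnum ξ k| := by
    have h2 : qden ξ k * (ξ - pnum ξ k / qden ξ k) = qden ξ k * ξ - pnum ξ k := by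
      field_simp
    rw [← h2, abs_mul, abs_of_pos hq]
  rw [← heq]
  calc qden ξ k * |ξ - pnum ξ k / qden ξ k| ≤ qden ξ k * (1 / (qden ξ k * qden ξ (k+1))) :=
        mul_le_mul_of_nonneg_left h hq.le
    _ = 1 / qden ξ (k + 1) := by field_simp

lemma det_eq (hirr : Irrational ξ) (k : ℕ) :
    pnum ξ k * qden ξ (k + 1) - qden ξ k * pnum ξ (k + 1) = (-1) ^ (k + 1) := by
  have h := SimpContFract.determinant (s := ⟨GenContFract.of ξ, GenContFract.of_isSimpContFract ξ⟩)
    (n := k) (notTerm hirr k)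
  exact h

lemma exists_int (hirr : Irrational ξ) (k : ℕ) :
    (∃ z : ℤ, pnum ξ k = (z : ℝ)) ∧ ∃ z : ℤ, qden ξ k = (z : ℝ) := by
  induction k using Nat.strong_induction_on with
  | _ k ih =>
    match k with
    | 0 =>
      refine ⟨⟨⌊ξ⌋, ?_⟩, ⟨1, ?_⟩⟩
      · simp [pnum, GenContFract.zeroth_num_eq_h, GenContFract.of_h_eq_floor]
      · simp [qden, GenContFract.zeroth_den_eq_one]
    | 1 =>
      obtain ⟨gp, hgp⟩ : ∃ gp, (GenContFract.of ξ).s.get? 0 = some gp :=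
        Option.ne_none_iff_exists'.1 (notTerm hirr 0)
      have ha : gp.a = 1 := GenContFract.of_partNum_eq_one (partNum_eq_s_a hgp)
      obtain ⟨z, hz⟩ : ∃ z : ℤ, gp.b = (z : ℝ) :=
        GenContFract.exists_int_eq_of_partDen (partDen_eq_s_b hgp)
      refine ⟨⟨z * ⌊ξ⌋ + 1, ?_⟩, ⟨z, ?_⟩⟩
      · rw [pnum, GenContFract.first_num_eq hgp, ha, GenContFract.of_h_eq_floor, hz]
        push_cast; ring
      · rw [qden, GenContFract.first_den_eq hgp, hz]
    | (n + 2) =>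
      obtain ⟨gp, hgp⟩ : ∃ gp, (GenContFract.of ξ).s.get? (n + 1) = some gp :=
        Option.ne_none_iff_exists'.1 (notTerm hirr (n + 1))
      have ha : gp.a = 1 := GenContFract.of_partNum_eq_one (partNum_eq_s_a hgp)
      obtain ⟨z, hz⟩ : ∃ z : ℤ, gp.b = (z : ℝ) :=
        GenContFract.exists_int_eq_of_partDen (partDen_eq_s_b hgp)
      obtain ⟨⟨pa, hpa⟩, ⟨qa, hqa⟩⟩ := ih n (by omega)
      obtain ⟨⟨pb, hpb⟩, ⟨qb, hqb⟩⟩ := ih (n + 1) (by omega)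
      constructor
      · refine ⟨z * pb + pa, ?_⟩
        rw [pnum, GenContFract.nums_recurrence hgp rfl rfl, ha]
        rw [pnum] at hpa hpb
        rw [hpa, hpb, hz]; push_cast; ring
      · refine ⟨z * qb + qa, ?_⟩
        rw [qden, GenContFract.dens_recurrence hgp rfl rfl, ha]
        rw [qden] at hqa hqb
        rw [hqa, hqb, hz]; push_cast; ring




noncomputable def Pz (ξ : ℝ) (k : ℕ) : ℤ := round (pnum ξ k)
noncomputable def Qz (ξ : ℝ) (k : ℕ) : ℤ := round (qden ξ k)

lemma Pz_cast (hirr : Irrational ξ) (k : ℕ) : ((Pz ξ k : ℤ) : ℝ) = pnum ξ k := by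
  obtain ⟨z, hz⟩ := (exists_int hirr k).1
  rw [Pz, hz, round_intCast]

lemma Qz_cast (hirr : Irrational ξ) (k : ℕ) : ((Qz ξ k : ℤ) : ℝ) = qden ξ k := by
  obtain ⟨z, hz⟩ := (exists_int hirr k).2
  rw [Qz, hz, round_intCast]

lemma p_abs_le (hirr : Irrational ξ) (k : ℕ) :
    |pnum ξ k| ≤ (|ξ| + 1) * qden ξ k := by
  have h := approx hirr k
  have hq := q_pos ξ k
  have hq1 := one_le_q ξ (k + 1)
  have h1 : 1 / qden ξ (k + 1) ≤ 1 := by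
    rw [div_le_one (by linarith)]; exact hq1
  calc |pnum ξ k| = |qden ξ k * ξ - (qden ξ k * ξ - pnum ξ k)| := by ring_nf
    _ ≤ |qden ξ k * ξ| + |qden ξ k * ξ - pnum ξ k| := abs_sub _ _ |>.trans_eq rfl
    _ ≤ qden ξ k * |ξ| + 1 := by
        rw [abs_mul, abs_of_pos hq]
        exact add_le_add le_rfl (h.trans h1)
    _ ≤ (|ξ| + 1) * qden ξ k := by nlinarith [abs_nonneg ξ, one_le_q ξ k]

lemma act_row (g : Matrix (Fin 2) (Fin 2) ℤ) (x : Fin 2 → ℝ) (i : Fin 2) :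
    act g x i = (g i 0 : ℝ) * x 0 + (g i 1 : ℝ) * x 1 := by
  simp [act, Matrix.mulVec, dotProduct, Fin.sum_univ_two, Matrix.map_apply]

lemma vnorm_sub_zero (v : Fin 2 → ℝ) : vnorm (v - 0) = vnorm v := by simp [vnorm]

/-- The key family of matrices built from consecutive convergents. -/
lemma gamma_exists (x : Fin 2 → ℝ) (hx2 : x 1 ≠ 0) (hirr : Irrational (x 0 / x 1)) (k : ℕ) :
    ∃ γ : Matrix (Fin 2) (Fin 2) ℤ, γ.det = 1 ∧
      mnorm γ ≤ (|x 0 / x 1| + 1) * qden (x 0 / x 1) (k + 1) ∧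
      vnorm (act γ x - 0) ≤ |x 1| / qden (x 0 / x 1) (k + 1) := by
  set ξ := x 0 / x 1 with hξdef
  have hx0 : x 0 = ξ * x 1 := by rw [hξdef]; field_simp
  set ε : ℤ := (-1) ^ k with hε
  refine ⟨!![ε * Qz ξ (k+1), -(ε * Pz ξ (k+1)); Qz ξ k, -(Pz ξ k)], ?_, ?_, ?_⟩
  · rw [Matrix.det_fin_two_of]
    have hdet : Pz ξ k * Qz ξ (k+1) - Qz ξ k * Pz ξ (k+1) = (-1) ^ (k+1) := by
      have := det_eq hirr k
      have hc : ((Pz ξ k * Qz ξ (k+1) - Qz ξ k * Pz ξ (k+1) : ℤ) : ℝ) = ((((-1) ^ (k+1) : ℤ)) : ℝ) := by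
        push_cast
        rw [Pz_cast hirr, Qz_cast hirr, Pz_cast hirr, Qz_cast hirr]
        exact_mod_cast this
      exact_mod_cast hc
    have h2 : ε * (-1 : ℤ) ^ k = 1 := by
      rw [hε, ← pow_add]; exact Even.neg_one_pow ⟨k, rfl⟩
    linear_combination (-ε) * hdet + h2
  · have hε1 : |(ε : ℝ)| = 1 := by
      rw [hε, Int.cast_pow, Int.cast_neg, Int.cast_one, abs_pow, abs_neg, abs_one, one_pow]
    have habs : ∀ z : ℤ, |((ε * z : ℤ) : ℝ)| = |(z : ℝ)| := by
      intro z
      push_cast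
      rw [abs_mul, hε1, one_mul]
    have hC : (1 : ℝ) ≤ |ξ| + 1 := by linarith [abs_nonneg ξ]
    have hq1 := q_pos ξ (k + 1)
    have e00 : (!![ε * Qz ξ (k+1), -(ε * Pz ξ (k+1)); Qz ξ k, -(Pz ξ k)]) 0 0 = ε * Qz ξ (k+1) := rfl
    have e01 : (!![ε * Qz ξ (k+1), -(ε * Pz ξ (k+1)); Qz ξ k, -(Pz ξ k)]) 0 1 = -(ε * Pz ξ (k+1)) := rfl
    have e10 : (!![ε * Qz ξ (k+1), -(ε * Pz ξ (k+1)); Qz ξ k, -(Pz ξ k)]) 1 0 = Qz ξ k := rfl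
    have e11 : (!![ε * Qz ξ (k+1), -(ε * Pz ξ (k+1)); Qz ξ k, -(Pz ξ k)]) 1 1 = -(Pz ξ k) := rfl
    rw [mnorm, e00, e01, e10, e11]
    have h1 : |((ε * Qz ξ (k+1) : ℤ) : ℝ)| ≤ (|ξ| + 1) * qden ξ (k + 1) := by
      rw [habs, Qz_cast hirr, abs_of_pos hq1]
      nlinarith
    have h2 : |((-(ε * Pz ξ (k+1)) : ℤ) : ℝ)| ≤ (|ξ| + 1) * qden ξ (k + 1) := by
      rw [Int.cast_neg, abs_neg, habs, Pz_cast hirr]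
      exact p_abs_le hirr (k + 1)
    have h3 : |((Qz ξ k : ℤ) : ℝ)| ≤ (|ξ| + 1) * qden ξ (k + 1) := by
      rw [Qz_cast hirr, abs_of_pos (q_pos ξ k)]
      nlinarith [q_mono ξ k, q_pos ξ k]
    have h4 : |((-(Pz ξ k) : ℤ) : ℝ)| ≤ (|ξ| + 1) * qden ξ (k + 1) := by
      rw [Int.cast_neg, abs_neg, Pz_cast hirr]
      exact (p_abs_le hirr k).trans (by nlinarith [q_mono ξ k, abs_nonneg ξ])
    exact max_le (max_le h1 h2) (max_le h3 h4)
  · rw [vnorm_sub_zero, vnorm]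
    have hq1 := q_pos ξ (k + 1)
    have hrow : ∀ (P Q : ℤ) (e : ℤ), ((e * Q : ℤ) : ℝ) * x 0 + ((-(e * P) : ℤ) : ℝ) * x 1 =
        (e : ℝ) * (x 1 * ((Q : ℝ) * ξ - (P : ℝ))) := by
      intro P Q e
      push_cast
      rw [hx0]
      ring
    have bound : ∀ j : ℕ, k ≤ j → |x 1| * |qden ξ j * ξ - pnum ξ j| ≤ |x 1| / qden ξ (k + 1) := by
      intro j hj
      have h1 : |qden ξ j * ξ - pnum ξ j| ≤ 1 / qden ξ (k + 1) := by
        refine (approx hirr j).trans ?_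
        apply one_div_le_one_div_of_le hq1
        exact monotone_nat_of_le_succ (q_mono ξ) (by omega)
      calc |x 1| * |qden ξ j * ξ - pnum ξ j| ≤ |x 1| * (1 / qden ξ (k + 1)) :=
            mul_le_mul_of_nonneg_left h1 (abs_nonneg _)
        _ = |x 1| / qden ξ (k + 1) := by ring
    refine max_le ?_ ?_
    · rw [act_row]
      have e00 : (!![ε * Qz ξ (k+1), -(ε * Pz ξ (k+1)); Qz ξ k, -(Pz ξ k)]) 0 0 = ε * Qz ξ (k+1) := rfl
      have e01 : (!![ε * Qz ξ (k+1), -(ε * Pz ξ (k+1)); Qz ξ k, -(Pz ξ k)]) 0 1 = -(ε * Pz ξ (k+1)) := rfl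
      rw [e00, e01, hrow, abs_mul, abs_mul]
      have hε1 : |(ε : ℝ)| = 1 := by
        rw [hε, Int.cast_pow, Int.cast_neg, Int.cast_one, abs_pow, abs_neg, abs_one, one_pow]
      rw [hε1, one_mul, Qz_cast hirr, Pz_cast hirr]
      exact bound (k + 1) (by omega)
    · rw [act_row]
      have e10 : (!![ε * Qz ξ (k+1), -(ε * Pz ξ (k+1)); Qz ξ k, -(Pz ξ k)]) 1 0 = Qz ξ k := rfl
      have e11 : (!![ε * Qz ξ (k+1), -(ε * Pz ξ (k+1)); Qz ξ k, -(Pz ξ k)]) 1 1 = -(Pz ξ k) := rfl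
      rw [e10, e11]
      have : ((Qz ξ k : ℤ) : ℝ) * x 0 + ((-(Pz ξ k) : ℤ) : ℝ) * x 1 =
          x 1 * (qden ξ k * ξ - pnum ξ k) := by
        push_cast
        rw [Qz_cast hirr, Pz_cast hirr, hx0]
        ring
      rw [this, abs_mul]
      exact bound k le_rfl



/-- For any finite set of integer pairs, eventually the convergent pairs avoid it. -/
lemma eventually_pair_notin (hirr : Irrational ξ) {S : Set (ℤ × ℤ)} (hS : S.Finite) :
    ∀ᶠ k in atTop, ((Qz ξ k, -(Pz ξ k)) : ℤ × ℤ) ∉ S := by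
  obtain ⟨B, hB⟩ : ∃ B : ℝ, ∀ p ∈ S, |((p : ℤ × ℤ).1 : ℝ)| ≤ B := by
    obtain ⟨B, hB⟩ := (hS.image (fun p => |((p : ℤ × ℤ).1 : ℝ)|)).bddAbove
    exact ⟨B, fun p hp => hB (Set.mem_image_of_mem _ hp)⟩
  filter_upwards [(q_tendsto hirr).eventually_gt_atTop B] with k hk hmem
  have : |((Qz ξ k : ℤ) : ℝ)| ≤ B := hB _ hmem
  rw [Qz_cast hirr, abs_of_pos (q_pos ξ k)] at this
  linarith

lemma one_mem_omega (hirr : Irrational ξ) : (1 : ℝ) ∈ omegaSet ξ := by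
  rw [omegaSet, Set.mem_setOf_eq]
  intro hfin
  obtain ⟨k, hk⟩ := (eventually_pair_notin hirr hfin).exists
  apply hk
  show |((Qz ξ k : ℤ) : ℝ) * ξ + ((-(Pz ξ k) : ℤ) : ℝ)| ≤ |((Qz ξ k : ℤ) : ℝ)| ^ (-(1:ℝ))
  have h1 : |((Qz ξ k : ℤ) : ℝ) * ξ + ((-(Pz ξ k) : ℤ) : ℝ)| = |qden ξ k * ξ - pnum ξ k| := by
    rw [Int.cast_neg, Pz_cast hirr, Qz_cast hirr]; ring_nf
  have h2 : |((Qz ξ k : ℤ) : ℝ)| ^ (-(1:ℝ)) = 1 / qden ξ k := by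
    rw [Qz_cast hirr, abs_of_pos (q_pos ξ k), Real.rpow_neg_one, one_div]
  rw [h1, h2]
  exact (approx hirr k).trans (by
    apply one_div_le_one_div_of_le (q_pos ξ k) (q_mono ξ k))

/-- If `e` is not an approximation exponent, the denominators eventually grow slower than `q^e`. -/
lemma growth_of_notin (hirr : Irrational ξ) {e : ℝ} (hno : e ∉ omegaSet ξ) :
    ∀ᶠ k in atTop, qden ξ (k + 1) < qden ξ k ^ e := by
  rw [omegaSet, Set.mem_setOf_eq, Set.not_infinite] at hno
  filter_upwards [eventually_pair_notin hirr hno] with k hk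
  rw [not_le] at hk
  have h1 : |((Qz ξ k : ℤ) : ℝ) * ξ + ((-(Pz ξ k) : ℤ) : ℝ)| = |qden ξ k * ξ - pnum ξ k| := by
    rw [Int.cast_neg, Pz_cast hirr, Qz_cast hirr]; ring_nf
  rw [h1, Qz_cast hirr, abs_of_pos (q_pos ξ k)] at hk
  have h3 : qden ξ k ^ (-e) = (qden ξ k ^ e)⁻¹ := Real.rpow_neg (q_pos ξ k).le e
  have h5 : 0 < qden ξ k ^ e := Real.rpow_pos_of_pos (q_pos ξ k) e
  have h4 : 1 / (qden ξ k ^ e) < 1 / qden ξ (k+1) := by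
    calc 1 / (qden ξ k ^ e) = qden ξ k ^ (-e) := by rw [h3, one_div]
      _ < |qden ξ k * ξ - pnum ξ k| := hk
      _ ≤ 1 / qden ξ (k+1) := approx hirr k
  exact (one_div_lt_one_div h5 (q_pos ξ (k+1))).mp h4

lemma mem_muHat_nonpos (x : Fin 2 → ℝ) (hx2 : x 1 ≠ 0) (hirr : Irrational (x 0 / x 1))
    {μ : ℝ} (hμ : μ ≤ 0) : μ ∈ muHatSet x 0 := by
  set ξ := x 0 / x 1 with hξdef
  obtain ⟨k, hk⟩ := ((q_tendsto hirr).eventually_ge_atTop |x 1|).exists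
  have hk1 : |x 1| ≤ qden ξ (k + 1) := le_trans hk (q_mono ξ k)
  obtain ⟨γ, hdet, hm, hv⟩ := gamma_exists x hx2 hirr k
  refine ⟨max ((|ξ| + 1) * qden ξ (k + 1)) 1, fun T hT => ⟨γ, hdet, ?_, ?_⟩⟩
  · exact hm.trans (le_trans (le_max_left _ _) hT)
  · have hT1 : (1 : ℝ) ≤ T := le_trans (le_max_right _ _) hT
    have h1 : vnorm (act γ x - 0) ≤ 1 := by
      refine hv.trans ?_
      rw [div_le_one (q_pos ξ (k + 1))]
      exact hk1
    refine h1.trans ?_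
    exact Real.one_le_rpow hT1 (by linarith)

lemma mem_muHat_pos (x : Fin 2 → ℝ) (hx2 : x 1 ≠ 0) (hirr : Irrational (x 0 / x 1))
    {μ e : ℝ} (hμ : 0 < μ) (he : 1 ≤ e) (hμe : μ * e < 1)
    (hgrow : ∀ᶠ k in atTop, qden (x 0 / x 1) (k + 1) ≤ (qden (x 0 / x 1) k) ^ e) :
    μ ∈ muHatSet x 0 := by
  set ξ := x 0 / x 1 with hξdef
  set C : ℝ := |ξ| + 1 with hCdef
  have hC : (1 : ℝ) ≤ C := by simp only [hCdef]; linarith [abs_nonneg ξ]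
  have hC0 : (0 : ℝ) < C := by linarith
  have he0 : (0 : ℝ) < e := by linarith
  set η : ℝ := 1 / e - μ with hηdef
  have hη : 0 < η := by
    rw [hηdef, sub_pos, lt_div_iff₀ he0]
    exact hμe
  obtain ⟨K, hK⟩ := hgrow.exists_forall_of_atTop
  obtain ⟨T₂, hT₂⟩ :=
    ((tendsto_rpow_atTop hη).eventually_ge_atTop (|x 1| * C ^ (1 / e))).exists_forall_of_atTop
  refine ⟨max (max (C * qden ξ (K + 1)) 1) T₂, fun T hT => ?_⟩
  have hT1 : (1 : ℝ) ≤ T := le_trans (le_trans (le_max_right _ _) (le_max_left _ _)) hT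
  have hT0 : (0 : ℝ) < T := by linarith
  have hTK : C * qden ξ (K + 1) ≤ T :=
    le_trans (le_trans (le_max_left _ _) (le_max_left _ _)) hT
  have hTT₂ : |x 1| * C ^ (1 / e) ≤ T ^ η := hT₂ T (le_trans (le_max_right _ _) hT)
  -- find the largest good index
  have hex : ∃ n : ℕ, T < C * qden ξ (K + n + 1) := by
    obtain ⟨N, hN⟩ := ((q_tendsto hirr).eventually_gt_atTop T).exists_forall_of_atTop
    refine ⟨N, ?_⟩
    have h1 : T < qden ξ (K + N + 1) := hN _ (by omega)
    nlinarith [q_pos ξ (K + N + 1)]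
  set j := Nat.find hex with hjdef
  have hj0 : j ≠ 0 := by
    intro h0
    have := Nat.find_spec hex
    rw [← hjdef, h0] at this
    norm_num at this
    linarith [hTK, this]
  set k := K + (j - 1) with hkdef
  have hk1 : C * qden ξ (k + 1) ≤ T := by
    have := Nat.find_min hex (m := j - 1) (by omega)
    rw [not_lt] at this
    exact this
  have hk2 : T < C * qden ξ (k + 2) := by
    have := Nat.find_spec hex
    rw [← hjdef] at this
    have hkj : K + j + 1 = k + 2 := by omega
    rwa [← hkj]
  obtain ⟨γ, hdet, hm, hv⟩ := gamma_exists x hx2 hirr k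
  refine ⟨γ, hdet, hm.trans hk1, ?_⟩
  have hgr : qden ξ (k + 2) ≤ qden ξ (k + 1) ^ e := hK (k + 1) (by omega)
  set Q := qden ξ (k + 1) with hQ
  have hQ0 : 0 < Q := q_pos ξ (k + 1)
  have hTQ : T < C * Q ^ e :=
    lt_of_lt_of_le hk2 (mul_le_mul_of_nonneg_left hgr hC0.le)
  have h1 : T / C < Q ^ e := (div_lt_iff₀ hC0).mpr (by linarith [hTQ])
  have hQe : (Q ^ e) ^ (1 / e) = Q := by
    rw [← Real.rpow_mul hQ0.le, mul_one_div, div_self he0.ne', Real.rpow_one]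
  have h2 : (T / C) ^ (1 / e) < Q := by
    have h := Real.rpow_lt_rpow (by positivity) h1 (by positivity : (0:ℝ) < 1 / e)
    rwa [hQe] at h
  refine hv.trans ?_
  have hTC0 : 0 < (T / C) ^ (1 / e) := Real.rpow_pos_of_pos (by positivity) _
  have h4 : |x 1| / Q ≤ |x 1| / (T / C) ^ (1 / e) := by
    have := abs_nonneg (x 1)
    gcongr
  refine h4.trans ?_
  have h5 : (T / C) ^ ((1:ℝ) / e) = T ^ ((1:ℝ) / e) / C ^ ((1:ℝ) / e) :=
    Real.div_rpow hT0.le hC0.le _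
  have hTe0 : 0 < T ^ ((1:ℝ) / e) := Real.rpow_pos_of_pos hT0 _
  rw [h5, div_div_eq_mul_div, div_le_iff₀ hTe0]
  have h6 : T ^ (-μ) * T ^ ((1:ℝ) / e) = T ^ η := by
    rw [← Real.rpow_add hT0, hηdef]
    ring_nf
  rw [h6]
  calc |x 1| * C ^ ((1:ℝ) / e) ≤ T ^ η := hTT₂
    _ = T ^ η := rfl
/-- An infinite solution set contains solutions with arbitrarily large `|v|`. -/
lemma exists_large_sol (hirr : Irrational ξ) {e : ℝ} (he : 0 < e)
    (hinf : {p : ℤ × ℤ | |(p.1 : ℝ) * ξ + (p.2 : ℝ)| ≤ |(p.1 : ℝ)| ^ (-e)}.Infinite)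
    (R : ℝ) :
    ∃ p : ℤ × ℤ, |(p.1 : ℝ) * ξ + (p.2 : ℝ)| ≤ |(p.1 : ℝ)| ^ (-e) ∧ R ≤ |(p.1 : ℝ)| := by
  by_contra hcon
  push_neg at hcon
  apply hinf
  set S := {p : ℤ × ℤ | |(p.1 : ℝ) * ξ + (p.2 : ℝ)| ≤ |(p.1 : ℝ)| ^ (-e)} with hS
  have hsub : S ⊆ (Set.Icc (-⌈|R|⌉) ⌈|R|⌉) ×ˢ
      (Set.Icc (-⌈|R| * |ξ| + 2⌉) ⌈|R| * |ξ| + 2⌉) := by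
    rintro ⟨v, u⟩ hp
    have hmem : |(v : ℝ) * ξ + (u : ℝ)| ≤ |(v : ℝ)| ^ (-e) := hp
    have hv : |(v : ℝ)| < R := hcon (v, u) hp
    have hvR : |(v : ℝ)| ≤ |R| := le_trans hv.le (le_abs_self R)
    have hpow : |(v : ℝ)| ^ (-e) ≤ 1 := by
      rcases eq_or_ne v 0 with h0 | h0
      · rw [h0]
        simp only [Int.cast_zero, abs_zero]
        rw [Real.zero_rpow (by linarith : -e ≠ 0)]
        norm_num
      · have h1 : (1 : ℝ) ≤ |(v : ℝ)| := by
          have : (1 : ℤ) ≤ |v| := Int.one_le_abs h0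
          calc (1:ℝ) ≤ ((|v| : ℤ) : ℝ) := by exact_mod_cast this
            _ = |(v : ℝ)| := by push_cast; rfl
        exact Real.rpow_le_one_of_one_le_of_nonpos h1 (by linarith)
    have hu : |(u : ℝ)| ≤ |R| * |ξ| + 2 := by
      have h2 : |(u : ℝ)| ≤ |(v : ℝ) * ξ + (u : ℝ)| + |(v : ℝ) * ξ| := by
        calc |(u : ℝ)| = |((v : ℝ) * ξ + (u : ℝ)) - (v : ℝ) * ξ| := by ring_nf
          _ ≤ |(v : ℝ) * ξ + (u : ℝ)| + |(v : ℝ) * ξ| :=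
              abs_sub ((v : ℝ) * ξ + (u : ℝ)) ((v : ℝ) * ξ)
      have h4 : |(v : ℝ) * ξ| ≤ |R| * |ξ| := by
        rw [abs_mul]
        exact mul_le_mul_of_nonneg_right hvR (abs_nonneg ξ)
      linarith [hmem.trans hpow]
    have hvz : |v| ≤ ⌈|R|⌉ := by
      have h7 : ((|v| : ℤ) : ℝ) ≤ ((⌈|R|⌉ : ℤ) : ℝ) := by
        calc ((|v| : ℤ) : ℝ) = |(v : ℝ)| := by push_cast; rfl
          _ ≤ |R| := hvR
          _ ≤ (⌈|R|⌉ : ℝ) := Int.le_ceil _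
      exact_mod_cast h7
    have huz : |u| ≤ ⌈|R| * |ξ| + 2⌉ := by
      have h7 : ((|u| : ℤ) : ℝ) ≤ ((⌈|R| * |ξ| + 2⌉ : ℤ) : ℝ) := by
        calc ((|u| : ℤ) : ℝ) = |(u : ℝ)| := by push_cast; rfl
          _ ≤ |R| * |ξ| + 2 := hu
          _ ≤ _ := Int.le_ceil _
      exact_mod_cast h7
    exact Set.mem_prod.mpr ⟨Set.mem_Icc.mpr (abs_le.mp hvz), Set.mem_Icc.mpr (abs_le.mp huz)⟩
  exact Set.Finite.subset ((Set.finite_Icc _ _).prod (Set.finite_Icc _ _)) hsub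
lemma not_mem_muHat (x : Fin 2 → ℝ) (hx2 : x 1 ≠ 0) (hirr : Irrational (x 0 / x 1))
    {μ e : ℝ} (hμ : 0 < μ) (hμe : 1 < μ * e) (he : e ∈ omegaSet (x 0 / x 1)) :
    μ ∉ muHatSet x 0 := by
  set ξ := x 0 / x 1 with hξdef
  have hx0 : x 0 = ξ * x 1 := by rw [hξdef]; field_simp
  rintro ⟨T₀, hT₀⟩
  have he0 : 0 < e := by nlinarith
  set c := |x 1| with hcdef
  have hc0 : 0 < c := abs_pos.mpr hx2
  have hev1 : ∀ᶠ r in atTop, max T₀ 1 * r ^ (-e) ≤ 1 / 8 := by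
    have h0 : Filter.Tendsto (fun r : ℝ => max T₀ 1 * r ^ (-e)) atTop (nhds 0) := by
      simpa using (tendsto_rpow_neg_atTop he0).const_mul (max T₀ 1)
    exact (h0.eventually_lt_const (by norm_num : (0:ℝ) < 1 / 8)).mono fun r hr => hr.le
  have hev2 : ∀ᶠ r in atTop, (4 * r / c) ^ (1 / μ) * r ^ (-e) ≤ 1 / 8 := by
    have hexp : 0 < e - 1 / μ := by
      rw [sub_pos, div_lt_iff₀ hμ]
      linarith [mul_comm μ e]
    have h0 : Filter.Tendsto (fun r : ℝ => (4 / c) ^ (1 / μ) * r ^ (1 / μ - e)) atTop (nhds 0) := by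
      have := (tendsto_rpow_neg_atTop hexp).const_mul ((4 / c) ^ (1 / μ))
      simp only [mul_zero] at this
      convert this using 2 with r
      rw [neg_sub]
    have h1 : Filter.Tendsto (fun r : ℝ => (4 * r / c) ^ (1 / μ) * r ^ (-e)) atTop (nhds 0) := by
      apply h0.congr'
      filter_upwards [eventually_gt_atTop (0:ℝ)] with r hr
      rw [show 4 * r / c = 4 / c * r by ring, Real.mul_rpow (by positivity) hr.le,
        mul_assoc, ← Real.rpow_add hr]
      ring_nf
    exact (h1.eventually_lt_const (by norm_num : (0:ℝ) < 1 / 8)).mono fun r hr => hr.le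
  obtain ⟨R₀, hR₀⟩ := (hev1.and hev2).exists_forall_of_atTop
  obtain ⟨⟨v, u⟩, hsol, hvlarge⟩ := exists_large_sol hirr he0 he (max R₀ 1)
  set r := |(v : ℝ)| with hrdef
  have hr1 : (1 : ℝ) ≤ r := le_trans (le_max_right _ _) hvlarge
  have hrR : R₀ ≤ r := le_trans (le_max_left _ _) hvlarge
  have hv0 : v ≠ 0 := by
    intro h0
    rw [h0] at hrdef
    simp at hrdef
    linarith [hrdef ▸ hr1]
  have hδ : |(v : ℝ) * ξ + (u : ℝ)| ≤ r ^ (-e) := hsol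
  set T := max (max T₀ 1) ((4 * r / c) ^ (1 / μ)) with hTdef
  have hT1 : (1 : ℝ) ≤ T := le_trans (le_max_right _ _) (le_max_left _ _)
  have hTpos : (0 : ℝ) < T := by linarith
  obtain ⟨γ, hdet, hmn, hvn⟩ := hT₀ T (le_trans (le_max_left _ _) (le_max_left _ _))
  rw [vnorm_sub_zero] at hvn
  have hrow : ∀ i : Fin 2, |(γ i 0 : ℝ) * ξ + (γ i 1 : ℝ)| ≤ T ^ (-μ) / c := by
    intro i
    have h1 : |act γ x i| ≤ T ^ (-μ) := by
      refine le_trans ?_ hvn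
      fin_cases i
      · exact le_max_left _ _
      · exact le_max_right _ _
    rw [act_row, hx0] at h1
    have h2 : (γ i 0 : ℝ) * (ξ * x 1) + (γ i 1 : ℝ) * x 1 =
        x 1 * ((γ i 0 : ℝ) * ξ + (γ i 1 : ℝ)) := by ring
    rw [h2, abs_mul] at h1
    rw [le_div_iff₀ hc0]
    calc |(γ i 0 : ℝ) * ξ + (γ i 1 : ℝ)| * c = |x 1| * |(γ i 0 : ℝ) * ξ + (γ i 1 : ℝ)| := by
          rw [hcdef]; ring
      _ ≤ T ^ (-μ) := h1
  have hentry : ∀ i j : Fin 2, |(γ i j : ℝ)| ≤ T := by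
    intro i j
    refine le_trans ?_ hmn
    show |(γ i j : ℝ)| ≤ max (max |(γ 0 0 : ℝ)| |(γ 0 1 : ℝ)|) (max |(γ 1 0 : ℝ)| |(γ 1 1 : ℝ)|)
    fin_cases i <;> fin_cases j
    · exact le_trans (le_max_left _ _) (le_max_left _ _)
    · exact le_trans (le_max_right _ _) (le_max_left _ _)
    · exact le_trans (le_max_left _ _) (le_max_right _ _)
    · exact le_trans (le_max_right _ _) (le_max_right _ _)
  have hTr : T * r ^ (-e) ≤ 1 / 8 := by
    have hrpow : (0 : ℝ) ≤ r ^ (-e) := Real.rpow_nonneg (by linarith) _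
    have hmax : T * r ^ (-e) =
        max (max T₀ 1 * r ^ (-e)) ((4 * r / c) ^ (1 / μ) * r ^ (-e)) := by
      rw [hTdef, max_mul_of_nonneg _ _ hrpow]
    rw [hmax]
    exact max_le (hR₀ r hrR).1 (hR₀ r hrR).2
  have hTmu : r * (T ^ (-μ) / c) ≤ 1 / 4 := by
    have h1 : 4 * r / c ≤ T ^ μ := by
      have h2 : ((4 * r / c) ^ (1 / μ)) ^ μ ≤ T ^ μ :=
        Real.rpow_le_rpow (Real.rpow_nonneg (by positivity) _) (le_max_right _ _) hμ.le
      rwa [← Real.rpow_mul (by positivity), one_div, inv_mul_cancel₀ hμ.ne', Real.rpow_one] at h2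
    have hTμpos : (0 : ℝ) < T ^ μ := Real.rpow_pos_of_pos hTpos _
    have h5 : 4 * r ≤ T ^ μ * c := (div_le_iff₀ hc0).mp h1
    have h6 : r * (T ^ (-μ) / c) = r / (T ^ μ * c) := by
      rw [Real.rpow_neg hTpos.le]
      field_simp
    rw [h6, div_le_iff₀ (by positivity)]
    linarith
  have hkill : ∀ A B : ℤ, |(A : ℝ) * ξ + (B : ℝ)| ≤ T ^ (-μ) / c → |(A : ℝ)| ≤ T →
      v * B - A * u = 0 := by
    intro A B hAB hA
    have hcast : ((v * B - A * u : ℤ) : ℝ) =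
        (v : ℝ) * ((A : ℝ) * ξ + (B : ℝ)) - (A : ℝ) * ((v : ℝ) * ξ + (u : ℝ)) := by
      push_cast; ring
    have habs : |((v * B - A * u : ℤ) : ℝ)| ≤ r * (T ^ (-μ) / c) + T * r ^ (-e) := by
      rw [hcast]
      calc |(v : ℝ) * ((A : ℝ) * ξ + (B : ℝ)) - (A : ℝ) * ((v : ℝ) * ξ + (u : ℝ))|
          ≤ |(v : ℝ) * ((A : ℝ) * ξ + (B : ℝ))| + |(A : ℝ) * ((v : ℝ) * ξ + (u : ℝ))| :=
            abs_sub _ _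
        _ = r * |(A : ℝ) * ξ + (B : ℝ)| + |(A : ℝ)| * |(v : ℝ) * ξ + (u : ℝ)| := by
            rw [abs_mul, abs_mul, hrdef]
        _ ≤ r * (T ^ (-μ) / c) + T * r ^ (-e) := by
            refine add_le_add (mul_le_mul_of_nonneg_left hAB (by linarith)) ?_
            exact mul_le_mul hA hδ (abs_nonneg _) (by linarith)
    have hlt : |((v * B - A * u : ℤ) : ℝ)| < 1 := by linarith [habs, hTmu, hTr]
    have hzlt : |v * B - A * u| < 1 := by
      have : ((|v * B - A * u| : ℤ) : ℝ) < 1 := by rwa [Int.cast_abs]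
      exact_mod_cast this
    exact Int.abs_lt_one_iff.mp hzlt
  have hb := hkill (γ 0 0) (γ 0 1) (hrow 0) (hentry 0 0)
  have hd := hkill (γ 1 0) (γ 1 1) (hrow 1) (hentry 1 0)
  have hdet2 : γ 0 0 * γ 1 1 - γ 0 1 * γ 1 0 = 1 := by
    rw [Matrix.det_fin_two] at hdet
    exact hdet
  have hu : u = 0 := by
    linear_combination (-(γ 1 1 : ℤ)) * hb + (γ 0 1 : ℤ) * hd - u * hdet2
  rw [hu] at hb hd
  simp only [mul_zero, sub_zero] at hb hd
  have hb0 : γ 0 1 = 0 := by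
    rcases mul_eq_zero.mp hb with h | h
    · exact absurd h hv0
    · exact h
  have hd0 : γ 1 1 = 0 := by
    rcases mul_eq_zero.mp hd with h | h
    · exact absurd h hv0
    · exact h
  rw [hb0, hd0] at hdet2
  simp at hdet2

end Stmt8

/-- `μ̂(x, 0) = 1 / ω(ξ)` for a point `x` with irrational slope `ξ`,
with the convention `1/∞ = 0` when `ω(ξ) = ∞`. -/
theorem stmt8 (x : Fin 2 → ℝ) (hx2 : x 1 ≠ 0) (hξ : Irrational (x 0 / x 1)) :
    (∀ w : ℝ, IsLUB (omegaSet (x 0 / x 1)) w → IsLUB (muHatSet x 0) (1 / w)) ∧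
      (¬ BddAbove (omegaSet (x 0 / x 1)) → IsLUB (muHatSet x 0) 0) := by
  constructor
  · intro w hw
    have h1w : 1 ≤ w := hw.1 (Stmt8.one_mem_omega hξ)
    have hw0 : 0 < w := by linarith
    constructor
    · intro μ hμmem
      by_contra hgt
      push_neg at hgt
      have hμ0 : 0 < μ := lt_trans (by positivity) hgt
      have h2 : 1 / μ < w := by
        rw [div_lt_iff₀ hμ0]
        rw [div_lt_iff₀ hw0] at hgt
        nlinarith
      obtain ⟨e, heS, hegt⟩ : ∃ e ∈ omegaSet (x 0 / x 1), 1 / μ < e := by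
        by_contra hno
        push_neg at hno
        exact absurd (hw.2 hno) (not_le.mpr h2)
      have hμe : 1 < μ * e := by
        rw [div_lt_iff₀ hμ0] at hegt
        nlinarith
      exact absurd hμmem (Stmt8.not_mem_muHat x hx2 hξ hμ0 hμe heS)
    · intro b hb
      by_contra hlt
      push_neg at hlt
      set μ := (b + 1 / w) / 2 with hμdef
      have hμlt : μ < 1 / w := by rw [hμdef]; linarith
      have hbμ : b < μ := by rw [hμdef]; linarith
      have hmem : μ ∈ muHatSet x 0 := by
        rcases le_or_gt μ 0 with h0 | h0
        · exact Stmt8.mem_muHat_nonpos x hx2 hξ h0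
        · set e := (w + 1 / μ) / 2 with hedef
          have hinv : w < 1 / μ := by
            rw [lt_div_iff₀ h0]
            rw [lt_div_iff₀ hw0] at hμlt
            nlinarith
          have hew : w < e := by rw [hedef]; linarith
          have heμ : e < 1 / μ := by rw [hedef]; linarith
          have hμe : μ * e < 1 := by
            rw [lt_div_iff₀ h0] at heμ
            nlinarith
          have he1 : 1 ≤ e := by linarith
          have hnotin : e ∉ omegaSet (x 0 / x 1) := fun hin =>
            absurd (hw.1 hin) (not_le.mpr hew)
          have hgrow := (Stmt8.growth_of_notin hξ hnotin).mono fun k hk => hk.le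
          exact Stmt8.mem_muHat_pos x hx2 hξ h0 he1 hμe hgrow
      exact absurd (hb hmem) (not_le.mpr hbμ)
  · intro hnb
    constructor
    · intro μ hμmem
      by_contra h
      push_neg at h
      obtain ⟨e, heS, hegt⟩ : ∃ e ∈ omegaSet (x 0 / x 1), 1 / μ < e := by
        obtain ⟨e, heS, hegt⟩ := not_bddAbove_iff.mp hnb (1 / μ)
        exact ⟨e, heS, hegt⟩
      have hμe : 1 < μ * e := by
        rw [div_lt_iff₀ h] at hegt
        nlinarith
      exact absurd hμmem (Stmt8.not_mem_muHat x hx2 hξ h hμe heS)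
    · intro b hb
      exact hb (Stmt8.mem_muHat_nonpos x hx2 hξ le_rfl)
end

section
/- Let k and ℓ be integers with k ≥ 1, N = [[t,t'],[s,s']] ∈ SL(2,ℤ), U = [[1,1],[0,1]], and M_k the k-th convergent matrix of an irrational ξ with |ξ| < 1. Put γ = N U^ℓ M_k. Then |ℓ q_{k−1} + (−1)^{k−1} q_k| · |s| − |s'| q_{k−1} ≤ |γ| ≤ |ℓ| |N| q_{k−1} + 2|N| q_k. -/
open Matrix MeasureTheory

/-- `mnorm` of an explicit `2 × 2` matrix. -/
lemma mnorm_fin (a b c d : ℤ) :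
    mnorm !![a, b; c, d] = max (max |(a:ℝ)| |(b:ℝ)|) (max |(c:ℝ)| |(d:ℝ)|) := by
  simp [mnorm]

/-- Entry-wise upper bound helper. -/
lemma entry_bound (a b x y L nN q1 q0 : ℝ) (ha : |a| ≤ nN) (hb : |b| ≤ nN) (hx : |x| ≤ q1)
    (hy : |y| ≤ q0) (hmon : q0 ≤ q1) :
    |a*x + (a*L + b)*y| ≤ |L| * nN * q0 + 2 * nN * q1 := by
  have hn : 0 ≤ nN := le_trans (abs_nonneg a) ha
  have h1 : |a*x + (a*L + b)*y| ≤ |a| * |x| + |a| * |L| * |y| + |b| * |y| := by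
    calc |a*x + (a*L + b)*y| ≤ |a*x| + |(a*L + b)*y| := abs_add_le _ _
      _ ≤ |a*x| + (|a*L| + |b|) * |y| := by
          rw [abs_mul (a*L+b)]
          gcongr
          exact abs_add_le _ _
      _ = |a| * |x| + |a| * |L| * |y| + |b| * |y| := by rw [abs_mul, abs_mul]; ring
  have h0 : 0 ≤ |y| := abs_nonneg y
  have h0x : 0 ≤ |x| := abs_nonneg x
  have e1 : |a| * |x| ≤ nN * q1 := mul_le_mul ha hx h0x hn
  have e2 : |b| * |y| ≤ nN * q0 := mul_le_mul hb hy h0 hn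
  have e3 : |a| * |L| * |y| ≤ nN * |L| * q0 :=
    mul_le_mul (mul_le_mul ha le_rfl (abs_nonneg L) hn) hy h0
      (mul_nonneg hn (abs_nonneg L))
  have e4 : nN * q0 ≤ nN * q1 := mul_le_mul_of_nonneg_left hmon hn
  linarith

/-- Lower bound helper: `|e*|s| - |s'|*q0 ≤ |s*(e) + s'*q0|`-type estimate. -/
lemma lower_bound_helper (S S' E Q : ℝ) (hQ : 0 ≤ Q) :
    |E| * |S| - |S'| * Q ≤ |S * E + S' * Q| := by
  have h2 := abs_sub_abs_le_abs_sub (S * E) (-(S' * Q))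
  rw [sub_neg_eq_add, abs_neg, abs_mul, abs_mul, abs_of_nonneg hQ] at h2
  linarith [h2, mul_comm |S| |E|]

/-- norm estimates for `γ = N U^ℓ M_k` where `M_k` is the `k`-th convergent
matrix of `ξ` (with `|ξ| < 1`), `U^ℓ = [[1, ℓ], [0, 1]]` and `N = [[t, t'], [s, s']] ∈ SL(2, ℤ)`. -/
theorem stmt11 (ξ : ℝ) (hξ : Irrational ξ) (hξ1 : |ξ| < 1)
    (p q : ℕ → ℤ) (hp : ∀ k, (p k : ℝ) = pnum ξ k) (hq : ∀ k, (q k : ℝ) = qden ξ k)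
    (k : ℕ) (hk : 1 ≤ k) (ℓ : ℤ) (t t' s s' : ℤ) (hN : t * s' - t' * s = 1) :
    ∀ γ : Matrix (Fin 2) (Fin 2) ℤ,
      γ = !![t, t'; s, s'] * !![1, ℓ; 0, 1] *
        (if Even k then !![q k, -(p k); -(q (k - 1)), p (k - 1)]
          else !![q k, -(p k); q (k - 1), -(p (k - 1))]) →
      |(ℓ : ℝ) * (q (k - 1) : ℝ) + (-1 : ℝ) ^ (k - 1) * (q k : ℝ)| * |(s : ℝ)|
          - |(s' : ℝ)| * (q (k - 1) : ℝ) ≤ mnorm γ ∧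
        mnorm γ ≤ |(ℓ : ℝ)| * mnorm !![t, t'; s, s'] * (q (k - 1) : ℝ)
          + 2 * mnorm !![t, t'; s, s'] * (q k : ℝ) := by
  -- basic continued-fraction facts
  have hnt : ∀ m, ¬(GenContFract.of ξ).TerminatedAt m := by
    intro m h
    obtain ⟨r, hr⟩ := GenContFract.exists_rat_eq_of_terminates ⟨m, h⟩
    exact hξ ⟨r, hr.symm⟩
  have hq1 : ∀ m, (1:ℝ) ≤ (q m : ℝ) := by
    intro m
    have h := GenContFract.succ_nth_fib_le_of_nth_den (v := ξ) (n := m) (K := ℝ)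
      (Or.inr (hnt (m-1)))
    rw [hq m]
    calc (1:ℝ) ≤ (Nat.fib (m+1) : ℝ) := by exact_mod_cast Nat.fib_pos.mpr m.succ_pos
      _ ≤ _ := h
  have hpq : ∀ n, |(p n : ℝ)| ≤ (q n : ℝ) := by
    intro n
    have habs := GenContFract.abs_sub_convs_le (v := ξ) (n := n) (hnt n)
    have hc : (GenContFract.of ξ).convs n = (p n : ℝ) / (q n : ℝ) := by
      rw [hp, hq]; rfl
    rw [hc, show (GenContFract.of ξ).dens n = ((q n : ℤ) : ℝ) from (hq n).symm,
      show (GenContFract.of ξ).dens (n+1) = ((q (n+1) : ℤ) : ℝ) from (hq (n+1)).symm] at habs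
    have hq0 : (0:ℝ) < (q n : ℝ) := lt_of_lt_of_le one_pos (hq1 n)
    have hq0' : (0:ℝ) < (q (n+1) : ℝ) := lt_of_lt_of_le one_pos (hq1 (n+1))
    have key : |ξ * (q n : ℝ) - (p n : ℝ)| ≤ 1 := by
      have h2 : |ξ - (p n : ℝ) / (q n : ℝ)| * (q n : ℝ)
          ≤ (1 / ((q n:ℝ) * (q (n+1):ℝ))) * (q n : ℝ) :=
        mul_le_mul_of_nonneg_right habs hq0.le
      have h3 : |ξ - (p n : ℝ) / (q n : ℝ)| * (q n : ℝ) = |ξ * (q n : ℝ) - (p n : ℝ)| := by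
        have he : ξ * (q n : ℝ) - (p n : ℝ) = (ξ - (p n : ℝ) / (q n : ℝ)) * (q n : ℝ) := by
          field_simp
        rw [he, abs_mul, abs_of_pos hq0]
      rw [h3] at h2
      calc |ξ * (q n : ℝ) - (p n : ℝ)| ≤ 1 / ((q n:ℝ) * (q (n+1):ℝ)) * (q n:ℝ) := h2
        _ = 1 / (q (n+1):ℝ) := by field_simp
        _ ≤ 1 := by rw [div_le_one hq0']; exact hq1 _
    have hlt : |(p n : ℝ)| < (q n : ℝ) + 1 := by
      have h5 : |(p n : ℝ)| - |ξ * (q n : ℝ)| ≤ |ξ * (q n : ℝ) - (p n : ℝ)| := by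
        have h6 := abs_sub_abs_le_abs_sub ((p n : ℝ)) (ξ * (q n : ℝ))
        rwa [abs_sub_comm] at h6
      have h4 : |ξ * (q n : ℝ)| = |ξ| * (q n : ℝ) := by rw [abs_mul, abs_of_pos hq0]
      have h6 := mul_lt_mul_of_pos_right hξ1 hq0
      rw [h4] at h5; linarith
    have hint : |p n| < q n + 1 := by exact_mod_cast hlt
    have hle : |p n| ≤ q n := by omega
    exact_mod_cast hle
  have hmono : (q (k-1) : ℝ) ≤ (q k : ℝ) := by
    rw [hq, hq, qden, qden]
    have h := GenContFract.of_den_mono (v := ξ) (n := k - 1)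
    rwa [show k - 1 + 1 = k from Nat.succ_pred_eq_of_pos hk] at h
  have hqk0 : (0:ℝ) ≤ (q k : ℝ) := le_trans zero_le_one (hq1 k)
  have hqk10 : (0:ℝ) ≤ (q (k-1) : ℝ) := le_trans zero_le_one (hq1 (k-1))
  -- norm-of-N bounds
  have hNt : |(t:ℝ)| ≤ mnorm !![t, t'; s, s'] := by
    rw [mnorm_fin]; exact le_max_of_le_left (le_max_left _ _)
  have hNt' : |(t':ℝ)| ≤ mnorm !![t, t'; s, s'] := by
    rw [mnorm_fin]; exact le_max_of_le_left (le_max_right _ _)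
  have hNs : |(s:ℝ)| ≤ mnorm !![t, t'; s, s'] := by
    rw [mnorm_fin]; exact le_max_of_le_right (le_max_left _ _)
  have hNs' : |(s':ℝ)| ≤ mnorm !![t, t'; s, s'] := by
    rw [mnorm_fin]; exact le_max_of_le_right (le_max_right _ _)
  have hxqk : |(q k : ℝ)| ≤ (q k : ℝ) := le_of_eq (abs_of_nonneg hqk0)
  have hxpk : |(-(p k : ℝ))| ≤ (q k : ℝ) := by rw [abs_neg]; exact hpq k
  have hyqk1 : |(-(q (k-1) : ℝ))| ≤ (q (k-1) : ℝ) := by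
    rw [abs_neg]; exact le_of_eq (abs_of_nonneg hqk10)
  have hyqk1' : |((q (k-1) : ℝ))| ≤ (q (k-1) : ℝ) := le_of_eq (abs_of_nonneg hqk10)
  have hypk1 : |((p (k-1) : ℝ))| ≤ (q (k-1) : ℝ) := hpq (k-1)
  have hypk1' : |(-(p (k-1) : ℝ))| ≤ (q (k-1) : ℝ) := by rw [abs_neg]; exact hpq (k-1)
  intro γ hγ
  rcases Nat.even_or_odd k with hke | hko
  · -- even case
    rw [if_pos hke] at hγ
    have hpow : ((-1:ℝ)) ^ (k-1) = -1 :=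
      Odd.neg_one_pow (Nat.Even.sub_odd hk hke odd_one)
    have hγ' : γ = !![t * q k + (t*ℓ + t') * (-(q (k-1))), t * (-(p k)) + (t*ℓ + t') * p (k-1);
        s * q k + (s*ℓ + s') * (-(q (k-1))), s * (-(p k)) + (s*ℓ + s') * p (k-1)] := by
      rw [hγ, Matrix.mul_fin_two, Matrix.mul_fin_two]; ring_nf
    rw [hγ', mnorm_fin, hpow]
    push_cast
    constructor
    · refine le_trans ?_ (le_max_of_le_right (le_max_left _ _))
      calc |(ℓ:ℝ) * (q (k-1):ℝ) + -1 * (q k:ℝ)| * |(s:ℝ)| - |(s':ℝ)| * (q (k-1):ℝ)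
          ≤ |(s:ℝ) * ((ℓ:ℝ) * (q (k-1):ℝ) + -1 * (q k:ℝ)) + (s':ℝ) * (q (k-1):ℝ)| :=
            lower_bound_helper _ _ _ _ hqk10
        _ = |(s:ℝ) * (q k:ℝ) + ((s:ℝ)*(ℓ:ℝ) + (s':ℝ)) * (-(q (k-1):ℝ))| := by
            rw [← abs_neg]; exact congrArg abs (by ring)
    · refine max_le (max_le ?_ ?_) (max_le ?_ ?_)
      · calc |(t:ℝ) * (q k:ℝ) + ((t:ℝ)*(ℓ:ℝ) + (t':ℝ)) * (-(q (k-1):ℝ))|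
            ≤ _ := entry_bound _ _ _ _ _ _ _ _ hNt hNt' hxqk hyqk1 hmono
          _ ≤ _ := le_refl _
      · exact le_trans (entry_bound _ _ _ _ _ _ _ _ hNt hNt' hxpk hypk1 hmono) (le_refl _)
      · exact le_trans (entry_bound _ _ _ _ _ _ _ _ hNs hNs' hxqk hyqk1 hmono) (le_refl _)
      · exact le_trans (entry_bound _ _ _ _ _ _ _ _ hNs hNs' hxpk hypk1 hmono) (le_refl _)
  · -- odd case
    rw [if_neg (Nat.not_even_iff_odd.mpr hko)] at hγ
    have hpow : ((-1:ℝ)) ^ (k-1) = 1 :=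
      Even.neg_one_pow (Nat.Odd.sub_odd hko odd_one)
    have hγ' : γ = !![t * q k + (t*ℓ + t') * q (k-1), t * (-(p k)) + (t*ℓ + t') * (-(p (k-1)));
        s * q k + (s*ℓ + s') * q (k-1), s * (-(p k)) + (s*ℓ + s') * (-(p (k-1)))] := by
      rw [hγ, Matrix.mul_fin_two, Matrix.mul_fin_two]; ring_nf
    rw [hγ', mnorm_fin, hpow]
    push_cast
    constructor
    · refine le_trans ?_ (le_max_of_le_right (le_max_left _ _))
      calc |(ℓ:ℝ) * (q (k-1):ℝ) + 1 * (q k:ℝ)| * |(s:ℝ)| - |(s':ℝ)| * (q (k-1):ℝ)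
          ≤ |(s:ℝ) * ((ℓ:ℝ) * (q (k-1):ℝ) + 1 * (q k:ℝ)) + (s':ℝ) * (q (k-1):ℝ)| :=
            lower_bound_helper _ _ _ _ hqk10
        _ = |(s:ℝ) * (q k:ℝ) + ((s:ℝ)*(ℓ:ℝ) + (s':ℝ)) * ((q (k-1):ℝ))| :=
            congrArg abs (by ring)
    · refine max_le (max_le ?_ ?_) (max_le ?_ ?_)
      · exact le_trans (entry_bound _ _ _ _ _ _ _ _ hNt hNt' hxqk hyqk1' hmono) (le_refl _)
      · exact le_trans (entry_bound _ _ _ _ _ _ _ _ hNt hNt' hxpk hypk1' hmono) (le_refl _)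
      · exact le_trans (entry_bound _ _ _ _ _ _ _ _ hNs hNs' hxqk hyqk1' hmono) (le_refl _)
      · exact le_trans (entry_bound _ _ _ _ _ _ _ _ hNs hNs' hxpk hypk1' hmono) (le_refl _)
end

section
/- With γ = N U^ℓ M_k = [[v₁,u₁],[v₂,u₂]] as above, δ = |sy − t|, δ' = |s'y − t'| for a real number y, one has |v₁ξ + u₁ − y(v₂ξ + u₂)| ≤ δ|ℓ|/q_k + δ/q_{k+1} + δ'/q_k. -/
open Matrix MeasureTheory

lemma qden_pos (ξ : ℝ) (hξ : Irrational ξ) (n : ℕ) : 0 < (GenContFract.of ξ).dens n := by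
  have h := GenContFract.succ_nth_fib_le_of_nth_den (v := ξ) (n := n)
    (Or.inr (not_term ξ hξ _))
  have : (0:ℝ) < (Nat.fib (n+1) : ℝ) := by
    exact_mod_cast Nat.fib_pos.2 n.succ_pos
  linarith

lemma eps_bound (ξ : ℝ) (hξ : Irrational ξ) (n : ℕ) :
    |(GenContFract.of ξ).dens n * ξ - (GenContFract.of ξ).nums n|
      ≤ 1 / (GenContFract.of ξ).dens (n + 1) := by
  have h := GenContFract.abs_sub_convs_le (v := ξ) (n := n) (not_term ξ hξ n)
  have hB := qden_pos ξ hξ n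
  have hB1 := qden_pos ξ hξ (n + 1)
  rw [GenContFract.conv_eq_num_div_den] at h
  have key : (GenContFract.of ξ).dens n * ξ - (GenContFract.of ξ).nums n =
      (GenContFract.of ξ).dens n * (ξ - (GenContFract.of ξ).nums n / (GenContFract.of ξ).dens n) := by
    field_simp
  rw [key, abs_mul, abs_of_pos hB]
  calc (GenContFract.of ξ).dens n * |ξ - (GenContFract.of ξ).nums n / (GenContFract.of ξ).dens n|
      ≤ (GenContFract.of ξ).dens n * (1 / ((GenContFract.of ξ).dens n * (GenContFract.of ξ).dens (n+1))) := by
        gcongr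
    _ = 1 / (GenContFract.of ξ).dens (n + 1) := by field_simp

theorem stmt12_aux (ξ : ℝ) (hξ : Irrational ξ) (hξ1 : |ξ| < 1)
    (p q : ℕ → ℤ) (hp : ∀ k, (p k : ℝ) = (GenContFract.of ξ).nums k)
    (hq : ∀ k, (q k : ℝ) = (GenContFract.of ξ).dens k)
    (k : ℕ) (hk : 1 ≤ k) (ℓ : ℤ) (t t' s s' : ℤ) (hN : t * s' - t' * s = 1) (y : ℝ) :
    ∀ γ : Matrix (Fin 2) (Fin 2) ℤ,
      γ = !![t, t'; s, s'] * !![1, ℓ; 0, 1] *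
        (if Even k then !![q k, -(p k); -(q (k - 1)), p (k - 1)]
          else !![q k, -(p k); q (k - 1), -(p (k - 1))]) →
      |(γ 0 0 : ℝ) * ξ + (γ 0 1 : ℝ) - y * ((γ 1 0 : ℝ) * ξ + (γ 1 1 : ℝ))| ≤
        |(s : ℝ) * y - (t : ℝ)| * |(ℓ : ℝ)| / (GenContFract.of ξ).dens k +
          |(s : ℝ) * y - (t : ℝ)| / (GenContFract.of ξ).dens (k + 1) +
          |(s' : ℝ) * y - (t' : ℝ)| / (GenContFract.of ξ).dens k := by
  intro γ hγ
  have hk1 : k - 1 + 1 = k := Nat.succ_pred_eq_of_pos hk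
  have hqk := qden_pos ξ hξ k
  have hqk1 := qden_pos ξ hξ (k + 1)
  have he : |(q k : ℝ) * ξ - p k| ≤ 1 / (GenContFract.of ξ).dens (k + 1) := by
    rw [hp, hq]; exact eps_bound ξ hξ k
  have he' : |(q (k-1) : ℝ) * ξ - p (k-1)| ≤ 1 / (GenContFract.of ξ).dens k := by
    rw [hp, hq]
    have := eps_bound ξ hξ (k - 1)
    rwa [hk1] at this
  set e : ℝ := (q k : ℝ) * ξ - p k with he_def
  set e' : ℝ := (q (k-1) : ℝ) * ξ - p (k-1) with he'_def
  have hst : |(t:ℝ) - s*y| = |(s:ℝ)*y - t| := abs_sub_comm _ _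
  have hst' : |(t':ℝ) - s'*y| = |(s':ℝ)*y - t'| := abs_sub_comm _ _
  by_cases hpar : Even k
  · rw [if_pos hpar] at hγ
    subst hγ
    simp only [Matrix.mul_fin_two]
    calc |_| = |((t:ℝ) - s*y)*(e + ℓ*(-e')) + ((t':ℝ) - s'*y)*(-e')| := by
          congr 1
          simp [Matrix.cons_val_zero, Matrix.cons_val_one, Matrix.head_cons]
          push_cast [he_def, he'_def]
          ring
      _ ≤ |(t:ℝ) - s*y| * |e + ℓ*(-e')| + |(t':ℝ) - s'*y| * |-e'| :=
          (abs_add_le _ _).trans_eq (by rw [abs_mul, abs_mul])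
      _ ≤ |(t:ℝ) - s*y| * (|e| + |(ℓ:ℝ)| * |e'|) + |(t':ℝ) - s'*y| * |e'| := by
          rw [abs_neg]
          gcongr
          exact (abs_add_le _ _).trans_eq (by rw [abs_mul, abs_neg])
      _ ≤ |(t:ℝ) - s*y| * (1 / (GenContFract.of ξ).dens (k+1)
            + |(ℓ:ℝ)| * (1 / (GenContFract.of ξ).dens k))
            + |(t':ℝ) - s'*y| * (1 / (GenContFract.of ξ).dens k) := by gcongr
      _ = _ := by rw [hst, hst']; ring
  · rw [if_neg hpar] at hγ
    subst hγ
    simp only [Matrix.mul_fin_two]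
    calc |_| = |((t:ℝ) - s*y)*(e + ℓ*e') + ((t':ℝ) - s'*y)*e'| := by
          congr 1
          simp [Matrix.cons_val_zero, Matrix.cons_val_one, Matrix.head_cons]
          push_cast [he_def, he'_def]
          ring
      _ ≤ |(t:ℝ) - s*y| * |e + ℓ*e'| + |(t':ℝ) - s'*y| * |e'| :=
          (abs_add_le _ _).trans_eq (by rw [abs_mul, abs_mul])
      _ ≤ |(t:ℝ) - s*y| * (|e| + |(ℓ:ℝ)| * |e'|) + |(t':ℝ) - s'*y| * |e'| := by
          gcongr
          exact (abs_add_le _ _).trans_eq (by rw [abs_mul])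
      _ ≤ |(t:ℝ) - s*y| * (1 / (GenContFract.of ξ).dens (k+1)
            + |(ℓ:ℝ)| * (1 / (GenContFract.of ξ).dens k))
            + |(t':ℝ) - s'*y| * (1 / (GenContFract.of ξ).dens k) := by gcongr
      _ = _ := by rw [hst, hst']; ring

/-- for `γ = N U^ℓ M_k = [[v₁, u₁], [v₂, u₂]]`, `δ = |sy - t|`,
`δ' = |s'y - t'|`, one has `|v₁ξ + u₁ - y(v₂ξ + u₂)| ≤ δ|ℓ|/q_k + δ/q_{k+1} + δ'/q_k`. -/
theorem stmt12 (ξ : ℝ) (hξ : Irrational ξ) (hξ1 : |ξ| < 1)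
    (p q : ℕ → ℤ) (hp : ∀ k, (p k : ℝ) = pnum ξ k) (hq : ∀ k, (q k : ℝ) = qden ξ k)
    (k : ℕ) (hk : 1 ≤ k) (ℓ : ℤ) (t t' s s' : ℤ) (hN : t * s' - t' * s = 1) (y : ℝ) :
    ∀ γ : Matrix (Fin 2) (Fin 2) ℤ,
      γ = !![t, t'; s, s'] * !![1, ℓ; 0, 1] *
        (if Even k then !![q k, -(p k); -(q (k - 1)), p (k - 1)]
          else !![q k, -(p k); q (k - 1), -(p (k - 1))]) →
      |(γ 0 0 : ℝ) * ξ + (γ 0 1 : ℝ) - y * ((γ 1 0 : ℝ) * ξ + (γ 1 1 : ℝ))| ≤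
        |(s : ℝ) * y - (t : ℝ)| * |(ℓ : ℝ)| / qden ξ k +
          |(s : ℝ) * y - (t : ℝ)| / qden ξ (k + 1) +
          |(s' : ℝ) * y - (t' : ℝ)| / qden ξ k := by
  simp only [qden, pnum] at hp hq ⊢
  exact stmt12_aux ξ hξ hξ1 p q hp hq k hk ℓ t t' s s' hN y
end

section
/- Let x = (x₁,x₂) with irrational slope ξ, |ξ| < 1, and y = (y₁,y₂), y₂ ≠ 0, with rational slope a/b in lowest terms, |a| ≤ b. Then for all sufficiently large k there exists γ ∈ SL(2,ℤ) with (|y₂|/(2|x₂|)) q_{k−1} q_k ≤ |γ| ≤ (3|y₂|/|x₂|) q_{k−1} q_k and |γx − y| ≤ 2b|x₂|/q_k. -/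
open Matrix MeasureTheory

section Helpers

open GenContFract

variable {ξ : ℝ}

lemma cf_not_term (hξ : Irrational ξ) (m : ℕ) : ¬(GenContFract.of ξ).TerminatedAt m := by
  intro hm
  obtain ⟨q, hq⟩ := (GenContFract.terminates_iff_rat ξ).1 ⟨m, hm⟩
  exact hξ ⟨q, hq.symm⟩

lemma cf_sget (hξ : Irrational ξ) (m : ℕ) :
    ∃ gp, (GenContFract.of ξ).s.get? m = some gp :=
  Option.ne_none_iff_exists'.1 (cf_not_term hξ m)

lemma cf_int (hξ : Irrational ξ) : ∀ n : ℕ,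
    ((∃ P : ℤ, (GenContFract.of ξ).nums n = (P : ℝ)) ∧
      (∃ Q : ℤ, (GenContFract.of ξ).dens n = (Q : ℝ))) ∧
    ((∃ P : ℤ, (GenContFract.of ξ).nums (n+1) = (P : ℝ)) ∧
      (∃ Q : ℤ, (GenContFract.of ξ).dens (n+1) = (Q : ℝ))) := by
  intro n
  induction n with
  | zero =>
    constructor
    · exact ⟨⟨⌊ξ⌋, by rw [zeroth_num_eq_h, of_h_eq_floor]⟩,
        ⟨1, by rw [zeroth_den_eq_one]; norm_num⟩⟩
    · obtain ⟨gp, hgp⟩ := cf_sget hξ 0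
      obtain ⟨ha1, z, hz⟩ := of_partNum_eq_one_and_exists_int_partDen_eq hgp
      constructor
      · exact ⟨z * ⌊ξ⌋ + 1, by
          rw [first_num_eq hgp, of_h_eq_floor, ha1, hz]; push_cast; ring⟩
      · exact ⟨z, by rw [first_den_eq hgp, hz]⟩
  | succ n ih =>
    refine ⟨ih.2, ?_, ?_⟩
    · obtain ⟨gp, hgp⟩ := cf_sget hξ (n+1)
      obtain ⟨ha1, z, hz⟩ := of_partNum_eq_one_and_exists_int_partDen_eq hgp
      obtain ⟨P0, hP0⟩ := ih.1.1
      obtain ⟨P1, hP1⟩ := ih.2.1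
      exact ⟨z * P1 + P0, by
        rw [nums_recurrence hgp hP0 hP1, ha1, hz]; push_cast; ring⟩
    · obtain ⟨gp, hgp⟩ := cf_sget hξ (n+1)
      obtain ⟨ha1, z, hz⟩ := of_partNum_eq_one_and_exists_int_partDen_eq hgp
      obtain ⟨Q0, hQ0⟩ := ih.1.2
      obtain ⟨Q1, hQ1⟩ := ih.2.2
      exact ⟨z * Q1 + Q0, by
        rw [dens_recurrence hgp hQ0 hQ1, ha1, hz]; push_cast; ring⟩

lemma cf_den_one_le (hξ : Irrational ξ) (n : ℕ) : (1 : ℝ) ≤ (GenContFract.of ξ).dens n := by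
  have h := succ_nth_fib_le_of_nth_den (v := ξ) (n := n) (Or.inr (cf_not_term hξ _))
  have : (1 : ℝ) ≤ (Nat.fib (n+1) : ℝ) := by
    exact_mod_cast Nat.one_le_iff_ne_zero.2 (Nat.fib_pos.2 n.succ_pos).ne'
  linarith

lemma cf_den_fib (hξ : Irrational ξ) (n : ℕ) :
    (Nat.fib (n+1) : ℝ) ≤ (GenContFract.of ξ).dens n :=
  succ_nth_fib_le_of_nth_den (v := ξ) (n := n) (Or.inr (cf_not_term hξ _))

lemma cf_den_rec (hξ : Irrational ξ) (n : ℕ) :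
    (GenContFract.of ξ).dens n + (GenContFract.of ξ).dens (n+1)
      ≤ (GenContFract.of ξ).dens (n+2) := by
  obtain ⟨gp, hgp⟩ := cf_sget hξ (n+1)
  have ha1 : gp.a = 1 := of_partNum_eq_one (partNum_eq_s_a hgp)
  have hb1 : (1 : ℝ) ≤ gp.b := of_one_le_get?_partDen (partDen_eq_s_b hgp)
  have hrec := dens_recurrence hgp (rfl : (GenContFract.of ξ).dens n = _)
    (rfl : (GenContFract.of ξ).dens (n+1) = _)
  have h1 := cf_den_one_le hξ n
  have h2 := cf_den_one_le hξ (n+1)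
  rw [hrec, ha1]
  nlinarith

lemma cf_theta (hξ : Irrational ξ) (n : ℕ) :
    |(GenContFract.of ξ).dens n * ξ - (GenContFract.of ξ).nums n|
      ≤ 1 / (GenContFract.of ξ).dens (n+1) := by
  have h := abs_sub_convs_le (v := ξ) (n := n) (cf_not_term hξ _)
  rw [conv_eq_num_div_den] at h
  have hq : (0:ℝ) < (GenContFract.of ξ).dens n := lt_of_lt_of_le one_pos (cf_den_one_le hξ n)
  have hq2 : (0:ℝ) < (GenContFract.of ξ).dens (n+1) :=
    lt_of_lt_of_le one_pos (cf_den_one_le hξ (n+1))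
  have key : (GenContFract.of ξ).dens n * ξ - (GenContFract.of ξ).nums n
      = (GenContFract.of ξ).dens n
        * (ξ - (GenContFract.of ξ).nums n / (GenContFract.of ξ).dens n) := by
    field_simp [mul_comm]
  rw [key, abs_mul, abs_of_pos hq]
  calc (GenContFract.of ξ).dens n * |ξ - (GenContFract.of ξ).nums n / (GenContFract.of ξ).dens n|
      ≤ (GenContFract.of ξ).dens n
        * (1 / ((GenContFract.of ξ).dens n * (GenContFract.of ξ).dens (n+1))) :=
        mul_le_mul_of_nonneg_left h hq.le
    _ = 1 / (GenContFract.of ξ).dens (n+1) := by field_simp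

lemma cf_det (hξ : Irrational ξ) (n : ℕ) :
    (GenContFract.of ξ).nums n * (GenContFract.of ξ).dens (n+1)
      - (GenContFract.of ξ).dens n * (GenContFract.of ξ).nums (n+1) = (-1)^(n+1) :=
  SimpContFract.determinant (s := ⟨GenContFract.of ξ, GenContFract.of_isSimpContFract ξ⟩)
    (cf_not_term hξ n)

end Helpers


section ArithLemmas

private lemma arith1 (A t1 t2 q2 bb cc : ℝ) (h0 : 0 ≤ A) (ht1 : 0 ≤ t1) (ht2 : 0 ≤ t2)
    (hq2 : 0 < q2) (hb : 1 ≤ bb)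
    (htri2 : cc ≤ A*t1 + bb*t2 + bb*t1/2) (hf7 : t1*q2 ≤ 1) (hf8 : t2*q2 ≤ 1) :
    cc*q2 - (3/2)*bb ≤ A := by
  nlinarith [mul_le_mul_of_nonneg_right htri2 hq2.le, mul_le_mul_of_nonneg_left hf7 h0,
    mul_le_mul_of_nonneg_left hf7 (by linarith : (0:ℝ) ≤ bb/2),
    mul_le_mul_of_nonneg_left hf8 (by linarith : (0:ℝ) ≤ bb)]

private lemma arith2 (A t1 t2 Q1 Q2 bb cc : ℝ) (h0 : 0 ≤ A) (ht1 : 0 ≤ t1) (ht2 : 0 ≤ t2)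
    (hQ1 : 1 ≤ Q1) (hQ12 : Q1 ≤ Q2) (hb : 1 ≤ bb) (hc : 0 ≤ cc)
    (hf11 : 1 ≤ t1*(Q1+Q2)) (htri : A*t1 ≤ cc + bb*t2 + bb*t1/2)
    (hB : t2*(Q1+Q2) ≤ 1) (hA : t1*(Q1+Q2) ≤ 2) :
    A ≤ 2*cc*Q2 + 2*bb := by
  have h1 : A ≤ A*(t1*(Q1+Q2)) := by nlinarith
  have h2 : A*t1*(Q1+Q2) ≤ (cc + bb*t2 + bb*t1/2)*(Q1+Q2) := by
    have := mul_le_mul_of_nonneg_right htri (by linarith : (0:ℝ) ≤ Q1+Q2)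
    linarith
  nlinarith [mul_le_mul_of_nonneg_left hB (by linarith : (0:ℝ) ≤ bb),
    mul_le_mul_of_nonneg_left hA (by linarith : (0:ℝ) ≤ bb/2)]

private lemma arith3 (G A Q1 Q2 bb cc : ℝ) (hG : A*Q1 ≤ G + bb*Q2)
    (hNlb : cc*Q2 - (3/2)*bb ≤ A) (HM1 : 12*bb ≤ cc*Q1) (HM1' : 12*bb ≤ cc*Q2)
    (hQ1 : 1 ≤ Q1) (hQ12 : Q1 ≤ Q2) (hb : 1 ≤ bb) (hc : 0 < cc) (hA : 0 ≤ A) :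
    cc/2*Q1*Q2 ≤ G := by
  nlinarith [mul_le_mul_of_nonneg_right hNlb (by linarith : (0:ℝ) ≤ Q1),
    mul_le_mul_of_nonneg_right HM1' (by linarith : (0:ℝ) ≤ Q1),
    mul_le_mul_of_nonneg_right HM1 (by linarith : (0:ℝ) ≤ Q2)]

private lemma arith4 (S A Q1 Q2 bb cc : ℝ) (h : S ≤ (A+1)*Q1 + bb*Q2)
    (hA2 : A ≤ 2*cc*Q2 + 2*bb) (HM1 : 12*bb ≤ cc*Q1) (HM1' : 12*bb ≤ cc*Q2)
    (hQ1 : 1 ≤ Q1) (hQ12 : Q1 ≤ Q2) (hb : 1 ≤ bb) (hc : 0 < cc) (hA : 0 ≤ A) :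
    S ≤ 3*cc*Q1*Q2 := by
  nlinarith [mul_le_mul_of_nonneg_right hA2 (by linarith : (0:ℝ) ≤ Q1),
    mul_le_mul_of_nonneg_right HM1' (by linarith : (0:ℝ) ≤ Q1),
    mul_le_mul_of_nonneg_right HM1 (by linarith : (0:ℝ) ≤ Q2)]

private lemma arith5 (X Dd t1 q2 bb : ℝ) (hX : 0 ≤ X) (hDd : 0 ≤ Dd) (ht1 : 0 ≤ t1)
    (hq2 : 0 < q2) (hb : 1 ≤ bb) (hD : Dd ≤ bb*t1/2) (hf7 : t1*q2 ≤ 1) :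
    X*Dd*q2 ≤ 2*bb*X := by
  nlinarith [mul_le_mul_of_nonneg_left hf7 (mul_nonneg hX (by linarith : (0:ℝ) ≤ bb/2)),
    mul_le_mul_of_nonneg_left (mul_le_mul_of_nonneg_right hD hq2.le) hX]

private lemma arith6 (X C E t1 q2 bb : ℝ) (hX : 0 ≤ X) (hC : 0 ≤ C) (hE : 0 ≤ E)
    (ht1 : 0 ≤ t1) (hq2 : 0 < q2) (hb : 1 ≤ bb)
    (hbc : bb*C = X*E) (hEb : E ≤ bb*(bb*t1/2) + t1) (hf7 : t1*q2 ≤ 1) :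
    C*q2 ≤ 2*bb*X := by
  have h7 : bb * (C*q2) ≤ bb * (2*bb*X) := by
    have h1 : X*E*q2 ≤ X*(bb*(bb*t1/2) + t1)*q2 := by
      nlinarith [mul_le_mul_of_nonneg_left (mul_le_mul_of_nonneg_right hEb hq2.le) hX]
    have h2 : X*(bb*(bb*t1/2) + t1)*q2 ≤ X*(bb*bb/2 + 1) := by
      nlinarith [mul_le_mul_of_nonneg_left hf7
        (mul_nonneg hX (by nlinarith : (0:ℝ) ≤ bb*bb/2 + 1))]
    have h3 : bb*C*q2 = X*E*q2 := by rw [hbc]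
    have h4 : X*(bb*bb/2 + 1) ≤ bb*(2*bb*X) := by
      nlinarith [mul_nonneg hX (by nlinarith : (0:ℝ) ≤ 3/2*(bb*bb) - 1)]
    nlinarith
  exact le_of_mul_le_mul_left h7 (by linarith)

private lemma arith7 (bb W A : ℝ) (hb : 1 ≤ bb) (h : bb*W ≤ bb*A + 1) : W ≤ A + 1 := by
  nlinarith

end ArithLemmas

set_option maxHeartbeats 1000000 in
/-- Lemma 5: for all sufficiently large `k` there is `γ ∈ SL(2, ℤ)` with
`(|y₂|/(2|x₂|)) q_{k-1} q_k ≤ |γ| ≤ (3|y₂|/|x₂|) q_{k-1} q_k` and `|γ x - y| ≤ 2b|x₂|/q_k`. -/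
theorem stmt14 (x y : Fin 2 → ℝ) (hx2 : x 1 ≠ 0) (hξ : Irrational (x 0 / x 1))
    (hξ1 : |x 0 / x 1| < 1) (hy2 : y 1 ≠ 0)
    (a b : ℤ) (hab : IsCoprime a b) (hb : 0 < b) (hab' : |a| ≤ b)
    (hslope : y 0 * (b : ℝ) = y 1 * (a : ℝ)) :
    ∃ K : ℕ, ∀ k : ℕ, K ≤ k → ∃ γ : Matrix (Fin 2) (Fin 2) ℤ,
      γ.det = 1 ∧
        (|y 1| / (2 * |x 1|)) * qden (x 0 / x 1) (k - 1) * qden (x 0 / x 1) k ≤ mnorm γ ∧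
        mnorm γ ≤ (3 * |y 1| / |x 1|) * qden (x 0 / x 1) (k - 1) * qden (x 0 / x 1) k ∧
        vnorm (act γ x - y) ≤ 2 * (b : ℝ) * |x 1| / qden (x 0 / x 1) k := by
  classical
  obtain ⟨ξ, hξdef⟩ : ∃ v : ℝ, v = x 0 / x 1 := ⟨_, rfl⟩
  rw [← hξdef] at hξ hξ1 ⊢
  have hx1 : x 1 ≠ 0 := hx2
  have hx0 : x 0 = ξ * x 1 := by rw [hξdef]; field_simp
  have h1ξ : 0 < 1 - |ξ| := by linarith
  obtain ⟨c, hcdef⟩ : ∃ v : ℝ, v = y 1 / x 1 := ⟨_, rfl⟩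
  have hy1 : y 1 = c * x 1 := by rw [hcdef]; field_simp
  have hcne : c ≠ 0 := fun h => hy2 (by rw [hy1, h, zero_mul])
  have hcpos : 0 < |c| := abs_pos.2 hcne
  have hbR : (1:ℝ) ≤ (b:ℝ) := by exact_mod_cast hb
  have hbRpos : (0:ℝ) < (b:ℝ) := by linarith
  have haR : |(a:ℝ)| ≤ (b:ℝ) := by rw [← Int.cast_abs]; exact_mod_cast hab'
  refine ⟨max 5 (max ⌈12*(b:ℝ)/|c|⌉₊ ⌈1/(1-|ξ|)⌉₊), fun k hk => ?_⟩
  have hk5 : 5 ≤ k := le_trans (le_max_left _ _) hk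
  obtain ⟨n₀, rfl⟩ : ∃ m, k = m + 1 := ⟨k - 1, by omega⟩
  simp only [Nat.add_sub_cancel]
  obtain ⟨⟨⟨P1, hP1⟩, ⟨Q1, hQ1⟩⟩, ⟨⟨P2, hP2⟩, ⟨Q2, hQ2⟩⟩⟩ := cf_int hξ n₀
  have hnn : (n₀+1)+1 = n₀+2 := rfl
  -- basic facts about the denominators
  have f1 : (1:ℝ) ≤ (Q1:ℝ) := hQ1 ▸ cf_den_one_le hξ n₀
  have f2 : (1:ℝ) ≤ (Q2:ℝ) := hQ2 ▸ cf_den_one_le hξ (n₀+1)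
  have f3 : (1:ℝ) ≤ (GenContFract.of ξ).dens (n₀+2) := cf_den_one_le hξ (n₀+2)
  have hq1pos : (0:ℝ) < (Q1:ℝ) := by linarith
  have hq2pos : (0:ℝ) < (Q2:ℝ) := by linarith
  have hq3pos : (0:ℝ) < (GenContFract.of ξ).dens (n₀+2) := by linarith
  have f4 : (Q1:ℝ) ≤ (Q2:ℝ) := by
    have := GenContFract.of_den_mono (v := ξ) (n := n₀); rwa [hQ1, hQ2] at this
  have f5 : (Q2:ℝ) ≤ (GenContFract.of ξ).dens (n₀+2) := by
    have := GenContFract.of_den_mono (v := ξ) (n := n₀+1); rwa [hQ2, hnn] at this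
  have f6 : (Q1:ℝ) + (Q2:ℝ) ≤ (GenContFract.of ξ).dens (n₀+2) := by
    have := cf_den_rec hξ n₀; rwa [hQ1, hQ2] at this
  -- size assumptions coming from `k` being large
  have hkq1 : ((n₀+1 : ℕ) : ℝ) ≤ (Q1:ℝ) := by
    have h1 : ((n₀+1 : ℕ) : ℝ) ≤ (Nat.fib (n₀+1) : ℝ) := by
      exact_mod_cast Nat.le_fib_self hk5
    have h2 := cf_den_fib hξ n₀
    rw [hQ1] at h2; linarith
  have HM1 : 12*(b:ℝ) ≤ |c| * (Q1:ℝ) := by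
    have h1 : (⌈12*(b:ℝ)/|c|⌉₊ : ℝ) ≤ ((n₀+1 : ℕ) : ℝ) := by
      exact_mod_cast le_trans (le_trans (le_max_left _ _) (le_max_right 5 _)) hk
    have h2 : 12*(b:ℝ)/|c| ≤ (Q1:ℝ) := le_trans (Nat.le_ceil _) (le_trans h1 hkq1)
    have h3 := (div_le_iff₀ hcpos).1 h2
    nlinarith
  have HM2 : (1:ℝ) ≤ (1 - |ξ|) * (Q1:ℝ) := by
    have h1 : (⌈1/(1-|ξ|)⌉₊ : ℝ) ≤ ((n₀+1 : ℕ) : ℝ) := by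
      exact_mod_cast le_trans (le_trans (le_max_right _ _) (le_max_right 5 _)) hk
    have h2 : 1/(1-|ξ|) ≤ (Q1:ℝ) := le_trans (Nat.le_ceil _) (le_trans h1 hkq1)
    have h3 := (div_le_iff₀ h1ξ).1 h2
    nlinarith
  have HM1' : 12*(b:ℝ) ≤ |c| * (Q2:ℝ) := by nlinarith
  -- the two theta quantities
  obtain ⟨θ1, hθ1def⟩ : ∃ v : ℝ, v = (Q1:ℝ) * ξ - (P1:ℝ) := ⟨_, rfl⟩
  obtain ⟨θ2, hθ2def⟩ : ∃ v : ℝ, v = (Q2:ℝ) * ξ - (P2:ℝ) := ⟨_, rfl⟩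
  have f7 : |θ1| * (Q2:ℝ) ≤ 1 := by
    have h := cf_theta hξ n₀
    rw [hP1, hQ1, hQ2, ← hθ1def] at h
    calc |θ1| * (Q2:ℝ) ≤ (1/(Q2:ℝ)) * (Q2:ℝ) := mul_le_mul_of_nonneg_right h hq2pos.le
      _ = 1 := by field_simp
  have f8 : |θ2| * (GenContFract.of ξ).dens (n₀+2) ≤ 1 := by
    have h := cf_theta hξ (n₀+1)
    rw [hP2, hQ2, hnn, ← hθ2def] at h
    calc |θ2| * (GenContFract.of ξ).dens (n₀+2)
        ≤ (1/(GenContFract.of ξ).dens (n₀+2)) * (GenContFract.of ξ).dens (n₀+2) :=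
          mul_le_mul_of_nonneg_right h hq3pos.le
      _ = 1 := by field_simp
  generalize hq3g : (GenContFract.of ξ).dens (n₀+2) = q3 at f3 f5 f6 f8 hq3pos
  have hθ1le1 : |θ1| ≤ 1 := by nlinarith [abs_nonneg θ1]
  have hθ2le1 : |θ2| ≤ 1 := by nlinarith [abs_nonneg θ2]
  have f9 : θ1 ≠ 0 := by
    intro h0
    refine hξ ⟨(P1:ℚ)/(Q1:ℚ), ?_⟩
    have hQ1ne : (Q1:ℝ) ≠ 0 := by linarith
    push_cast
    rw [div_eq_iff hQ1ne]
    linear_combination hθ1def - h0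
  have hθ1pos : 0 < |θ1| := abs_pos.2 f9
  -- determinant of consecutive convergents
  have f10R : (P1:ℝ) * (Q2:ℝ) - (Q1:ℝ) * (P2:ℝ) = (-1:ℝ)^(n₀+1) := by
    have h := cf_det hξ n₀
    rw [hP1, hQ1, hP2, hQ2] at h
    exact h
  have f10Z : P1 * Q2 - Q1 * P2 = (-1)^(n₀+1) := by exact_mod_cast f10R
  have he : ((-1)^(n₀+1) : ℤ) * (-1)^(n₀+1) = 1 := by
    rw [← pow_add]; exact Even.neg_one_pow ⟨n₀+1, rfl⟩
  -- lower bound for |θ1|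
  have f11 : 1 ≤ |θ1| * ((Q1:ℝ) + (Q2:ℝ)) := by
    have hid : (Q2:ℝ) * θ1 - (Q1:ℝ) * θ2 = -(-1:ℝ)^(n₀+1) := by
      linear_combination -f10R + (Q2:ℝ) * hθ1def - (Q1:ℝ) * hθ2def
    have heR : |(-1:ℝ)^(n₀+1)| = 1 := by
      rw [abs_pow, abs_neg, abs_one, one_pow]
    have habs1 : (1:ℝ) ≤ (Q2:ℝ) * |θ1| + (Q1:ℝ) * |θ2| := by
      have h1 : |(Q2:ℝ) * θ1 - (Q1:ℝ) * θ2| ≤ |(Q2:ℝ) * θ1| + |(Q1:ℝ) * θ2| := abs_sub _ _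
      rw [hid, abs_neg, heR, abs_mul, abs_mul, abs_of_pos hq2pos, abs_of_pos hq1pos] at h1
      exact h1
    have hB12 : |θ2| * ((Q1:ℝ) + (Q2:ℝ)) ≤ 1 := by nlinarith [abs_nonneg θ2]
    nlinarith [abs_nonneg θ1, abs_nonneg θ2, mul_le_mul_of_nonneg_left hB12 hq1pos.le,
      mul_le_mul_of_nonneg_right habs1 (show (0:ℝ) ≤ (Q1:ℝ) + (Q2:ℝ) by linarith)]
  -- numerators bounded by denominators
  have f12 : |(P1:ℝ)| ≤ (Q1:ℝ) := by
    have hp : (P1:ℝ) = (Q1:ℝ) * ξ - θ1 := by linear_combination hθ1def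
    rw [hp]
    calc |(Q1:ℝ) * ξ - θ1| ≤ |(Q1:ℝ) * ξ| + |θ1| := abs_sub _ _
      _ = (Q1:ℝ) * |ξ| + |θ1| := by rw [abs_mul, abs_of_pos hq1pos]
      _ ≤ (Q1:ℝ) := by nlinarith [abs_nonneg ξ]
  have f13 : |(P2:ℝ)| ≤ (Q2:ℝ) := by
    have hp : (P2:ℝ) = (Q2:ℝ) * ξ - θ2 := by linear_combination hθ2def
    rw [hp]
    calc |(Q2:ℝ) * ξ - θ2| ≤ |(Q2:ℝ) * ξ| + |θ2| := abs_sub _ _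
      _ = (Q2:ℝ) * |ξ| + |θ2| := by rw [abs_mul, abs_of_pos hq2pos]
      _ ≤ (Q2:ℝ) := by nlinarith [abs_nonneg ξ, abs_nonneg θ2]
  have hq1' : qden ξ n₀ = (Q1:ℝ) := hQ1
  have hq2' : qden ξ (n₀+1) = (Q2:ℝ) := hQ2
  clear hq3g hnn hP1 hP2 hQ1 hQ2 hk hk5 hkq1
  -- coprimality witnesses and the sign
  obtain ⟨va, vb, hvv⟩ := hab
  obtain ⟨s, hsdef⟩ : ∃ v : ℤ, v = -(-1)^(n₀+1) := ⟨_, rfl⟩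
  have hss : s * s = 1 := by rw [hsdef, neg_mul_neg]; exact he
  have hsR : |(s:ℝ)| = 1 := by
    rcases Int.isUnit_iff.1 (IsUnit.of_mul_eq_one s hss) with h | h <;> simp [h]
  -- rounding
  obtain ⟨t, htdef⟩ : ∃ v : ℝ, v = (c - (b:ℝ)*(s:ℝ)*θ2 - (va:ℝ)*θ1)/((b:ℝ)*θ1) := ⟨_, rfl⟩
  obtain ⟨r, hrdef⟩ : ∃ v : ℤ, v = round t := ⟨_, rfl⟩
  have hr : |t - (r:ℝ)| ≤ 1/2 := by rw [hrdef]; exact abs_sub_round t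
  obtain ⟨N, hNdef⟩ : ∃ v : ℤ, v = va + b*r := ⟨_, rfl⟩
  have hNR : ((N:ℤ):ℝ) = (va:ℝ) + (b:ℝ)*(r:ℝ) := by rw [hNdef]; push_cast; ring
  obtain ⟨D, hDdef⟩ : ∃ v : ℝ, v = (N:ℝ)*θ1 + (b:ℝ)*(s:ℝ)*θ2 - c := ⟨_, rfl⟩
  have hbθ1 : (b:ℝ) * θ1 ≠ 0 := mul_ne_zero (ne_of_gt hbRpos) f9
  have hD : |D| ≤ (b:ℝ)*|θ1|/2 := by
    have ht2 : t * ((b:ℝ)*θ1) = c - (b:ℝ)*(s:ℝ)*θ2 - (va:ℝ)*θ1 := by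
      rw [htdef]; exact div_mul_cancel₀ _ hbθ1
    have hkey : D = ((b:ℝ)*θ1)*((r:ℝ) - t) := by
      linear_combination hDdef + ht2 + θ1 * hNR
    rw [hkey, abs_mul, abs_mul, abs_of_pos hbRpos, abs_sub_comm]
    calc (b:ℝ) * |θ1| * |t - (r:ℝ)| ≤ (b:ℝ) * |θ1| * (1/2) :=
          mul_le_mul_of_nonneg_left hr (mul_nonneg hbRpos.le (abs_nonneg θ1))
      _ = (b:ℝ) * |θ1| / 2 := by ring
  clear hr hrdef htdef
  clear t
  -- bounds on N
  have habsN : (0:ℝ) ≤ |(N:ℝ)| := abs_nonneg _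
  have hbsθ2 : |(b:ℝ)*(s:ℝ)*θ2| = (b:ℝ)*|θ2| := by
    rw [abs_mul, abs_mul, hsR, abs_of_pos hbRpos, mul_one]
  have htri : |(N:ℝ)| * |θ1| ≤ |c| + (b:ℝ)*|θ2| + (b:ℝ)*|θ1|/2 := by
    have h1 : (N:ℝ)*θ1 = D - ((b:ℝ)*(s:ℝ)*θ2 - c) := by rw [hDdef]; ring
    have h2 : |(b:ℝ)*(s:ℝ)*θ2 - c| ≤ |(b:ℝ)*(s:ℝ)*θ2| + |c| := abs_sub _ _
    calc |(N:ℝ)| * |θ1| = |(N:ℝ)*θ1| := (abs_mul _ _).symm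
      _ = |D - ((b:ℝ)*(s:ℝ)*θ2 - c)| := by rw [h1]
      _ ≤ |D| + |(b:ℝ)*(s:ℝ)*θ2 - c| := abs_sub _ _
      _ ≤ |c| + (b:ℝ)*|θ2| + (b:ℝ)*|θ1|/2 := by rw [hbsθ2] at h2; linarith
  have htri2 : |c| ≤ |(N:ℝ)| * |θ1| + (b:ℝ)*|θ2| + (b:ℝ)*|θ1|/2 := by
    have h1 : c = (N:ℝ)*θ1 + (b:ℝ)*(s:ℝ)*θ2 - D := by rw [hDdef]; ring
    have h2 : |(N:ℝ)*θ1 + (b:ℝ)*(s:ℝ)*θ2| ≤ |(N:ℝ)*θ1| + |(b:ℝ)*(s:ℝ)*θ2| := abs_add_le _ _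
    calc |c| = |(N:ℝ)*θ1 + (b:ℝ)*(s:ℝ)*θ2 - D| := by rw [← h1]
      _ ≤ |(N:ℝ)*θ1 + (b:ℝ)*(s:ℝ)*θ2| + |D| := abs_sub _ _
      _ ≤ |(N:ℝ)| * |θ1| + (b:ℝ)*|θ2| + (b:ℝ)*|θ1|/2 := by
          rw [hbsθ2, abs_mul] at h2; linarith [hD, h2]
  have hθ2q2 : |θ2| * (Q2:ℝ) ≤ 1 := by
    calc |θ2| * (Q2:ℝ) ≤ |θ2| * q3 := mul_le_mul_of_nonneg_left f5 (abs_nonneg θ2)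
      _ ≤ 1 := f8
  have hNlb : |c| * (Q2:ℝ) - (3/2)*(b:ℝ) ≤ |(N:ℝ)| :=
    arith1 _ _ _ _ _ _ habsN (abs_nonneg θ1) (abs_nonneg θ2) hq2pos hbR htri2 f7 hθ2q2
  have hB12' : |θ2| * ((Q1:ℝ) + (Q2:ℝ)) ≤ 1 := by
    calc |θ2| * ((Q1:ℝ) + (Q2:ℝ)) ≤ |θ2| * q3 :=
          mul_le_mul_of_nonneg_left f6 (abs_nonneg θ2)
      _ ≤ 1 := f8
  have hA12 : |θ1| * ((Q1:ℝ) + (Q2:ℝ)) ≤ 2 := by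
    calc |θ1| * ((Q1:ℝ) + (Q2:ℝ)) ≤ |θ1| * (2*(Q2:ℝ)) :=
          mul_le_mul_of_nonneg_left (by linarith) (abs_nonneg θ1)
      _ = 2*(|θ1| * (Q2:ℝ)) := by ring
      _ ≤ 2 := by linarith
  have hNub : |(N:ℝ)| ≤ 2*|c| *(Q2:ℝ) + 2*(b:ℝ) :=
    arith2 _ _ _ _ _ _ _ habsN (abs_nonneg θ1) (abs_nonneg θ2) f1 f4 hbR hcpos.le
      f11 htri hB12' hA12
  -- the matrix
  obtain ⟨w, hwdef⟩ : ∃ v : ℤ, v = a*r - vb := ⟨_, rfl⟩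
  have hw : b*w = a*N - 1 := by rw [hwdef, hNdef]; linear_combination -hvv
  have hwR : (b:ℝ)*(w:ℝ) = (a:ℝ)*(N:ℝ) - 1 := by exact_mod_cast hw
  have hwabs : |(w:ℝ)| ≤ |(N:ℝ)| + 1 := by
    have h1 : (b:ℝ)*|(w:ℝ)| = |(a:ℝ)*(N:ℝ) - 1| := by
      rw [← abs_of_pos hbRpos, ← abs_mul, hwR]
    have h2 : |(a:ℝ)*(N:ℝ) - 1| ≤ (b:ℝ)*|(N:ℝ)| + 1 := by
      calc |(a:ℝ)*(N:ℝ) - 1| ≤ |(a:ℝ)*(N:ℝ)| + |(1:ℝ)| := abs_sub _ _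
        _ = |(a:ℝ)| * |(N:ℝ)| + 1 := by rw [abs_mul, abs_one]
        _ ≤ (b:ℝ)*|(N:ℝ)| + 1 := by
            linarith [mul_le_mul_of_nonneg_right haR habsN]
    exact arith7 _ _ _ hbR (by linarith)
  obtain ⟨γ, hγdef⟩ : ∃ v : Matrix (Fin 2) (Fin 2) ℤ,
      v = !![w*Q1 + a*s*Q2, -(w*P1 + a*s*P2); N*Q1 + b*s*Q2, -(N*P1 + b*s*P2)] := ⟨_, rfl⟩
  have h00 : γ 0 0 = w*Q1 + a*s*Q2 := by rw [hγdef]; rfl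
  have h01 : γ 0 1 = -(w*P1 + a*s*P2) := by rw [hγdef]; rfl
  have h10 : γ 1 0 = N*Q1 + b*s*Q2 := by rw [hγdef]; rfl
  have h11 : γ 1 1 = -(N*P1 + b*s*P2) := by rw [hγdef]; rfl
  refine ⟨γ, ?_, ?_, ?_, ?_⟩
  · -- determinant is one
    rw [hγdef, Matrix.det_fin_two_of]
    linear_combination (s*(w*b - a*N)) * f10Z + (s*((-1:ℤ)^(n₀+1))) * hw
      + (-((-1:ℤ)^(n₀+1))) * hsdef + he
  · -- lower bound for the norm
    have hcq : |y 1| / (2 * |x 1|) = |c|/2 := by rw [hcdef, abs_div]; ring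
    rw [hcq, hq1', hq2']
    have hent : ((γ 1 0 : ℤ):ℝ) = (N:ℝ)*(Q1:ℝ) + ((b:ℝ)*(s:ℝ))*(Q2:ℝ) := by
      rw [h10]; push_cast; ring
    have h1 : |(N:ℝ)*(Q1:ℝ)| ≤ |((γ 1 0 : ℤ):ℝ)| + |((b:ℝ)*(s:ℝ))*(Q2:ℝ)| := by
      rw [hent]
      have := abs_sub ((N:ℝ)*(Q1:ℝ) + ((b:ℝ)*(s:ℝ))*(Q2:ℝ)) (((b:ℝ)*(s:ℝ))*(Q2:ℝ))
      simpa using this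
    have h2 : |((b:ℝ)*(s:ℝ))*(Q2:ℝ)| = (b:ℝ)*(Q2:ℝ) := by
      rw [abs_mul, abs_mul, hsR, abs_of_pos hbRpos, abs_of_pos hq2pos, mul_one]
    have h3 : |(N:ℝ)*(Q1:ℝ)| = |(N:ℝ)| *(Q1:ℝ) := by rw [abs_mul, abs_of_pos hq1pos]
    rw [h2, h3] at h1
    calc |c|/2 * (Q1:ℝ) * (Q2:ℝ) ≤ |((γ 1 0 : ℤ):ℝ)| :=
          arith3 _ _ _ _ _ _ h1 hNlb HM1 HM1' f1 f4 hbR hcpos habsN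
      _ ≤ mnorm γ := le_trans (le_max_left _ _) (le_max_right _ _)
  · -- upper bound for the norm
    have hcq : 3 * |y 1| / |x 1| = 3 * |c| := by rw [hcdef, abs_div]; ring
    rw [hcq, hq1', hq2']
    have hgen : ∀ (z zc m1 m2 : ℝ), |z| ≤ |(N:ℝ)| + 1 → |zc| ≤ (b:ℝ) →
        |m1| ≤ (Q1:ℝ) → |m2| ≤ (Q2:ℝ) → |z*m1 + zc*m2| ≤ 3 * |c| * (Q1:ℝ) * (Q2:ℝ) := by
      intro z zc m1 m2 hz hzc hm1 hm2
      have h1 : |z*m1 + zc*m2| ≤ |z| * |m1| + |zc| * |m2| := by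
        calc |z*m1 + zc*m2| ≤ |z*m1| + |zc*m2| := abs_add_le _ _
          _ = |z| * |m1| + |zc| * |m2| := by rw [abs_mul, abs_mul]
      have h2 : |z| * |m1| ≤ (|(N:ℝ)| + 1)*(Q1:ℝ) :=
        mul_le_mul hz hm1 (abs_nonneg m1) (by linarith [habsN])
      have h3 : |zc| * |m2| ≤ (b:ℝ)*(Q2:ℝ) :=
        mul_le_mul hzc hm2 (abs_nonneg m2) hbRpos.le
      exact arith4 _ _ _ _ _ _ (by linarith) hNub HM1 HM1' f1 f4 hbR hcpos habsN
    have habsq1 : |(Q1:ℝ)| ≤ (Q1:ℝ) := le_of_eq (abs_of_pos hq1pos)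
    have habsq2 : |(Q2:ℝ)| ≤ (Q2:ℝ) := le_of_eq (abs_of_pos hq2pos)
    have hbs : |(b:ℝ)*(s:ℝ)| ≤ (b:ℝ) := by
      rw [abs_mul, hsR, mul_one]; exact le_of_eq (abs_of_pos hbRpos)
    have has : |(a:ℝ)*(s:ℝ)| ≤ (b:ℝ) := by rw [abs_mul, hsR, mul_one]; exact haR
    have hNw : |(N:ℝ)| ≤ |(N:ℝ)| + 1 := by linarith
    have e00 : ((γ 0 0 : ℤ):ℝ) = (w:ℝ)*(Q1:ℝ) + ((a:ℝ)*(s:ℝ))*(Q2:ℝ) := by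
      rw [h00]; push_cast; ring
    have e01 : ((γ 0 1 : ℤ):ℝ) = -((w:ℝ)*(P1:ℝ) + ((a:ℝ)*(s:ℝ))*(P2:ℝ)) := by
      rw [h01]; push_cast; ring
    have e10 : ((γ 1 0 : ℤ):ℝ) = (N:ℝ)*(Q1:ℝ) + ((b:ℝ)*(s:ℝ))*(Q2:ℝ) := by
      rw [h10]; push_cast; ring
    have e11 : ((γ 1 1 : ℤ):ℝ) = -((N:ℝ)*(P1:ℝ) + ((b:ℝ)*(s:ℝ))*(P2:ℝ)) := by
      rw [h11]; push_cast; ring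
    have b00 : |((γ 0 0 : ℤ):ℝ)| ≤ 3 * |c| * (Q1:ℝ) * (Q2:ℝ) := by
      rw [e00]; exact hgen _ _ _ _ hwabs has habsq1 habsq2
    have b01 : |((γ 0 1 : ℤ):ℝ)| ≤ 3 * |c| * (Q1:ℝ) * (Q2:ℝ) := by
      rw [e01, abs_neg]; exact hgen _ _ _ _ hwabs has f12 f13
    have b10 : |((γ 1 0 : ℤ):ℝ)| ≤ 3 * |c| * (Q1:ℝ) * (Q2:ℝ) := by
      rw [e10]; exact hgen _ _ _ _ hNw hbs habsq1 habsq2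
    have b11 : |((γ 1 1 : ℤ):ℝ)| ≤ 3 * |c| * (Q1:ℝ) * (Q2:ℝ) := by
      rw [e11, abs_neg]; exact hgen _ _ _ _ hNw hbs f12 f13
    exact max_le (max_le b00 b01) (max_le b10 b11)
  · -- approximation quality
    have hact : ∀ i : Fin 2, act γ x i = ((γ i 0 : ℤ):ℝ) * x 0 + ((γ i 1 : ℤ):ℝ) * x 1 := by
      intro i
      simp [act, Matrix.mulVec, dotProduct, Fin.sum_univ_two, Matrix.map_apply]
    have hy0 : y 0 * (b:ℝ) = c * x 1 * (a:ℝ) := by rw [← hy1]; exact hslope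
    have hcomp1 : (act γ x - y) 1 = x 1 * D := by
      rw [Pi.sub_apply, hact 1, h10, h11, hx0, hy1, hDdef]
      push_cast
      linear_combination (-(x 1)*((N:ℤ):ℝ)) * hθ1def + (-(x 1)*(b:ℝ)*(s:ℝ)) * hθ2def
    have hcomp0b : (b:ℝ) * ((act γ x - y) 0) = x 1 * ((a:ℝ)*D - θ1) := by
      rw [Pi.sub_apply, hact 0, h00, h01, hx0, hDdef]
      push_cast
      linear_combination (-(x 1)*(b:ℝ)*((w:ℤ):ℝ)) * hθ1def
        + (-(x 1)*(a:ℝ)*(b:ℝ)*(s:ℝ)) * hθ2def + (x 1 * θ1) * hwR - hy0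
    rw [hq2']
    have hbound1 : |(act γ x - y) 1| ≤ 2*(b:ℝ)*|x 1|/(Q2:ℝ) := by
      rw [le_div_iff₀ hq2pos, hcomp1, abs_mul]
      have := arith5 |x 1| |D| |θ1| (Q2:ℝ) (b:ℝ) (abs_nonneg (x 1)) (abs_nonneg D)
        (abs_nonneg θ1) hq2pos hbR hD f7
      linarith
    have hbound0 : |(act γ x - y) 0| ≤ 2*(b:ℝ)*|x 1|/(Q2:ℝ) := by
      rw [le_div_iff₀ hq2pos]
      have h1 : (b:ℝ) * |(act γ x - y) 0| = |x 1| * |(a:ℝ)*D - θ1| := by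
        rw [← abs_of_pos hbRpos, ← abs_mul, hcomp0b, abs_mul]
      have h2 : |(a:ℝ)*D - θ1| ≤ (b:ℝ)*((b:ℝ)*|θ1|/2) + |θ1| := by
        calc |(a:ℝ)*D - θ1| ≤ |(a:ℝ)*D| + |θ1| := abs_sub _ _
          _ = |(a:ℝ)| * |D| + |θ1| := by rw [abs_mul]
          _ ≤ (b:ℝ)*((b:ℝ)*|θ1|/2) + |θ1| := by
              linarith [mul_le_mul haR hD (abs_nonneg D) hbRpos.le]
      have h8 := arith6 |x 1| |(act γ x - y) 0| |(a:ℝ)*D - θ1| |θ1| (Q2:ℝ) (b:ℝ)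
        (abs_nonneg (x 1)) (abs_nonneg _) (abs_nonneg _) (abs_nonneg θ1) hq2pos hbR
        h1 h2 f7
      linarith
    exact max_le hbound0 hbound1
end
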